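/- arXiv:1512.01154 — 6 statements merged into one kernel-verified Lean document; each statement's English description precedes it below -/
import Mathlib

section
/- Let V be a real Hilbert space and W a real normed vector space with a linear injection ι : W → V satisfying ‖ιw‖_V ≤ ‖w‖_W for all w ∈ W. Let B : W × W → ℝ be bilinear with |B(u,v)| ≤ C_B‖u‖_W‖v‖_W and B(u,u) ≥ σ‖ιu‖_V² for all u,v ∈ W, where σ > 0. Let V_h ⊆ W be a finite-dimensional subspace satisfying the discrete inf-sup condition: for every φ_h ∈ V_h, sup over nonzero ψ_h ∈ V_h of B(φ_h,ψ_h)/‖ψ_h‖_W is at least β‖φ_h‖_W, with β > 0; let Π_h : W → V_h be the elliptic projection determined by B(Π_h u, ψ_h) = B(u, ψ_h) for all ψ_h ∈ V_h. Let T > 0, q : [0,T] → V continuous, φ ∈ C¹([0,T]; W) satisfying ⟨ι(φ'(t)), ιψ_h⟩_V + B(φ(t), ψ_h) = ⟨q(t), ιψ_h⟩_V for all ψ_h ∈ V_h and t ∈ [0,T], and let φ_h ∈ C¹([0,T]; V_h) satisfy φ_h(0) = Π_h(φ(0)) and ⟨ι(φ_h'(t)), ιψ_h⟩_V + B(φ_h(t),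 ψ_h) = ⟨q(t), ιψ_h⟩_V for all ψ_h ∈ V_h and t ∈ [0,T]. Then there is a constant C depending only on C_B, β and σ such that for all t ∈ [0,T]: ‖ι(φ(t)) − ι(φ_h(t))‖_V ≤ C ( inf_{ψ_h ∈ V_h} ‖φ(0) − ψ_h‖_W + inf_{ψ_h ∈ V_h} ‖φ(t) − ψ_h‖_W + ∫₀ᵗ inf_{ψ_h ∈ V_h} ‖φ'(s) − ψ_h‖_W ds ). -/
open scoped RealInnerProductSpace

/-- Abstract error estimate for the Galerkin semi-discretization of the evolution
problem ∂ₜφ + (S+H)φ = q arising from radiative transfer: there is a constant C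
depending only on the continuity constant C_B, the inf-sup constant β and the
coercivity constant σ such that the semi-discrete error is bounded by best
approximation errors of the initial value, the solution and its time derivative. -/
theorem stmt_0 (C_B β σ : ℝ) (hσ : 0 < σ) (hβ : 0 < β) :
    ∃ C : ℝ, 0 < C ∧
      ∀ (V : Type) [NormedAddCommGroup V] [InnerProductSpace ℝ V] [CompleteSpace V]
        (W : Type) [NormedAddCommGroup W] [NormedSpace ℝ W]
        (ι : W →ₗ[ℝ] V),
        Function.Injective ι →
        (∀ w : W, ‖ι w‖ ≤ ‖w‖) →
        ∀ B : W →ₗ[ℝ] W →ₗ[ℝ] ℝ,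
        (∀ u v : W, |B u v| ≤ C_B * ‖u‖ * ‖v‖) →
        (∀ u : W, σ * ‖ι u‖ ^ 2 ≤ B u u) →
        ∀ Vh : Submodule ℝ W, FiniteDimensional ℝ Vh →
        (∀ φh ∈ Vh, β * ‖φh‖ ≤ ⨆ ψh : {x : W // x ∈ Vh ∧ x ≠ 0}, B φh ψh / ‖(ψh : W)‖) →
        ∀ Proj : W →ₗ[ℝ] W,
        (∀ u : W, Proj u ∈ Vh) →
        (∀ u : W, ∀ ψh ∈ Vh, B (Proj u) ψh = B u ψh) →
        ∀ T : ℝ, 0 < T →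
        ∀ q : ℝ → V, ContinuousOn q (Set.Icc 0 T) →
        ∀ φ φ' : ℝ → W,
        (∀ t ∈ Set.Icc 0 T, HasDerivWithinAt φ (φ' t) (Set.Icc 0 T) t) →
        ContinuousOn φ' (Set.Icc 0 T) →
        (∀ t ∈ Set.Icc 0 T, ∀ ψh ∈ Vh, ⟪ι (φ' t), ι ψh⟫ + B (φ t) ψh = ⟪q t, ι ψh⟫) →
        ∀ φh φh' : ℝ → W,
        (∀ t : ℝ, φh t ∈ Vh) →
        (∀ t ∈ Set.Icc 0 T, HasDerivWithinAt φh (φh' t) (Set.Icc 0 T) t) →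
        ContinuousOn φh' (Set.Icc 0 T) →
        φh 0 = Proj (φ 0) →
        (∀ t ∈ Set.Icc 0 T, ∀ ψh ∈ Vh, ⟪ι (φh' t), ι ψh⟫ + B (φh t) ψh = ⟪q t, ι ψh⟫) →
        ∀ t ∈ Set.Icc 0 T,
          ‖ι (φ t) - ι (φh t)‖ ≤
            C * ((⨅ ψh : Vh, ‖φ 0 - (ψh : W)‖) + (⨅ ψh : Vh, ‖φ t - (ψh : W)‖) +
              ∫ s in (0:ℝ)..t, ⨅ ψh : Vh, ‖φ' s - (ψh : W)‖) := by
  set Cb : ℝ := max C_B 0 with hCbdef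
  have hCb0 : 0 ≤ Cb := le_max_right _ _
  set K : ℝ := 1 + Cb / β with hKdef
  have hK1 : 1 ≤ K := le_add_of_nonneg_right (div_nonneg hCb0 hβ.le)
  have hK0 : 0 < K := lt_of_lt_of_le one_pos hK1
  refine ⟨2 * K, by linarith, ?_⟩
  intro V _ _ _ W _ _ ι hι hιnorm B hBcont hBcoer Vh _ hinfsup Proj hProjmem hProjeq
    T hT q hq φ φ' hφdiff hφ'cont hφeq φh φh' hφhmem hφhdiff hφh'cont hφh0 hφheq t ht
  obtain ⟨ht0, htT⟩ := ht
  -- bilinear form continuity with nonneg constant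
  have hBcont' : ∀ u v : W, B u v ≤ Cb * ‖u‖ * ‖v‖ := by
    intro u v
    have := (le_abs_self _).trans (hBcont u v)
    have h2 : C_B * ‖u‖ * ‖v‖ ≤ Cb * ‖u‖ * ‖v‖ :=
      mul_le_mul_of_nonneg_right
        (mul_le_mul_of_nonneg_right (le_max_left C_B 0) (norm_nonneg u)) (norm_nonneg v)
    linarith
  -- stability from inf-sup
  have hstab : ∀ v : W, ∀ w ∈ Vh, (∀ χ ∈ Vh, B w χ = B v χ) → β * ‖w‖ ≤ Cb * ‖v‖ := by
    intro v w hw heq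
    refine (hinfsup w hw).trans (Real.iSup_le ?_ (by positivity))
    rintro ⟨ψh, hψh, hψ0⟩
    have hψpos : 0 < ‖ψh‖ := norm_pos_iff.mpr hψ0
    rw [heq ψh hψh, div_le_iff₀ hψpos]
    calc B v ψh ≤ Cb * ‖v‖ * ‖ψh‖ := hBcont' v ψh
      _ = Cb * ‖v‖ * ‖ψh‖ := rfl
  have hProjnorm : ∀ u : W, ‖Proj u‖ ≤ (Cb / β) * ‖u‖ := by
    intro u
    have := hstab u (Proj u) (hProjmem u) (hProjeq u)
    rw [div_mul_eq_mul_div, le_div_iff₀ hβ]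
    linarith
  -- Céa lemma
  have hCea : ∀ u : W, ∀ ψh ∈ Vh, ‖u - Proj u‖ ≤ K * ‖u - ψh‖ := by
    intro u ψh hψh
    have hmem : ψh - Proj u ∈ Vh := Vh.sub_mem hψh (hProjmem u)
    have heq : ∀ χ ∈ Vh, B (ψh - Proj u) χ = B (ψh - u) χ := by
      intro χ hχ
      simp only [map_sub, LinearMap.sub_apply, hProjeq u χ hχ]
    have h1 : β * ‖ψh - Proj u‖ ≤ Cb * ‖ψh - u‖ := hstab (ψh - u) _ hmem heq
    have h2 : ‖u - Proj u‖ ≤ ‖u - ψh‖ + ‖ψh - Proj u‖ := by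
      have : u - Proj u = (u - ψh) + (ψh - Proj u) := by abel
      rw [this]; exact norm_add_le _ _
    have h3 : ‖ψh - u‖ = ‖u - ψh‖ := norm_sub_rev _ _
    have h4 : ‖ψh - Proj u‖ ≤ (Cb / β) * ‖u - ψh‖ := by
      rw [div_mul_eq_mul_div, le_div_iff₀ hβ]; rw [h3] at h1; linarith
    calc ‖u - Proj u‖ ≤ ‖u - ψh‖ + (Cb / β) * ‖u - ψh‖ := by linarith
      _ = K * ‖u - ψh‖ := by rw [hKdef]; ring
  have hVhne : Nonempty Vh := ⟨0⟩
  have hinfnn : ∀ u : W, 0 ≤ ⨅ ψh : Vh, ‖u - (ψh : W)‖ :=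
    fun u => Real.iInf_nonneg (fun ψh => norm_nonneg _)
  have hCeaInf : ∀ u : W, ‖u - Proj u‖ ≤ K * ⨅ ψh : Vh, ‖u - (ψh : W)‖ := by
    intro u
    rw [mul_comm, ← div_le_iff₀ hK0]
    refine le_ciInf (fun ψh => ?_)
    rw [div_le_iff₀ hK0, mul_comm]
    exact hCea u ψh ψh.2
  -- continuous linear maps
  set ιL : W →L[ℝ] V := LinearMap.mkContinuous ι 1 (by simpa using hιnorm) with hιLdef
  have hιLapp : ∀ w : W, ιL w = ι w := fun w => rfl
  set PL : W →L[ℝ] W := LinearMap.mkContinuous Proj (Cb / β) hProjnorm with hPLdef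
  have hPLapp : ∀ w : W, PL w = Proj w := fun w => rfl
  -- error splitting
  set θ : ℝ → W := fun s => Proj (φ s) - φh s with hθdef
  set θ' : ℝ → W := fun s => Proj (φ' s) - φh' s with hθ'def
  set f : ℝ → V := fun s => ι (θ s) with hfdef
  set f' : ℝ → V := fun s => ι (θ' s) with hf'def
  have hθmem : ∀ s : ℝ, θ s ∈ Vh := fun s => Vh.sub_mem (hProjmem _) (hφhmem s)
  have hθderiv : ∀ s ∈ Set.Icc 0 T, HasDerivWithinAt θ (θ' s) (Set.Icc 0 T) s := by
    intro s hs
    have h1 : HasDerivWithinAt (fun r => Proj (φ r)) (Proj (φ' s)) (Set.Icc 0 T) s := by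
      have := (PL.hasFDerivAt (x := φ s)).comp_hasDerivWithinAt s (hφdiff s hs)
      simpa [Function.comp_def, hPLapp] using this
    exact h1.sub (hφhdiff s hs)
  have hfderiv : ∀ s ∈ Set.Icc 0 T, HasDerivWithinAt f (f' s) (Set.Icc 0 T) s := by
    intro s hs
    have := (ιL.hasFDerivAt (x := θ s)).comp_hasDerivWithinAt s (hθderiv s hs)
    simpa [Function.comp_def, hιLapp] using this
  have hfcont : ContinuousOn f (Set.Icc 0 T) :=
    fun s hs => ((hfderiv s hs).continuousWithinAt)
  have hf'cont : ContinuousOn f' (Set.Icc 0 T) := by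
    have : f' = fun s => ιL (PL (φ' s) - φh' s) := by
      funext s; simp [hf'def, hθ'def, hιLapp, hPLapp, map_sub]
    rw [this]
    exact ιL.continuous.comp_continuousOn
      (((PL.continuous.comp_continuousOn hφ'cont)).sub hφh'cont)
  -- energy function
  set E : ℝ → ℝ := fun s => ⟪f s, f s⟫ with hEdef
  set E' : ℝ → ℝ := fun s => 2 * ⟪f' s, f s⟫ with hE'def
  have hEderiv : ∀ s ∈ Set.Icc 0 T, HasDerivWithinAt E (E' s) (Set.Icc 0 T) s := by
    intro s hs
    have h := (hfderiv s hs).inner ℝ (hfderiv s hs)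
    have heq2 : ⟪f s, f' s⟫ + ⟪f' s, f s⟫ = E' s := by
      show ⟪f s, f' s⟫ + ⟪f' s, f s⟫ = 2 * ⟪f' s, f s⟫
      linarith [real_inner_comm (f s) (f' s)]
    rw [← heq2]; exact h
  have hE'cont : ContinuousOn E' (Set.Icc 0 T) := by
    have : ContinuousOn (fun s => ⟪f' s, f s⟫) (Set.Icc 0 T) := hf'cont.inner hfcont
    show ContinuousOn (fun s => 2 * ⟪f' s, f s⟫) (Set.Icc 0 T)
    exact continuousOn_const.mul this
  -- discrete error equation
  have heq : ∀ s ∈ Set.Icc 0 T,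
      ⟪ι (θ' s), ι (θ s)⟫ + B (θ s) (θ s) = ⟪ι (Proj (φ' s) - φ' s), ι (θ s)⟫ := by
    intro s hs
    have h1 := hφeq s hs (θ s) (hθmem s)
    have h2 := hφheq s hs (θ s) (hθmem s)
    have h3 := hProjeq (φ s) (θ s) (hθmem s)
    simp only [hθ'def, hθdef, map_sub, LinearMap.sub_apply, inner_sub_left] at *
    linarith
  have hE'le : ∀ s ∈ Set.Icc 0 T, E' s ≤ 2 * ‖ι (Proj (φ' s) - φ' s)‖ * ‖f s‖ := by
    intro s hs
    have h1 := heq s hs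
    have h2 : (0:ℝ) ≤ B (θ s) (θ s) :=
      le_trans (by positivity) (hBcoer (θ s))
    have h3 : ⟪ι (Proj (φ' s) - φ' s), ι (θ s)⟫ ≤ ‖ι (Proj (φ' s) - φ' s)‖ * ‖ι (θ s)‖ :=
      real_inner_le_norm _ _
    have : ⟪f' s, f s⟫ ≤ ‖ι (Proj (φ' s) - φ' s)‖ * ‖f s‖ := by
      simp only [hf'def, hfdef] at *
      linarith
    show 2 * ⟪f' s, f s⟫ ≤ 2 * ‖ι (Proj (φ' s) - φ' s)‖ * ‖f s‖
    nlinarith [norm_nonneg (f s), norm_nonneg (ι (Proj (φ' s) - φ' s))]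
  -- best approximation function
  set g : ℝ → ℝ := fun s => ⨅ ψh : Vh, ‖φ' s - (ψh : W)‖ with hgdef
  have hg0 : ∀ s, 0 ≤ g s := fun s => hinfnn _
  have hgeq : g = fun s => Metric.infDist (φ' s) (Vh : Set W) := by
    funext s
    rw [hgdef]
    rw [Metric.infDist_eq_iInf]
    simp only [dist_eq_norm]
    rfl
  have hgcont : ContinuousOn g (Set.Icc 0 T) := by
    rw [hgeq]
    exact (Metric.continuous_infDist_pt (Vh : Set W)).comp_continuousOn hφ'cont
  have hρle : ∀ s, ‖ι (Proj (φ' s) - φ' s)‖ ≤ K * g s := by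
    intro s
    calc ‖ι (Proj (φ' s) - φ' s)‖ ≤ ‖Proj (φ' s) - φ' s‖ := hιnorm _
      _ = ‖φ' s - Proj (φ' s)‖ := norm_sub_rev _ _
      _ ≤ K * g s := hCeaInf (φ' s)
  -- max of ‖f‖ on [0, t]
  have hsub : Set.Icc (0:ℝ) t ⊆ Set.Icc 0 T := Set.Icc_subset_Icc le_rfl htT
  obtain ⟨ts, hts, htsmax⟩ := (isCompact_Icc (a := (0:ℝ)) (b := t)).exists_isMaxOn
    (Set.nonempty_Icc.mpr ht0) ((hfcont.mono hsub).norm)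
  set M : ℝ := ‖f ts‖ with hMdef
  have hM0 : 0 ≤ M := norm_nonneg _
  have hMle : ∀ s ∈ Set.Icc 0 t, ‖f s‖ ≤ M := fun s hs => htsmax hs
  obtain ⟨hts0, htst⟩ := hts
  -- integrability
  have hgint : IntervalIntegrable g MeasureTheory.volume 0 t :=
    (hgcont.mono (by rw [Set.uIcc_of_le ht0]; exact hsub)).intervalIntegrable
  have hI0 : 0 ≤ ∫ s in (0:ℝ)..t, g s :=
    intervalIntegral.integral_nonneg ht0 (fun s _ => hg0 s)
  -- FTC: E ts - E 0 = ∫ E'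
  have hsub2 : Set.Icc (0:ℝ) ts ⊆ Set.Icc 0 T :=
    Set.Icc_subset_Icc le_rfl (htst.trans htT)
  have hE'int : IntervalIntegrable E' MeasureTheory.volume 0 ts :=
    (hE'cont.mono (by rw [Set.uIcc_of_le hts0]; exact hsub2)).intervalIntegrable
  have hftc : ∫ s in (0:ℝ)..ts, E' s = E ts - E 0 := by
    refine intervalIntegral.integral_eq_sub_of_hasDeriv_right_of_le hts0
      ((fun s hs => ((hEderiv s (hsub2 hs)).continuousWithinAt).mono hsub2)) ?_ hE'int
    intro x hx
    have hxI : x ∈ Set.Icc 0 T := hsub2 ⟨hx.1.le, hx.2.le⟩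
    refine (hEderiv x hxI).mono_of_mem_nhdsWithin ?_
    exact Icc_mem_nhdsGT_of_mem ⟨hxI.1, lt_of_lt_of_le hx.2 (htst.trans htT)⟩
  have hE0 : E 0 = 0 := by
    have : θ 0 = 0 := by rw [hθdef]; simp [hφh0]
    simp [hEdef, hfdef, this]
  -- bound the integral
  have hgint2 : IntervalIntegrable (fun s => 2 * M * (K * g s)) MeasureTheory.volume 0 ts := by
    refine IntervalIntegrable.const_mul ?_ _
    exact (IntervalIntegrable.const_mul (hgint.mono_set
      (by rw [Set.uIcc_of_le hts0, Set.uIcc_of_le ht0]; exact Set.Icc_subset_Icc le_rfl htst)) _)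
  have hEbound : E ts ≤ ∫ s in (0:ℝ)..ts, 2 * M * (K * g s) := by
    have h0 : E ts = ∫ s in (0:ℝ)..ts, E' s := by rw [hftc, hE0, sub_zero]
    rw [h0]
    refine intervalIntegral.integral_mono_on hts0 hE'int hgint2 ?_
    intro s hs
    have hsIT : s ∈ Set.Icc 0 T := hsub2 hs
    have h1 := hE'le s hsIT
    have h2 := hρle s
    have h3 : ‖f s‖ ≤ M := hMle s ⟨hs.1, hs.2.trans htst⟩
    calc E' s ≤ 2 * ‖ι (Proj (φ' s) - φ' s)‖ * ‖f s‖ := h1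
      _ ≤ 2 * ((K * g s) * M) := by
          have h5 := mul_le_mul h2 h3 (norm_nonneg (f s)) (mul_nonneg hK0.le (hg0 s))
          linarith
      _ = 2 * M * (K * g s) := by ring
  have hEbound2 : E ts ≤ 2 * M * K * ∫ s in (0:ℝ)..t, g s := by
    have h1 : ∫ s in (0:ℝ)..ts, 2 * M * (K * g s) = 2 * M * K * ∫ s in (0:ℝ)..ts, g s := by
      rw [← intervalIntegral.integral_const_mul]
      congr 1; funext s; ring
    have h2 : ∫ s in (0:ℝ)..ts, g s ≤ ∫ s in (0:ℝ)..t, g s := by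
      refine intervalIntegral.integral_mono_interval le_rfl hts0 htst ?_ hgint
      filter_upwards with s using hg0 s
    calc E ts ≤ ∫ s in (0:ℝ)..ts, 2 * M * (K * g s) := hEbound
      _ = 2 * M * K * ∫ s in (0:ℝ)..ts, g s := h1
      _ ≤ 2 * M * K * ∫ s in (0:ℝ)..t, g s := by
          exact mul_le_mul_of_nonneg_left h2
            (mul_nonneg (mul_nonneg (by norm_num) hM0) hK0.le)
  have hEts : E ts = M ^ 2 := by
    rw [hEdef, hMdef]; exact real_inner_self_eq_norm_sq _
  -- conclude ‖f t‖ ≤ 2 K I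
  have hft : ‖f t‖ ≤ 2 * K * ∫ s in (0:ℝ)..t, g s := by
    have h1 : ‖f t‖ ≤ M := hMle t ⟨ht0, le_rfl⟩
    rcases eq_or_lt_of_le hM0 with hM | hM
    · calc ‖f t‖ ≤ M := h1
        _ = 0 := hM.symm
        _ ≤ 2 * K * ∫ s in (0:ℝ)..t, g s :=
            mul_nonneg (by linarith) hI0
    · have hsq : M ^ 2 ≤ 2 * M * K * ∫ s in (0:ℝ)..t, g s := by
        rw [hEts] at hEbound2; exact hEbound2
      have h6 : M * M ≤ M * (2 * K * ∫ s in (0:ℝ)..t, g s) := by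
        rw [pow_two] at hsq; linarith
      have h7 : M ≤ 2 * K * ∫ s in (0:ℝ)..t, g s := le_of_mul_le_mul_left h6 hM
      linarith
  -- final assembly
  have hsplit : ι (φ t) - ι (φh t) = ι (φ t - Proj (φ t)) + f t := by
    rw [hfdef, hθdef]
    simp only [map_sub]
    abel
  have h1 : ‖ι (φ t - Proj (φ t))‖ ≤ K * ⨅ ψh : Vh, ‖φ t - (ψh : W)‖ :=
    (hιnorm _).trans (hCeaInf (φ t))
  have h2 : ‖ι (φ t) - ι (φh t)‖ ≤ ‖ι (φ t - Proj (φ t))‖ + ‖f t‖ := by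
    rw [hsplit]; exact norm_add_le _ _
  have hinf0 := hinfnn (φ 0)
  have hinft := hinfnn (φ t)
  have hI := hI0
  have hp1 : 0 ≤ K * ⨅ ψh : Vh, ‖φ 0 - (ψh : W)‖ := mul_nonneg hK0.le hinf0
  have hp2 : 0 ≤ K * ⨅ ψh : Vh, ‖φ t - (ψh : W)‖ := mul_nonneg hK0.le hinft
  have hgoal : ‖ι (φ t) - ι (φh t)‖ ≤
      2 * K * ((⨅ ψh : Vh, ‖φ 0 - (ψh : W)‖) + (⨅ ψh : Vh, ‖φ t - (ψh : W)‖) +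
        ∫ s in (0:ℝ)..t, g s) := by
    have hexp : 2 * K * ((⨅ ψh : Vh, ‖φ 0 - (ψh : W)‖) + (⨅ ψh : Vh, ‖φ t - (ψh : W)‖) +
        ∫ s in (0:ℝ)..t, g s) =
        2 * (K * ⨅ ψh : Vh, ‖φ 0 - (ψh : W)‖) + 2 * (K * ⨅ ψh : Vh, ‖φ t - (ψh : W)‖) +
        2 * K * ∫ s in (0:ℝ)..t, g s := by ring
    rw [hexp]
    linarith
  exact hgoal
end

section
/- Let V be a real Hilbert space and W a real normed vector space with a linear injection ι : W → V satisfying ‖ιw‖_V ≤ ‖w‖_W. Let B : W × W → ℝ be bilinear with |B(u,v)| ≤ C_B‖u‖_W‖v‖_W and B(u,u) ≥ σ‖ιu‖_V² for all u,v ∈ W, σ > 0. Let V_h ⊆ W be a finite-dimensional subspace satisfying the discrete inf-sup condition with constant β > 0 (for every φ_h ∈ V_h, sup over nonzero ψ_h ∈ V_h of B(φ_h,ψ_h)/‖ψ_h‖_W ≥ β‖φ_h‖_W), and Π_h : W → V_h the elliptic projection (B(Π_h u, ψ_h) = B(u,ψ_h) for all ψ_h ∈ V_h). Let T > 0, q :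 [0,T] → V continuous, and φ ∈ C²([0,T]; W) satisfy ⟨ι(φ'(t)), ιψ_h⟩_V + B(φ(t), ψ_h) = ⟨q(t), ιψ_h⟩_V for all ψ_h ∈ V_h and t ∈ [0,T]. Fix a time step τ with 0 < τ ≤ 1/(2σ), set tⁿ = nτ, and let φ_h⁰ = Π_h(φ(0)) and, for n ≥ 1 with tⁿ ≤ T, let φ_hⁿ ∈ V_h satisfy ⟨(φ_hⁿ − φ_hⁿ⁻¹)/τ, ιψ_h⟩_V + B(φ_hⁿ, ψ_h) = ⟨q(tⁿ), ιψ_h⟩_V for all ψ_h ∈ V_h. Then there is a constant C depending only on C_B, β and σ such that for all such n: ‖ι(φ(tⁿ)) − ι(φ_hⁿ)‖_V² ≤ C ( inf_{ψ_h ∈ V_h} ‖φ(tⁿ) − ψ_h‖_W² + sup_{0 ≤ t ≤ tⁿ} inf_{ψ_h ∈ V_h} ‖φ'(t) − ψ_h‖_W² + τ² sup_{0 ≤ t ≤ tⁿ} ‖ι(φ''(t))‖_V² ). -/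
open scoped RealInnerProductSpace

set_option maxHeartbeats 4000000 in
/-- Abstract error estimate for the fully discrete scheme (Galerkin in space/angle,
implicit Euler in time) for the evolution problem ∂ₜφ + (S+H)φ = q of radiative
transfer: there is a constant C depending only on C_B, β and σ bounding the fully
discrete error at tⁿ = nτ by the best-approximation error of φ(tⁿ), of φ' (uniformly
in time), and the consistency error τ² sup ‖ι(φ'')‖². -/
theorem stmt_1 (C_B β σ : ℝ) (hσ : 0 < σ) (hβ : 0 < β) :
    ∃ C : ℝ, 0 < C ∧
      ∀ (V : Type) [NormedAddCommGroup V] [InnerProductSpace ℝ V] [CompleteSpace V]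
        (W : Type) [NormedAddCommGroup W] [NormedSpace ℝ W]
        (ι : W →ₗ[ℝ] V),
        Function.Injective ι →
        (∀ w : W, ‖ι w‖ ≤ ‖w‖) →
        ∀ B : W →ₗ[ℝ] W →ₗ[ℝ] ℝ,
        (∀ u v : W, |B u v| ≤ C_B * ‖u‖ * ‖v‖) →
        (∀ u : W, σ * ‖ι u‖ ^ 2 ≤ B u u) →
        ∀ Vh : Submodule ℝ W, FiniteDimensional ℝ Vh →
        (∀ φh ∈ Vh, β * ‖φh‖ ≤ ⨆ ψh : {x : W // x ∈ Vh ∧ x ≠ 0}, B φh ψh / ‖(ψh : W)‖) →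
        ∀ Proj : W →ₗ[ℝ] W,
        (∀ u : W, Proj u ∈ Vh) →
        (∀ u : W, ∀ ψh ∈ Vh, B (Proj u) ψh = B u ψh) →
        ∀ T : ℝ, 0 < T →
        ∀ q : ℝ → V, ContinuousOn q (Set.Icc 0 T) →
        ∀ φ φ' φ'' : ℝ → W,
        (∀ t ∈ Set.Icc 0 T, HasDerivWithinAt φ (φ' t) (Set.Icc 0 T) t) →
        (∀ t ∈ Set.Icc 0 T, HasDerivWithinAt φ' (φ'' t) (Set.Icc 0 T) t) →
        ContinuousOn φ'' (Set.Icc 0 T) →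
        (∀ t ∈ Set.Icc 0 T, ∀ ψh ∈ Vh, ⟪ι (φ' t), ι ψh⟫ + B (φ t) ψh = ⟪q t, ι ψh⟫) →
        ∀ τ : ℝ, 0 < τ → τ ≤ 1 / (2 * σ) →
        ∀ φh : ℕ → W,
        (∀ n : ℕ, φh n ∈ Vh) →
        φh 0 = Proj (φ 0) →
        (∀ n : ℕ, 1 ≤ n → (n : ℝ) * τ ≤ T → ∀ ψh ∈ Vh,
          ⟪ι (τ⁻¹ • (φh n - φh (n - 1))), ι ψh⟫ + B (φh n) ψh = ⟪q ((n : ℝ) * τ), ι ψh⟫) →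
        ∀ n : ℕ, (n : ℝ) * τ ≤ T →
          ‖ι (φ ((n : ℝ) * τ)) - ι (φh n)‖ ^ 2 ≤
            C * ((⨅ ψh : Vh, ‖φ ((n : ℝ) * τ) - (ψh : W)‖ ^ 2) +
              (⨆ t : Set.Icc (0:ℝ) ((n : ℝ) * τ), ⨅ ψh : Vh, ‖φ' t - (ψh : W)‖ ^ 2) +
              τ ^ 2 * ⨆ t : Set.Icc (0:ℝ) ((n : ℝ) * τ), ‖ι (φ'' t)‖ ^ 2) := by
  classical
  set Cb : ℝ := max C_B 0 with hCbdef
  set K : ℝ := 1 + Cb / β with hKdef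
  have hCb0 : 0 ≤ Cb := le_max_right _ _
  have hK1 : 1 ≤ K := by
    have : 0 ≤ Cb / β := div_nonneg hCb0 hβ.le
    simp only [hKdef]; linarith only [this]
  have hK0 : 0 < K := lt_of_lt_of_le one_pos hK1
  clear_value Cb K
  refine ⟨2*K^2 + 4*K^2/σ^2 + 4/σ^2, by positivity, ?_⟩
  intro V _ _ _ W _ _ ι hιinj hιnorm B hBb hBc Vh hVhfd hinfsup Proj hPm hPB T hT q hq
    φ φ' φ'' hφ hφ' hφ''c hweak τ hτ hτσ φh hφhm hφh0 hscheme n hnT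
  -- boundedness of B with nonnegative constant
  have hBb' : ∀ u v : W, |B u v| ≤ Cb * ‖u‖ * ‖v‖ := by
    intro u v
    refine (hBb u v).trans ?_
    have h1 : C_B ≤ Cb := by rw [hCbdef]; exact le_max_left _ _
    nlinarith only [h1, mul_nonneg (norm_nonneg u) (norm_nonneg v)]
  -- stability of the elliptic projection
  have hProj_norm : ∀ u : W, ‖Proj u‖ ≤ Cb / β * ‖u‖ := by
    intro u
    have h := hinfsup (Proj u) (hPm u)
    have hsup : (⨆ ψ : {x : W // x ∈ Vh ∧ x ≠ 0}, B (Proj u) ψ / ‖(ψ : W)‖) ≤ Cb * ‖u‖ := by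
      apply Real.iSup_le
      · rintro ⟨ψ, hψm, hψ0⟩
        have hψn : (0:ℝ) < ‖ψ‖ := norm_pos_iff.mpr hψ0
        simp only
        rw [hPB u ψ hψm, div_le_iff₀ hψn]
        calc B u ψ ≤ |B u ψ| := le_abs_self _
          _ ≤ Cb * ‖u‖ * ‖ψ‖ := hBb' u ψ
      · positivity
    have : β * ‖Proj u‖ ≤ Cb * ‖u‖ := h.trans hsup
    rw [div_mul_eq_mul_div, le_div_iff₀ hβ]
    linarith only [this]
  -- projection fixes Vh
  have hProj_id : ∀ ψ ∈ Vh, Proj ψ = ψ := by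
    intro ψ hψ
    have hx : Proj ψ - ψ ∈ Vh := Vh.sub_mem (hPm ψ) hψ
    have h := hinfsup _ hx
    have hsup : (⨆ χ : {x : W // x ∈ Vh ∧ x ≠ 0}, B (Proj ψ - ψ) χ / ‖(χ : W)‖) ≤ 0 := by
      apply Real.iSup_le _ le_rfl
      rintro ⟨χ, hχm, hχ0⟩
      simp only [map_sub, LinearMap.sub_apply, hPB ψ χ hχm, sub_self, zero_div, le_refl]
    have h0 : β * ‖Proj ψ - ψ‖ ≤ 0 := h.trans hsup
    have : ‖Proj ψ - ψ‖ = 0 := le_antisymm (by nlinarith only [h0, hβ, norm_nonneg (Proj ψ - ψ)]) (norm_nonneg _)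
    exact sub_eq_zero.mp (norm_eq_zero.mp this)
  -- quasi-optimality
  have hquasi : ∀ w : W, ∀ ψ ∈ Vh, ‖w - Proj w‖ ≤ K * ‖w - ψ‖ := by
    intro w ψ hψ
    have h1 : ‖w - Proj w‖ ≤ ‖w - ψ‖ + ‖ψ - Proj w‖ := by
      have : w - Proj w = (w - ψ) + (ψ - Proj w) := by abel
      rw [this]; exact norm_add_le _ _
    have h2 : ψ - Proj w = Proj (ψ - w) := by
      rw [map_sub, hProj_id ψ hψ]
    have h3 : ‖ψ - Proj w‖ ≤ Cb / β * ‖w - ψ‖ := by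
      rw [h2]
      refine (hProj_norm _).trans ?_
      rw [norm_sub_rev]
    have hb : 0 ≤ Cb / β := div_nonneg hCb0 hβ.le
    calc ‖w - Proj w‖ ≤ ‖w - ψ‖ + Cb / β * ‖w - ψ‖ := by linarith only [h1, h3]
      _ = K * ‖w - ψ‖ := by rw [hKdef]; ring
  have hquasi_inf : ∀ w : W, ‖w - Proj w‖^2 ≤ K^2 * ⨅ ψ : Vh, ‖w - (ψ : W)‖^2 := by
    intro w
    have hK2 : (0:ℝ) < K^2 := by positivity
    have h : ‖w - Proj w‖^2 / K^2 ≤ ⨅ ψ : Vh, ‖w - (ψ : W)‖^2 := by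
      apply le_ciInf
      intro ψ
      rw [div_le_iff₀ hK2]
      have := hquasi w ψ ψ.2
      nlinarith only [this, hK0.le, norm_nonneg (w - Proj w), norm_nonneg (w - (ψ:W))]
    rw [div_le_iff₀ hK2] at h
    linarith only [h]
  -- continuity of φ and φ'
  have hφ'c : ContinuousOn φ' (Set.Icc 0 T) := fun t ht => (hφ' t ht).continuousWithinAt
  -- continuous linear versions of ι and Proj
  set ιL : W →L[ℝ] V := LinearMap.mkContinuous ι 1 (fun w => by simpa using hιnorm w) with hιL
  set ProjL : W →L[ℝ] W := LinearMap.mkContinuous Proj (Cb / β) (fun u => hProj_norm u) with hProjL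
  have hιLa : ∀ w : W, ιL w = ι w := fun w => rfl
  have hProjLa : ∀ w : W, ProjL w = Proj w := fun w => rfl
  -- derivatives of composites
  have hPφ : ∀ t ∈ Set.Icc (0:ℝ) T, HasDerivWithinAt (fun s => Proj (φ s)) (Proj (φ' t)) (Set.Icc 0 T) t := by
    intro t ht
    exact ProjL.hasFDerivAt.comp_hasDerivWithinAt t (hφ t ht)
  have hιφ : ∀ t ∈ Set.Icc (0:ℝ) T, HasDerivWithinAt (fun s => ι (φ s)) (ι (φ' t)) (Set.Icc 0 T) t := by
    intro t ht
    exact ιL.hasFDerivAt.comp_hasDerivWithinAt t (hφ t ht)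
  have hιφ' : ∀ t ∈ Set.Icc (0:ℝ) T, HasDerivWithinAt (fun s => ι (φ' s)) (ι (φ'' t)) (Set.Icc 0 T) t := by
    intro t ht
    exact ιL.hasFDerivAt.comp_hasDerivWithinAt t (hφ' t ht)
  -- bounds on compact time interval
  obtain ⟨M1, hM1⟩ := isCompact_Icc.exists_bound_of_continuousOn hφ'c
  obtain ⟨M2, hM2⟩ :=
    isCompact_Icc.exists_bound_of_continuousOn (ιL.continuous.comp_continuousOn hφ''c)
  -- the three error quantities
  have htN0 : (0:ℝ) ≤ (n:ℝ) * τ := by positivity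
  haveI : Nonempty (Set.Icc (0:ℝ) ((n:ℝ)*τ)) := ⟨⟨0, Set.mem_Icc.mpr ⟨le_rfl, htN0⟩⟩⟩
  set I1 : ℝ := ⨅ ψh : Vh, ‖φ ((n : ℝ) * τ) - (ψh : W)‖ ^ 2 with hI1def
  set A2 : ℝ := ⨆ t : Set.Icc (0:ℝ) ((n : ℝ) * τ), ⨅ ψh : Vh, ‖φ' t - (ψh : W)‖ ^ 2 with hA2def
  set M22 : ℝ := ⨆ t : Set.Icc (0:ℝ) ((n : ℝ) * τ), ‖ι (φ'' t)‖ ^ 2 with hM22def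
  clear_value I1 A2 M22
  have hI1nn : 0 ≤ I1 := by
    rw [hI1def]; exact Real.iInf_nonneg fun ψ => sq_nonneg _
  have hA2nn : 0 ≤ A2 := by
    rw [hA2def]; exact Real.iSup_nonneg fun t => Real.iInf_nonneg fun ψ => sq_nonneg _
  have hM22nn : 0 ≤ M22 := by
    rw [hM22def]; exact Real.iSup_nonneg fun t => sq_nonneg _
  have hιbdd : BddBelow (Set.range fun ψ : Vh => ‖φ' ((n:ℝ)*τ) - (ψ : W)‖ ^ 2) := by
    exact ⟨0, by rintro x ⟨ψ, rfl⟩; exact sq_nonneg _⟩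
  have hA2bdd : BddAbove (Set.range fun t : Set.Icc (0:ℝ) ((n:ℝ)*τ) =>
      ⨅ ψh : Vh, ‖φ' t - (ψh : W)‖ ^ 2) := by
    refine ⟨M1^2, ?_⟩
    rintro x ⟨t, rfl⟩
    have htT : (t:ℝ) ∈ Set.Icc (0:ℝ) T := ⟨t.2.1, t.2.2.trans hnT⟩
    have h0 : (⨅ ψh : Vh, ‖φ' t - (ψh : W)‖ ^ 2) ≤ ‖φ' (t:ℝ) - ((0 : Vh) : W)‖ ^ 2 :=
      ciInf_le ⟨0, by rintro x ⟨ψ, rfl⟩; exact sq_nonneg _⟩ (0 : Vh)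
    refine h0.trans ?_
    simp only [ZeroMemClass.coe_zero, sub_zero]
    exact pow_le_pow_left₀ (norm_nonneg _) (hM1 t htT) 2
  have hM22bdd : BddAbove (Set.range fun t : Set.Icc (0:ℝ) ((n:ℝ)*τ) => ‖ι (φ'' t)‖ ^ 2) := by
    refine ⟨M2^2, ?_⟩
    rintro x ⟨t, rfl⟩
    have htT : (t:ℝ) ∈ Set.Icc (0:ℝ) T := ⟨t.2.1, t.2.2.trans hnT⟩
    exact pow_le_pow_left₀ (norm_nonneg _) (hM2 t htT) 2
  have hA2le : ∀ t ∈ Set.Icc (0:ℝ) ((n:ℝ)*τ), (⨅ ψh : Vh, ‖φ' t - (ψh : W)‖ ^ 2) ≤ A2 := by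
    intro t ht
    rw [hA2def]
    exact le_ciSup hA2bdd (⟨t, ht⟩ : Set.Icc (0:ℝ) ((n:ℝ)*τ))
  have hM22le : ∀ t ∈ Set.Icc (0:ℝ) ((n:ℝ)*τ), ‖ι (φ'' t)‖ ^ 2 ≤ M22 := by
    intro t ht
    rw [hM22def]
    exact le_ciSup hM22bdd (⟨t, ht⟩ : Set.Icc (0:ℝ) ((n:ℝ)*τ))
  set sA : ℝ := Real.sqrt A2 with hsAdef
  set sM : ℝ := Real.sqrt M22 with hsMdef
  have hsA2 : sA^2 = A2 := Real.sq_sqrt hA2nn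
  have hsM2 : sM^2 = M22 := Real.sq_sqrt hM22nn
  have hsAnn : 0 ≤ sA := Real.sqrt_nonneg _
  have hsMnn : 0 ≤ sM := Real.sqrt_nonneg _
  clear_value sA sM
  -- pointwise bounds
  have hG1 : ∀ t ∈ Set.Icc (0:ℝ) ((n:ℝ)*τ), ‖Proj (φ' t) - φ' t‖ ≤ K * sA := by
    intro t ht
    have h1 : ‖φ' t - Proj (φ' t)‖^2 ≤ (K * sA)^2 := by
      refine (hquasi_inf (φ' t)).trans ?_
      rw [mul_pow, hsA2]
      exact mul_le_mul_of_nonneg_left (hA2le t ht) (sq_nonneg K)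
    rw [norm_sub_rev]
    calc ‖φ' t - Proj (φ' t)‖ = Real.sqrt (‖φ' t - Proj (φ' t)‖^2) := (Real.sqrt_sq (norm_nonneg _)).symm
      _ ≤ Real.sqrt ((K * sA)^2) := Real.sqrt_le_sqrt h1
      _ = K * sA := Real.sqrt_sq (mul_nonneg hK0.le hsAnn)
  have hG2 : ∀ t ∈ Set.Icc (0:ℝ) ((n:ℝ)*τ), ‖ι (φ'' t)‖ ≤ sM := by
    intro t ht
    have h1 := hM22le t ht
    rw [← hsM2] at h1
    calc ‖ι (φ'' t)‖ = Real.sqrt (‖ι (φ'' t)‖^2) := (Real.sqrt_sq (norm_nonneg _)).symm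
      _ ≤ Real.sqrt (sM^2) := Real.sqrt_le_sqrt h1
      _ = sM := Real.sqrt_sq hsMnn

  -- the discrete error θ and its energy estimate
  set R : ℝ := 2*K^2*A2 + 2*τ^2*M22 with hRdef
  clear_value R
  have hRnn : 0 ≤ R := by
    have h1 : 0 ≤ 2*K^2*A2 := by positivity
    have h2 : 0 ≤ 2*τ^2*M22 := by positivity
    linarith only [h1, h2, hRdef.ge, hRdef.le]
  set θ : ℕ → W := fun k => Proj (φ ((k:ℝ)*τ)) - φh k with hθdef
  have hθmem : ∀ k, θ k ∈ Vh := fun k => Vh.sub_mem (hPm _) (hφhm _)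
  have key : ∀ k, k ≤ n → ‖ι (θ k)‖^2 ≤ R / σ^2 := by
    intro k hk
    induction k with
    | zero =>
      have h0 : θ 0 = 0 := by
        simp only [hθdef, Nat.cast_zero, zero_mul, hφh0, sub_self]
      rw [h0, map_zero, norm_zero]
      have : (0:ℝ)^2 = 0 := by norm_num
      rw [this]
      exact div_nonneg hRnn (sq_nonneg σ)
    | succ k ih =>
      have hk' : k ≤ n := Nat.le_of_succ_le hk
      have ihk := ih hk'
      -- time points
      have ht21 : ((k+1 : ℕ) : ℝ)*τ - ((k : ℕ) : ℝ)*τ = τ := by push_cast; ring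
      have ht2N : ((k+1 : ℕ) : ℝ)*τ ≤ (n:ℝ)*τ :=
        mul_le_mul_of_nonneg_right (Nat.cast_le.mpr hk) hτ.le
      have ht2T : ((k+1 : ℕ) : ℝ)*τ ≤ T := ht2N.trans hnT
      have ht10 : (0:ℝ) ≤ ((k : ℕ) : ℝ)*τ := by positivity
      have ht12 : ((k : ℕ) : ℝ)*τ ≤ ((k+1 : ℕ) : ℝ)*τ := by
        have : ((k : ℕ) : ℝ) ≤ ((k+1 : ℕ) : ℝ) := by push_cast; linarith
        exact mul_le_mul_of_nonneg_right this hτ.le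
      have ht20 : (0:ℝ) ≤ ((k+1 : ℕ) : ℝ)*τ := ht10.trans ht12
      have hsubT : Set.Icc (((k : ℕ) : ℝ)*τ) (((k+1 : ℕ) : ℝ)*τ) ⊆ Set.Icc (0:ℝ) T :=
        Set.Icc_subset_Icc ht10 ht2T
      have hsubN : Set.Icc (((k : ℕ) : ℝ)*τ) (((k+1 : ℕ) : ℝ)*τ) ⊆ Set.Icc (0:ℝ) ((n:ℝ)*τ) :=
        Set.Icc_subset_Icc ht10 ht2N
      have ht2mem : ((k+1 : ℕ) : ℝ)*τ ∈ Set.Icc (0:ℝ) T := ⟨ht20, ht2T⟩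
      -- the residual
      set Ek : W := τ⁻¹ • (Proj (φ (((k+1 : ℕ) : ℝ)*τ)) - Proj (φ (((k : ℕ) : ℝ)*τ)))
        - φ' (((k+1 : ℕ) : ℝ)*τ) with hEkdef
      -- error equation
      have hθeq : ∀ ψ ∈ Vh,
          ⟪ι (τ⁻¹ • (θ (k+1) - θ k)), ι ψ⟫ + B (θ (k+1)) ψ = ⟪ι Ek, ι ψ⟫ := by
        intro ψ hψ
        have hs := hscheme (k+1) (Nat.le_add_left 1 k) ht2T ψ hψ
        simp only [Nat.add_sub_cancel] at hs
        have hw := hweak (((k+1 : ℕ) : ℝ)*τ) ht2mem ψ hψ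
        have hp2 := hPB (φ (((k+1 : ℕ) : ℝ)*τ)) ψ hψ
        simp only [hθdef, hEkdef, map_sub, map_smul, LinearMap.sub_apply, inner_sub_left,
          real_inner_smul_left] at hs ⊢
        linarith only [hs, hw, hp2]
      -- energy inequality
      have henergy := hθeq (θ (k+1)) (hθmem (k+1))
      have hip1 : ⟪ι (θ k), ι (θ (k+1))⟫ ≤ ‖ι (θ k)‖ * ‖ι (θ (k+1))‖ := real_inner_le_norm _ _
      have hip2 : ⟪ι Ek, ι (θ (k+1))⟫ ≤ ‖ι Ek‖ * ‖ι (θ (k+1))‖ := real_inner_le_norm _ _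
      have hco : σ * ‖ι (θ (k+1))‖^2 ≤ B (θ (k+1)) (θ (k+1)) := hBc _
      have hexp : ⟪ι (τ⁻¹ • (θ (k+1) - θ k)), ι (θ (k+1))⟫
          = τ⁻¹ * (‖ι (θ (k+1))‖^2 - ⟪ι (θ k), ι (θ (k+1))⟫) := by
        rw [map_smul, map_sub, real_inner_smul_left, inner_sub_left,
          real_inner_self_eq_norm_sq]
      rw [hexp] at henergy
      -- residual bound : ‖ι Ek‖ ≤ K * sA + sM * τ
      have hmvt1 : ‖(Proj (φ (((k+1 : ℕ) : ℝ)*τ)) - φ (((k+1 : ℕ) : ℝ)*τ))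
          - (Proj (φ (((k : ℕ) : ℝ)*τ)) - φ (((k : ℕ) : ℝ)*τ))‖
          ≤ (K * sA) * ‖((k+1 : ℕ) : ℝ)*τ - ((k : ℕ) : ℝ)*τ‖ := by
        refine Convex.norm_image_sub_le_of_norm_hasDerivWithin_le
          (f := fun t => Proj (φ t) - φ t) (f' := fun t => Proj (φ' t) - φ' t)
          (fun x hx => (((hPφ x (hsubT hx)).sub (hφ x (hsubT hx))).mono hsubT))
          (fun x hx => hG1 x (hsubN hx)) (convex_Icc _ _)
          (Set.left_mem_Icc.mpr ht12) (Set.right_mem_Icc.mpr ht12)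
      have hτnorm : ‖((k+1 : ℕ) : ℝ)*τ - ((k : ℕ) : ℝ)*τ‖ = τ := by
        rw [ht21, Real.norm_eq_abs, abs_of_pos hτ]
      rw [hτnorm] at hmvt1
      have hd1 : ‖ι (τ⁻¹ • ((Proj (φ (((k+1 : ℕ) : ℝ)*τ)) - φ (((k+1 : ℕ) : ℝ)*τ))
          - (Proj (φ (((k : ℕ) : ℝ)*τ)) - φ (((k : ℕ) : ℝ)*τ))))‖ ≤ K * sA := by
        refine (hιnorm _).trans ?_
        rw [norm_smul, Real.norm_eq_abs, abs_of_pos (inv_pos.mpr hτ)]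
        calc τ⁻¹ * ‖_‖ ≤ τ⁻¹ * ((K * sA) * τ) :=
              mul_le_mul_of_nonneg_left hmvt1 (inv_pos.mpr hτ).le
          _ = K * sA := by field_simp
      -- second-order consistency term, estimated in V
      have hF'b : ∀ x ∈ Set.Icc (((k : ℕ) : ℝ)*τ) (((k+1 : ℕ) : ℝ)*τ),
          ‖ι (φ' x) - ι (φ' (((k+1 : ℕ) : ℝ)*τ))‖ ≤ sM * τ := by
        intro x hx
        have h := Convex.norm_image_sub_le_of_norm_hasDerivWithin_le
          (f := fun t => ι (φ' t)) (f' := fun t => ι (φ'' t))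
          (fun y hy => ((hιφ' y (hsubT hy)).mono hsubT))
          (fun y hy => hG2 y (hsubN hy)) (convex_Icc _ _)
          (Set.right_mem_Icc.mpr ht12) hx
        refine h.trans ?_
        have hb : ‖x - ((k+1 : ℕ) : ℝ)*τ‖ ≤ τ := by
          rw [Real.norm_eq_abs, abs_le]
          constructor
          · linarith [hx.1]
          · linarith [hx.2, hτ.le]
        exact mul_le_mul_of_nonneg_left hb hsMnn
      have hmvt2 : ‖(ι (φ (((k+1 : ℕ) : ℝ)*τ)) - (((k+1 : ℕ) : ℝ)*τ) • ι (φ' (((k+1 : ℕ) : ℝ)*τ)))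
          - (ι (φ (((k : ℕ) : ℝ)*τ)) - (((k : ℕ) : ℝ)*τ) • ι (φ' (((k+1 : ℕ) : ℝ)*τ)))‖
          ≤ (sM * τ) * ‖((k+1 : ℕ) : ℝ)*τ - ((k : ℕ) : ℝ)*τ‖ := by
        refine Convex.norm_image_sub_le_of_norm_hasDerivWithin_le
          (f := fun t => ι (φ t) - t • ι (φ' (((k+1 : ℕ) : ℝ)*τ)))
          (f' := fun t => ι (φ' t) - ι (φ' (((k+1 : ℕ) : ℝ)*τ)))
          (fun x hx => ?_) hF'b (convex_Icc _ _)
          (Set.left_mem_Icc.mpr ht12) (Set.right_mem_Icc.mpr ht12)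
        have h1 := (hιφ x (hsubT hx)).mono hsubT
        have h2 := (hasDerivWithinAt_id x (Set.Icc (((k : ℕ) : ℝ)*τ) (((k+1 : ℕ) : ℝ)*τ))).smul_const
          (ι (φ' (((k+1 : ℕ) : ℝ)*τ)))
        have h3 := h1.sub h2
        simp only [one_smul, id] at h3
        exact h3
      rw [hτnorm] at hmvt2
      have hd2eq : ι (τ⁻¹ • (φ (((k+1 : ℕ) : ℝ)*τ) - φ (((k : ℕ) : ℝ)*τ)) - φ' (((k+1 : ℕ) : ℝ)*τ))
          = τ⁻¹ • ((ι (φ (((k+1 : ℕ) : ℝ)*τ)) - (((k+1 : ℕ) : ℝ)*τ) • ι (φ' (((k+1 : ℕ) : ℝ)*τ)))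
          - (ι (φ (((k : ℕ) : ℝ)*τ)) - (((k : ℕ) : ℝ)*τ) • ι (φ' (((k+1 : ℕ) : ℝ)*τ)))) := by
        have e0 : (ι (φ (((k+1 : ℕ) : ℝ)*τ)) - (((k+1 : ℕ) : ℝ)*τ) • ι (φ' (((k+1 : ℕ) : ℝ)*τ)))
            - (ι (φ (((k : ℕ) : ℝ)*τ)) - (((k : ℕ) : ℝ)*τ) • ι (φ' (((k+1 : ℕ) : ℝ)*τ)))
            = (ι (φ (((k+1 : ℕ) : ℝ)*τ)) - ι (φ (((k : ℕ) : ℝ)*τ)))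
              - (((k+1 : ℕ) : ℝ)*τ - ((k : ℕ) : ℝ)*τ) • ι (φ' (((k+1 : ℕ) : ℝ)*τ)) := by
          rw [sub_smul]; abel
        rw [e0, ht21]
        simp only [map_sub, map_smul, smul_sub, smul_smul, inv_mul_cancel₀ hτ.ne', one_smul]
      have hd2 : ‖ι (τ⁻¹ • (φ (((k+1 : ℕ) : ℝ)*τ) - φ (((k : ℕ) : ℝ)*τ)) - φ' (((k+1 : ℕ) : ℝ)*τ))‖
          ≤ sM * τ := by
        rw [hd2eq, norm_smul, Real.norm_eq_abs, abs_of_pos (inv_pos.mpr hτ)]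
        calc τ⁻¹ * ‖_‖ ≤ τ⁻¹ * ((sM * τ) * τ) :=
              mul_le_mul_of_nonneg_left hmvt2 (inv_pos.mpr hτ).le
          _ = sM * τ := by field_simp
      have hEksplit : Ek = τ⁻¹ • ((Proj (φ (((k+1 : ℕ) : ℝ)*τ)) - φ (((k+1 : ℕ) : ℝ)*τ))
          - (Proj (φ (((k : ℕ) : ℝ)*τ)) - φ (((k : ℕ) : ℝ)*τ)))
          + (τ⁻¹ • (φ (((k+1 : ℕ) : ℝ)*τ) - φ (((k : ℕ) : ℝ)*τ)) - φ' (((k+1 : ℕ) : ℝ)*τ)) := by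
        have e : Proj (φ (((k+1 : ℕ) : ℝ)*τ)) - Proj (φ (((k : ℕ) : ℝ)*τ))
            = ((Proj (φ (((k+1 : ℕ) : ℝ)*τ)) - φ (((k+1 : ℕ) : ℝ)*τ))
              - (Proj (φ (((k : ℕ) : ℝ)*τ)) - φ (((k : ℕ) : ℝ)*τ)))
              + (φ (((k+1 : ℕ) : ℝ)*τ) - φ (((k : ℕ) : ℝ)*τ)) := by abel
        rw [hEkdef, e, smul_add]; abel
      have hE : ‖ι Ek‖ ≤ K * sA + sM * τ := by
        rw [hEksplit, map_add]
        exact (norm_add_le _ _).trans (add_le_add hd1 hd2)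
      have hE2 : ‖ι Ek‖^2 ≤ R := by
        rw [hRdef]
        nlinarith only [hE, sq_nonneg (K*sA - sM*τ), norm_nonneg (ι Ek), hsA2, hsM2,
          mul_nonneg (mul_nonneg hK0.le hsAnn) (mul_nonneg hsMnn hτ.le)]
      -- conclude the induction step
      set a : ℝ := ‖ι (θ (k+1))‖ with hadef
      set b : ℝ := ‖ι (θ k)‖ with hbdef
      set E : ℝ := ‖ι Ek‖ with hEdef
      have hann : 0 ≤ a := hadef ▸ norm_nonneg _
      have hbnn : 0 ≤ b := hbdef ▸ norm_nonneg _
      have hEnn : 0 ≤ E := hEdef ▸ norm_nonneg _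
      clear_value a b E
      -- from henergy : τ⁻¹ * (a^2 - ip) + B θ θ = ipE
      have hineq : a^2 - ⟪ι (θ k), ι (θ (k+1))⟫ = τ * (⟪ι Ek, ι (θ (k+1))⟫ - B (θ (k+1)) (θ (k+1))) := by
        have := henergy
        field_simp at this ⊢
        linarith only [this]
      have hstep : σ * ((1 + σ*τ) * a^2) ≤ σ * b^2 + τ * E^2 := by
        have h1 : a^2 ≤ b * a + τ * (E * a) - τ * (σ * a^2) := by
          have h2 : ⟪ι (θ k), ι (θ (k+1))⟫ ≤ b * a := hip1
          have h3 : ⟪ι Ek, ι (θ (k+1))⟫ ≤ E * a := hip2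
          have h4 : τ * (⟪ι Ek, ι (θ (k+1))⟫ - B (θ (k+1)) (θ (k+1)))
              ≤ τ * (E * a - σ * a^2) := by
            apply mul_le_mul_of_nonneg_left _ hτ.le
            linarith only [h3, hco]
          have h5 := hineq
          linarith only [h2, h4, h5]
        have h6 : σ * a^2 ≤ σ * (b * a + τ * (E * a) - τ * (σ * a^2)) :=
          mul_le_mul_of_nonneg_left h1 hσ.le
        have h7 : 0 ≤ τ * (σ*a - E)^2 := mul_nonneg hτ.le (sq_nonneg _)
        have h8 : 0 ≤ σ * (a - b)^2 := mul_nonneg hσ.le (sq_nonneg _)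
        nlinarith only [h6, h7, h8]
      have hfin : σ * ((1 + σ*τ) * a^2) ≤ σ * ((1 + σ*τ) * (R / σ^2)) := by
        have hb2 : b^2 ≤ R / σ^2 := ihk
        have heq : σ * ((1 + σ*τ) * (R / σ^2)) = σ * (R/σ^2) + τ * R := by
          field_simp
        rw [heq]
        have h4 : σ * b^2 ≤ σ * (R/σ^2) := mul_le_mul_of_nonneg_left hb2 hσ.le
        have h5 : τ * E^2 ≤ τ * R := mul_le_mul_of_nonneg_left hE2 hτ.le
        linarith only [hstep, h4, h5]
      have hpos : 0 < σ * (1 + σ*τ) := by nlinarith only [hσ, mul_pos hσ (mul_pos hσ hτ)]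
      have := (mul_le_mul_iff_right₀ hpos).mp (by linarith only [hfin] : (σ * (1 + σ*τ)) * a^2 ≤ (σ * (1 + σ*τ)) * (R / σ^2))
      exact this
  -- final assembly
  have hkey := key n le_rfl
  have hsplit : ι (φ ((n:ℝ)*τ)) - ι (φh n)
      = ι (φ ((n:ℝ)*τ) - Proj (φ ((n:ℝ)*τ))) + ι (θ n) := by
    rw [hθdef]
    simp only [map_sub]
    abel
  have hr1 : ‖ι (φ ((n:ℝ)*τ) - Proj (φ ((n:ℝ)*τ)))‖^2 ≤ K^2 * I1 := by
    have h1 := hιnorm (φ ((n:ℝ)*τ) - Proj (φ ((n:ℝ)*τ)))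
    have h2 := hquasi_inf (φ ((n:ℝ)*τ))
    rw [← hI1def] at h2
    nlinarith only [h1, h2, norm_nonneg (ι (φ ((n:ℝ)*τ) - Proj (φ ((n:ℝ)*τ)))),
      norm_nonneg (φ ((n:ℝ)*τ) - Proj (φ ((n:ℝ)*τ)))]
  have htotal : ‖ι (φ ((n:ℝ)*τ)) - ι (φh n)‖
      ≤ ‖ι (φ ((n:ℝ)*τ) - Proj (φ ((n:ℝ)*τ)))‖ + ‖ι (θ n)‖ := by
    rw [hsplit]; exact norm_add_le _ _
  have hσ2 : (0:ℝ) < σ^2 := by positivity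
  have hRs : ‖ι (θ n)‖^2 ≤ (2*K^2*A2 + 2*τ^2*M22) / σ^2 := by rw [← hRdef]; exact hkey
  have h1 : ‖ι (φ ((n:ℝ)*τ)) - ι (φh n)‖^2
      ≤ 2*‖ι (φ ((n:ℝ)*τ) - Proj (φ ((n:ℝ)*τ)))‖^2 + 2*‖ι (θ n)‖^2 := by
    nlinarith only [htotal, sq_nonneg (‖ι (φ ((n:ℝ)*τ) - Proj (φ ((n:ℝ)*τ)))‖ - ‖ι (θ n)‖),
      norm_nonneg (ι (φ ((n:ℝ)*τ)) - ι (φh n)),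
      norm_nonneg (ι (φ ((n:ℝ)*τ) - Proj (φ ((n:ℝ)*τ)))), norm_nonneg (ι (θ n))]
  have h2 : 2*‖ι (φ ((n:ℝ)*τ) - Proj (φ ((n:ℝ)*τ)))‖^2 ≤ 2*K^2*I1 := by linarith only [hr1]
  have heq2 : 2*((2*K^2*A2 + 2*τ^2*M22)/σ^2) = (4*K^2/σ^2)*A2 + (4/σ^2)*(τ^2*M22) := by
    field_simp; ring
  have h3 : 2*‖ι (θ n)‖^2 ≤ (4*K^2/σ^2)*A2 + (4/σ^2)*(τ^2*M22) := by
    rw [← heq2]; linarith only [hRs]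
  have hc1 : 2*K^2 ≤ 2*K^2 + 4*K^2/σ^2 + 4/σ^2 := by
    have e1 : (0:ℝ) ≤ 4*K^2/σ^2 := by positivity
    have e2 : (0:ℝ) ≤ 4/σ^2 := by positivity
    linarith only [e1, e2]
  have hc2 : 4*K^2/σ^2 ≤ 2*K^2 + 4*K^2/σ^2 + 4/σ^2 := by
    have e1 : (0:ℝ) ≤ 2*K^2 := by positivity
    have e2 : (0:ℝ) ≤ 4/σ^2 := by positivity
    linarith only [e1, e2]
  have hc3 : 4/σ^2 ≤ 2*K^2 + 4*K^2/σ^2 + 4/σ^2 := by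
    have e1 : (0:ℝ) ≤ 2*K^2 := by positivity
    have e2 : (0:ℝ) ≤ 4*K^2/σ^2 := by positivity
    linarith only [e1, e2]
  have h4 : 2*K^2*I1 ≤ (2*K^2 + 4*K^2/σ^2 + 4/σ^2)*I1 :=
    mul_le_mul_of_nonneg_right hc1 hI1nn
  have h5 : (4*K^2/σ^2)*A2 ≤ (2*K^2 + 4*K^2/σ^2 + 4/σ^2)*A2 :=
    mul_le_mul_of_nonneg_right hc2 hA2nn
  have h6 : (4/σ^2)*(τ^2*M22) ≤ (2*K^2 + 4*K^2/σ^2 + 4/σ^2)*(τ^2*M22) :=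
    mul_le_mul_of_nonneg_right hc3 (mul_nonneg (sq_nonneg τ) hM22nn)
  have hdist : (2*K^2 + 4*K^2/σ^2 + 4/σ^2) * (I1 + A2 + τ^2*M22)
      = (2*K^2 + 4*K^2/σ^2 + 4/σ^2)*I1 + (2*K^2 + 4*K^2/σ^2 + 4/σ^2)*A2
        + (2*K^2 + 4*K^2/σ^2 + 4/σ^2)*(τ^2*M22) := by ring
  linarith only [h1, h2, h3, h4, h5, h6, hdist.le, hdist.ge]
end

section
/- Let V⁺ and V⁻ be real inner product spaces, W_h⁺ ⊆ V⁺ and V_h⁻ ⊆ V⁻ subspaces, and A : W_h⁺ → V⁻ a linear map with A(W_h⁺) ⊆ V_h⁻. Let c⁺ : V⁺ × V⁺ → ℝ and c⁻ : V⁻ × V⁻ → ℝ be bilinear forms and 0 < σ̲ ≤ σ̄ constants such that c⁺(x,x) ≥ σ̲‖x‖², c⁻(y,y) ≥ σ̲‖y‖², |c⁺(x,x')| ≤ σ̄‖x‖‖x'‖ and |c⁻(y,y')| ≤ σ̄‖y‖‖y'‖ for all x,x' ∈ V⁺ and y,y' ∈ V⁻. Let r : W_h⁺ × W_h⁺ →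 ℝ be a symmetric bilinear form with r(x,x) ≥ 0. Define, for φ = (φ⁺,φ⁻) and ψ = (ψ⁺,ψ⁻) in W_h⁺ × V_h⁻, the bilinear form B(φ;ψ) = r(φ⁺,ψ⁺) + c⁺(φ⁺,ψ⁺) + c⁻(φ⁻,ψ⁻) − ⟨φ⁻, Aψ⁺⟩ + ⟨Aφ⁺, ψ⁻⟩ and the norm ‖φ‖² = ‖φ⁺‖² + ‖Aφ⁺‖² + r(φ⁺,φ⁺) + ‖φ⁻‖². Then for every φ ∈ W_h⁺ × V_h⁻: sup over nonzero ψ ∈ W_h⁺ × V_h⁻ of B(φ;ψ)/‖ψ‖ is at least β‖φ‖, with β = σ̲ / (2(1+σ̄²)). -/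
open scoped RealInnerProductSpace

private lemma bil_cauchy_schwarz {M : Type*} [AddCommGroup M] [Module ℝ M]
    (r : M →ₗ[ℝ] M →ₗ[ℝ] ℝ)
    (hrsym : ∀ x y : M, r x y = r y x) (hrpos : ∀ x : M, 0 ≤ r x x)
    (u v : M) : (r u v) ^ 2 ≤ r u u * r v v := by
  have h : ∀ t : ℝ, 0 ≤ (r v v) * (t * t) + (2 * r u v) * t + r u u := by
    intro t
    have := hrpos (u + t • v)
    simp only [map_add, map_smul, LinearMap.add_apply, LinearMap.smul_apply,
      smul_eq_mul] at this
    rw [hrsym v u] at this; linarith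
  have := discrim_le_zero h
  rw [discrim] at this
  nlinarith

private lemma le_sqrt_of_sq_le {t N : ℝ} (ht : 0 ≤ t) (h : t ^ 2 ≤ N) :
    t ≤ Real.sqrt N := by
  calc t = Real.sqrt (t ^ 2) := (Real.sqrt_sq ht).symm
  _ ≤ Real.sqrt N := Real.sqrt_le_sqrt h

set_option maxHeartbeats 1600000 in
/-- Discrete inf-sup stability of the even-odd mixed bilinear form of radiative
transfer, with stability constant β = σ̲ / (2(1+σ̄²)). -/
theorem stmt_2
    {Vp Vm : Type*} [NormedAddCommGroup Vp] [InnerProductSpace ℝ Vp]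
    [NormedAddCommGroup Vm] [InnerProductSpace ℝ Vm]
    (Whp : Submodule ℝ Vp) (Vhm : Submodule ℝ Vm)
    (A : Whp →ₗ[ℝ] Vm) (hA : ∀ x : Whp, A x ∈ Vhm)
    (cp : Vp →ₗ[ℝ] Vp →ₗ[ℝ] ℝ) (cm : Vm →ₗ[ℝ] Vm →ₗ[ℝ] ℝ)
    (σl σu : ℝ) (hσl : 0 < σl) (hσlu : σl ≤ σu)
    (hcpc : ∀ x : Vp, σl * ‖x‖ ^ 2 ≤ cp x x)
    (hcmc : ∀ y : Vm, σl * ‖y‖ ^ 2 ≤ cm y y)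
    (hcpb : ∀ x x' : Vp, |cp x x'| ≤ σu * ‖x‖ * ‖x'‖)
    (hcmb : ∀ y y' : Vm, |cm y y'| ≤ σu * ‖y‖ * ‖y'‖)
    (r : Whp →ₗ[ℝ] Whp →ₗ[ℝ] ℝ)
    (hrsym : ∀ x y : Whp, r x y = r y x) (hrpos : ∀ x : Whp, 0 ≤ r x x) :
    ∀ φ : Whp × Vhm,
      (σl / (2 * (1 + σu ^ 2))) *
          Real.sqrt (‖φ.1‖ ^ 2 + ‖A φ.1‖ ^ 2 + r φ.1 φ.1 + ‖φ.2‖ ^ 2) ≤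
        ⨆ ψ : {p : Whp × Vhm // p ≠ 0},
          (r φ.1 (ψ : Whp × Vhm).1 + cp (φ.1 : Vp) ((ψ : Whp × Vhm).1 : Vp) +
              cm (φ.2 : Vm) (((ψ : Whp × Vhm).2 : Vhm) : Vm) -
              ⟪(φ.2 : Vm), A (ψ : Whp × Vhm).1⟫ + ⟪A φ.1, (((ψ : Whp × Vhm).2 : Vhm) : Vm)⟫) /
            Real.sqrt (‖(ψ : Whp × Vhm).1‖ ^ 2 + ‖A (ψ : Whp × Vhm).1‖ ^ 2 +
              r (ψ : Whp × Vhm).1 (ψ : Whp × Vhm).1 + ‖(ψ : Whp × Vhm).2‖ ^ 2) := by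
  rintro ⟨x, y⟩
  dsimp only
  simp only [Submodule.coe_norm]
  have hσu : 0 < σu := hσl.trans_le hσlu
  have hden : (0:ℝ) < 2 * (1 + σu ^ 2) := by positivity
  set β : ℝ := σl / (2 * (1 + σu ^ 2)) with hβdef
  have hβpos : 0 < β := div_pos hσl hden
  have hσlβ : σl = 2 * β * (1 + σu ^ 2) := by
    rw [hβdef]; field_simp
  have hβ4 : β ≤ 1 / 4 := by
    rw [hβdef, div_le_iff₀ hden]; nlinarith [sq_nonneg (σu - 1)]
  have rCS : ∀ u v : Whp, (r u v) ^ 2 ≤ r u u * r v v :=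
    bil_cauchy_schwarz r hrsym hrpos
  -- positivity of the norm of nonzero elements
  have hNpos : ∀ p : Whp × Vhm, p ≠ 0 →
      0 < ‖(p.1 : Vp)‖ ^ 2 + ‖A p.1‖ ^ 2 + r p.1 p.1 + ‖(p.2 : Vm)‖ ^ 2 := by
    intro p hp
    have h1 : p.1 ≠ 0 ∨ p.2 ≠ 0 := by
      by_contra h
      push_neg at h
      exact hp (Prod.ext h.1 h.2)
    have h2 := hrpos p.1
    rcases h1 with h | h
    · have h3 : 0 < ‖(p.1 : Vp)‖ := by
        rw [← Submodule.coe_norm]; exact norm_pos_iff.mpr h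
      nlinarith [norm_nonneg (A p.1), norm_nonneg ((p.2 : Vm))]
    · have h3 : 0 < ‖(p.2 : Vm)‖ := by
        rw [← Submodule.coe_norm]; exact norm_pos_iff.mpr h
      nlinarith [norm_nonneg (A p.1), norm_nonneg ((p.1 : Vp))]
  by_cases h0 : (⟨x, y⟩ : Whp × Vhm) = 0
  · -- zero case
    have hx : x = 0 := congrArg Prod.fst h0
    have hy : y = 0 := congrArg Prod.snd h0
    subst hx; subst hy
    refine le_trans (le_of_eq ?_) (Real.iSup_nonneg ?_)
    · simp
    · intro ψ
      simp
  · -- main case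
    set a : ℝ := ‖(x : Vp)‖ with hadef
    set b : ℝ := ‖A x‖ with hbdef
    set c2 : ℝ := r x x with hc2def
    set d : ℝ := ‖(y : Vm)‖ with hddef
    have ha : 0 ≤ a := by rw [hadef]; exact norm_nonneg _
    have hb : 0 ≤ b := by rw [hbdef]; exact norm_nonneg _
    have hc2 : 0 ≤ c2 := by rw [hc2def]; exact hrpos x
    have hd : 0 ≤ d := by rw [hddef]; exact norm_nonneg _
    set N : ℝ := a ^ 2 + b ^ 2 + c2 + d ^ 2 with hNdef
    have hNpos' : 0 < N := by
      have := hNpos (⟨x, y⟩ : Whp × Vhm) h0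
      rw [hNdef]
      simpa [← hadef, ← hbdef, ← hc2def, ← hddef] using this
    -- the test element
    set z : Vhm := (⟨A x, hA x⟩ : Vhm) with hzdef
    set q : Whp × Vhm := (x, y + (2 * β) • z) with hqdef
    have hq1 : q.1 = x := by rw [hqdef]
    have hq2 : q.2 = y + (2 * β) • z := by rw [hqdef]
    have hzcoe : ((z : Vhm) : Vm) = A x := by rw [hzdef]
    have hq2coe : ((q.2 : Vhm) : Vm) = (y : Vm) + (2 * β) • (A x) := by
      rw [hq2]; simp [hzdef]
    have hqne : q ≠ 0 := by
      intro h
      have h1 : x = 0 := by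
        have := congrArg Prod.fst h
        rw [hqdef] at this
        exact this
      have h2 : y + (2 * β) • z = 0 := by
        have := congrArg Prod.snd h
        rw [hqdef] at this
        exact this
      have hAx0 : A x = 0 := by rw [h1, map_zero]
      have hz0 : z = 0 := by
        apply Subtype.ext
        rw [hzcoe, hAx0]
        simp
      rw [hz0, smul_zero, add_zero] at h2
      exact h0 (by rw [h1, h2]; rfl)
    refine le_ciSup_of_le ?_ (⟨q, hqne⟩ : {p : Whp × Vhm // p ≠ 0}) ?_
    · -- bounded above
      refine ⟨Real.sqrt c2 + σu * a + σu * d + d + b, ?_⟩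
      rintro w ⟨ψ, rfl⟩
      obtain ⟨⟨u, v⟩, hψne⟩ := ψ
      dsimp only
      set M : ℝ := ‖(u : Vp)‖ ^ 2 + ‖A u‖ ^ 2 + r u u + ‖(v : Vm)‖ ^ 2 with hMdef
      have hM : 0 < M := hNpos (u, v) hψne
      have hsM : 0 < Real.sqrt M := Real.sqrt_pos.mpr hM
      have hru : 0 ≤ r u u := hrpos u
      have h1 : ‖(u : Vp)‖ ≤ Real.sqrt M := le_sqrt_of_sq_le (norm_nonneg _)
        (by rw [hMdef]; nlinarith [norm_nonneg (A u), norm_nonneg ((v : Vm))])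
      have h2 : ‖A u‖ ≤ Real.sqrt M := le_sqrt_of_sq_le (norm_nonneg _)
        (by rw [hMdef]; nlinarith [norm_nonneg ((u : Vp)), norm_nonneg ((v : Vm))])
      have h3 : Real.sqrt (r u u) ≤ Real.sqrt M := Real.sqrt_le_sqrt
        (by rw [hMdef]; nlinarith [norm_nonneg ((u : Vp)), norm_nonneg ((v : Vm)),
          norm_nonneg (A u)])
      have h4 : ‖(v : Vm)‖ ≤ Real.sqrt M := le_sqrt_of_sq_le (norm_nonneg _)
        (by rw [hMdef]; nlinarith [norm_nonneg ((u : Vp)), norm_nonneg (A u)])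
      have t1 : r x u ≤ Real.sqrt c2 * Real.sqrt M := by
        have habs : |r x u| ≤ Real.sqrt (c2 * r u u) := by
          rw [← Real.sqrt_sq_eq_abs]
          exact Real.sqrt_le_sqrt (by rw [hc2def]; exact rCS x u)
        rw [Real.sqrt_mul hc2] at habs
        calc r x u ≤ |r x u| := le_abs_self _
        _ ≤ Real.sqrt c2 * Real.sqrt (r u u) := habs
        _ ≤ Real.sqrt c2 * Real.sqrt M :=
          mul_le_mul_of_nonneg_left h3 (Real.sqrt_nonneg _)
      have t2 : cp (x : Vp) (u : Vp) ≤ σu * a * Real.sqrt M := by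
        calc cp (x : Vp) (u : Vp) ≤ |cp (x : Vp) (u : Vp)| := le_abs_self _
        _ ≤ σu * a * ‖(u : Vp)‖ := by rw [hadef]; exact hcpb _ _
        _ ≤ σu * a * Real.sqrt M := by
          apply mul_le_mul_of_nonneg_left h1 (by positivity)
      have t3 : cm (y : Vm) (v : Vm) ≤ σu * d * Real.sqrt M := by
        calc cm (y : Vm) (v : Vm) ≤ |cm (y : Vm) (v : Vm)| := le_abs_self _
        _ ≤ σu * d * ‖(v : Vm)‖ := by rw [hddef]; exact hcmb _ _
        _ ≤ σu * d * Real.sqrt M := by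
          apply mul_le_mul_of_nonneg_left h4 (by positivity)
      have t4 : -⟪(y : Vm), A u⟫ ≤ d * Real.sqrt M := by
        calc -⟪(y : Vm), A u⟫ ≤ |⟪(y : Vm), A u⟫| := neg_le_abs _
        _ ≤ d * ‖A u‖ := by rw [hddef]; exact abs_real_inner_le_norm _ _
        _ ≤ d * Real.sqrt M := mul_le_mul_of_nonneg_left h2 hd
      have t5 : ⟪A x, (v : Vm)⟫ ≤ b * Real.sqrt M := by
        calc ⟪A x, (v : Vm)⟫ ≤ |⟪A x, (v : Vm)⟫| := le_abs_self _
        _ ≤ b * ‖(v : Vm)‖ := by rw [hbdef]; exact abs_real_inner_le_norm _ _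
        _ ≤ b * Real.sqrt M := mul_le_mul_of_nonneg_left h4 hb
      rw [div_le_iff₀ hsM]
      calc r x u + cp (x : Vp) (u : Vp) + cm (y : Vm) (v : Vm) - ⟪(y : Vm), A u⟫
            + ⟪A x, (v : Vm)⟫
          ≤ Real.sqrt c2 * Real.sqrt M + σu * a * Real.sqrt M + σu * d * Real.sqrt M
            + d * Real.sqrt M + b * Real.sqrt M := by linarith
      _ = (Real.sqrt c2 + σu * a + σu * d + d + b) * Real.sqrt M := by ring
    · -- the main estimate at ψ = q
      dsimp only
      have hDpos : 0 < ‖(q.1 : Vp)‖ ^ 2 + ‖A q.1‖ ^ 2 + r q.1 q.1 + ‖(q.2 : Vm)‖ ^ 2 :=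
        hNpos q hqne
      rw [le_div_iff₀ (Real.sqrt_pos.mpr hDpos)]
      -- numerator value
      have hnum : r x q.1 + cp (x : Vp) (q.1 : Vp) + cm (y : Vm) ((q.2 : Vhm) : Vm)
            - ⟪(y : Vm), A q.1⟫ + ⟪A x, ((q.2 : Vhm) : Vm)⟫
          = c2 + cp (x : Vp) (x : Vp) + cm (y : Vm) (y : Vm)
            + (2 * β) * cm (y : Vm) (A x) + (2 * β) * b ^ 2 := by
        rw [hq1, hq2coe, hc2def, hbdef]
        rw [inner_add_right, real_inner_smul_right, real_inner_self_eq_norm_sq,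
          real_inner_comm (A x) ((y : Vm))]
        simp only [map_add, map_smul, smul_eq_mul]
        ring
      -- norm of q bounded
      have hq2norm : ‖(q.2 : Vm)‖ ≤ d + 2 * β * b := by
        rw [hq2coe, hddef, hbdef]
        calc ‖(y : Vm) + (2 * β) • A x‖ ≤ ‖(y : Vm)‖ + ‖(2 * β) • A x‖ := norm_add_le _ _
        _ = ‖(y : Vm)‖ + 2 * β * ‖A x‖ := by
          rw [norm_smul, Real.norm_eq_abs, abs_of_pos (by linarith : (0:ℝ) < 2 * β)]
      have hD : ‖(q.1 : Vp)‖ ^ 2 + ‖A q.1‖ ^ 2 + r q.1 q.1 + ‖(q.2 : Vm)‖ ^ 2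
          ≤ (1 + 2 * β) ^ 2 * N := by
        have hqn : ‖(q.2 : Vm)‖ ^ 2 ≤ (d + 2 * β * b) ^ 2 := by
          have h2 : 0 ≤ d + 2 * β * b := by positivity
          nlinarith [norm_nonneg ((q.2 : Vm))]
        have h1 : ‖(q.1 : Vp)‖ ^ 2 + ‖A q.1‖ ^ 2 + r q.1 q.1 = a ^ 2 + b ^ 2 + c2 := by
          rw [hq1, ← hadef, ← hbdef, ← hc2def]
        rw [h1, hNdef]
        nlinarith [mul_nonneg hβpos.le (sq_nonneg (d - b)),
          mul_nonneg (mul_nonneg hβpos.le hβpos.le) (sq_nonneg b),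
          mul_nonneg (mul_nonneg hβpos.le hβpos.le) (sq_nonneg d),
          mul_nonneg hβpos.le hc2, mul_nonneg (mul_nonneg hβpos.le hβpos.le) hc2,
          mul_nonneg hβpos.le (sq_nonneg a),
          mul_nonneg (mul_nonneg hβpos.le hβpos.le) (sq_nonneg a),
          mul_nonneg hβpos.le (sq_nonneg d), mul_nonneg hβpos.le (sq_nonneg b)]
      have hsqrtD : Real.sqrt (‖(q.1 : Vp)‖ ^ 2 + ‖A q.1‖ ^ 2 + r q.1 q.1 + ‖(q.2 : Vm)‖ ^ 2)
          ≤ (1 + 2 * β) * Real.sqrt N := by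
        calc Real.sqrt (‖(q.1 : Vp)‖ ^ 2 + ‖A q.1‖ ^ 2 + r q.1 q.1 + ‖(q.2 : Vm)‖ ^ 2)
            ≤ Real.sqrt ((1 + 2 * β) ^ 2 * N) := Real.sqrt_le_sqrt hD
        _ = (1 + 2 * β) * Real.sqrt N := by
          rw [Real.sqrt_mul (sq_nonneg _), Real.sqrt_sq (by linarith : (0:ℝ) ≤ 1 + 2 * β)]
      -- lower bound for the numerator
      have f1 : σl * a ^ 2 ≤ cp (x : Vp) (x : Vp) := by
        rw [hadef]; exact hcpc (x : Vp)
      have f2 : σl * d ^ 2 ≤ cm (y : Vm) (y : Vm) := by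
        rw [hddef]; exact hcmc (y : Vm)
      have f3 : -(σu * d * b) ≤ cm (y : Vm) (A x) := by
        have h := hcmb (y : Vm) (A x)
        have h2 : σu * ‖(y : Vm)‖ * ‖A x‖ = σu * d * b := by rw [hddef, hbdef]
        rw [h2] at h
        linarith [neg_abs_le (cm (y : Vm) (A x))]
      have hnumlow : β * (1 + 2 * β) * N
          ≤ c2 + cp (x : Vp) (x : Vp) + cm (y : Vm) (y : Vm)
            + (2 * β) * cm (y : Vm) (A x) + (2 * β) * b ^ 2 := by
        have hcm3 : (2 * β) * (-(σu * d * b)) ≤ (2 * β) * cm (y : Vm) (A x) :=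
          mul_le_mul_of_nonneg_left f3 (by linarith)
        have scalar : β * (1 + 2 * β) * N
            ≤ c2 + σl * a ^ 2 + σl * d ^ 2 + (2 * β) * (-(σu * d * b))
              + (2 * β) * b ^ 2 := by
          rw [hNdef, hσlβ]
          nlinarith [mul_nonneg hβpos.le (sq_nonneg (σu * d - b / 2)),
            mul_nonneg (mul_nonneg hβpos.le (by linarith : (0:ℝ) ≤ 1/4 - β)) (sq_nonneg a),
            mul_nonneg (mul_nonneg hβpos.le (by linarith : (0:ℝ) ≤ 1/4 - β)) (sq_nonneg b),
            mul_nonneg (mul_nonneg hβpos.le (by linarith : (0:ℝ) ≤ 1/4 - β)) (sq_nonneg d),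
            mul_nonneg (mul_nonneg hβpos.le (by linarith : (0:ℝ) ≤ 1/4 - β)) hc2,
            mul_nonneg hβpos.le (mul_nonneg (sq_nonneg σu) (sq_nonneg a)),
            mul_nonneg hβpos.le (mul_nonneg (sq_nonneg σu) (sq_nonneg d)),
            mul_nonneg hβpos.le hc2,
            mul_nonneg (mul_nonneg hβpos.le hβpos.le) hc2]
        linarith
      rw [hnum]
      have step : β * Real.sqrt N *
          Real.sqrt (‖(q.1 : Vp)‖ ^ 2 + ‖A q.1‖ ^ 2 + r q.1 q.1 + ‖(q.2 : Vm)‖ ^ 2)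
          ≤ β * (1 + 2 * β) * N := by
        have h1 : 0 ≤ β * Real.sqrt N := by positivity
        have h2 := mul_le_mul_of_nonneg_left hsqrtD h1
        have h3 : Real.sqrt N * Real.sqrt N = N := Real.mul_self_sqrt hNpos'.le
        nlinarith
      linarith
end

section
/- Let E be a finite-dimensional real inner product space, σ > 0, and B : E × E → ℝ a bilinear form with B(x,x) ≥ σ‖x‖² for all x ∈ E. Let τ satisfy 0 < τ ≤ 1/(2σ), let φ⁰ ∈ E and q¹, q², … ∈ E, and suppose for each n ≥ 1 that φⁿ ∈ E satisfies (1/τ)⟨φⁿ − φⁿ⁻¹, ψ⟩ + B(φⁿ, ψ) = ⟨qⁿ, ψ⟩ for all ψ ∈ E. Then, with tⁿ = nτ, for every n ≥ 0: ‖φⁿ‖² ≤ e^{−σ tⁿ} ‖φ⁰‖² + (2/σ) Σ_{k=1}^{n} τ e^{−σ(tⁿ − t^k)} ‖q^k‖². -/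
open scoped RealInnerProductSpace

lemma exp_aux7 {x : ℝ} (hx0 : 0 ≤ x) (hx : x ≤ 1/2) :
    Real.exp x ≤ 1 + (3/2) * x := by
  have h3 : (0:ℝ) < 1 - x/3 := by linarith
  have h1 : Real.exp (x/3) ≤ 1 / (1 - x/3) := by
    rw [le_div_iff₀ h3]
    have h := Real.add_one_le_exp (-(x/3))
    calc Real.exp (x/3) * (1 - x/3) ≤ Real.exp (x/3) * Real.exp (-(x/3)) := by
          apply mul_le_mul_of_nonneg_left _ (Real.exp_pos _).le; linarith
      _ = 1 := by rw [← Real.exp_add]; ring_nf; exact Real.exp_zero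
  have hx3 : Real.exp x = (Real.exp (x/3))^3 := by
    rw [show x = x/3 + x/3 + x/3 by ring, Real.exp_add, Real.exp_add]; ring
  have h2 : (Real.exp (x/3))^3 ≤ (1 / (1 - x/3))^3 :=
    pow_le_pow_left₀ (Real.exp_pos _).le h1 3
  have h4 : (1 / (1 - x/3))^3 ≤ 1 + (3/2) * x := by
    rw [div_pow, one_pow, div_le_iff₀ (by positivity)]
    have h5 : 0 ≤ 1/2 - x := by linarith
    nlinarith [sq_nonneg x, mul_nonneg hx0 hx0, mul_nonneg h5 hx0,
      mul_nonneg (mul_nonneg h5 hx0) hx0, mul_nonneg h5 (mul_nonneg hx0 hx0),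
      mul_nonneg (mul_nonneg h5 h5) hx0, sq_nonneg (x - 1/2)]
  linarith [hx3 ▸ le_trans h2 h4]

set_option maxHeartbeats 1000000 in
lemma step_aux7
    {E : Type*} [NormedAddCommGroup E] [InnerProductSpace ℝ E]
    (σ : ℝ) (hσ : 0 < σ) (B : E →ₗ[ℝ] E →ₗ[ℝ] ℝ) (hB : ∀ x : E, σ * ‖x‖ ^ 2 ≤ B x x)
    (τ : ℝ) (hτ0 : 0 < τ) (hτ : τ ≤ 1 / (2 * σ))
    (φ : ℕ → E) (q : ℕ → E)
    (hscheme : ∀ n : ℕ, 1 ≤ n → ∀ ψ : E,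
      (1 / τ) * ⟪φ n - φ (n - 1), ψ⟫ + B (φ n) ψ = ⟪q n, ψ⟫)
    (n : ℕ) (hn : 1 ≤ n) :
    ‖φ n‖ ^ 2 ≤ Real.exp (-(σ * τ)) * ‖φ (n-1)‖ ^ 2 + (2 * τ / σ) * ‖q n‖ ^ 2 := by
  have heq := hscheme n hn (φ n)
  set a := ‖φ n‖
  set b := ‖φ (n-1)‖
  set c := ‖q n‖
  have hBn : σ * a ^ 2 ≤ B (φ n) (φ n) := hB (φ n)
  have hip : ⟪φ n - φ (n-1), φ n⟫ = a ^ 2 - ⟪φ (n-1), φ n⟫ := by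
    rw [inner_sub_left, real_inner_self_eq_norm_sq]
  have h1 : ⟪φ (n-1), φ n⟫ ≤ b * a := real_inner_le_norm _ _
  have h2 : ⟪q n, φ n⟫ ≤ c * a := real_inner_le_norm _ _
  -- derive (1 + 3/2 σ τ) a² ≤ b² + (2τ/σ) c²
  have key : (1 + (3/2) * (σ * τ)) * a ^ 2 ≤ b ^ 2 + (2 * τ / σ) * c ^ 2 := by
    have hEq : (1 / τ) * (a ^ 2 - ⟪φ (n-1), φ n⟫) = ⟪q n, φ n⟫ - B (φ n) (φ n) := by
      rw [← hip]; linarith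
    have h3 : (1 / τ) * (a ^ 2 - ⟪φ (n-1), φ n⟫) ≤ c * a - σ * a ^ 2 := by
      rw [hEq]; linarith
    have h4 : a ^ 2 - ⟪φ (n-1), φ n⟫ ≤ τ * (c * a - σ * a ^ 2) := by
      have := mul_le_mul_of_nonneg_left h3 hτ0.le
      rw [show τ * ((1/τ) * (a ^ 2 - ⟪φ (n-1), φ n⟫)) = a ^ 2 - ⟪φ (n-1), φ n⟫ by
        field_simp] at this
      linarith
    have hba : b * a ≤ (a ^ 2 + b ^ 2) / 2 := by nlinarith [sq_nonneg (a - b)]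
    have hca : c * a ≤ c ^ 2 / σ + σ * a ^ 2 / 4 := by
      rw [← sub_nonneg]
      have hrw : c ^ 2 / σ + σ * a ^ 2 / 4 - c * a = (2 * c - σ * a) ^ 2 / (4 * σ) := by
        field_simp; ring
      rw [hrw]; positivity
    have hτσ : 0 < τ * σ := mul_pos hτ0 hσ
    -- a² - ip ≥ (a² - b²)/2 ; combine
    have h5 : (a ^ 2 - b ^ 2) / 2 ≤ τ * (c ^ 2 / σ + σ * a ^ 2 / 4 - σ * a ^ 2) := by
      nlinarith [mul_le_mul_of_nonneg_left hca hτ0.le]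
    have : τ * (c ^ 2 / σ) = (2 * τ / σ) * c ^ 2 / 2 := by field_simp
    nlinarith [h5]
  have hστ : σ * τ ≤ 1 / 2 := by
    have h := mul_le_mul_of_nonneg_left hτ hσ.le
    have h2 : σ * (1 / (2 * σ)) = 1 / 2 := by field_simp
    linarith
  have hexp : Real.exp (σ * τ) ≤ 1 + (3/2) * (σ * τ) :=
    exp_aux7 (by positivity) hστ
  have hD : (0:ℝ) < 1 + (3/2) * (σ * τ) := by positivity
  have hED : 1 ≤ Real.exp (-(σ * τ)) * (1 + (3/2) * (σ * τ)) := by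
    rw [Real.exp_neg, ← div_eq_inv_mul, le_div_iff₀ (Real.exp_pos _), one_mul]
    exact hexp
  -- conclude
  have hK : 0 ≤ (2 * τ / σ) * c ^ 2 := by positivity
  have hD1 : (1:ℝ) ≤ 1 + (3/2) * (σ * τ) := by nlinarith
  have h6 : b ^ 2 ≤ Real.exp (-(σ * τ)) * (1 + (3/2) * (σ * τ)) * b ^ 2 :=
    le_mul_of_one_le_left (sq_nonneg b) hED
  have h7 : (2 * τ / σ) * c ^ 2 ≤ (1 + (3/2) * (σ * τ)) * ((2 * τ / σ) * c ^ 2) :=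
    le_mul_of_one_le_left hK hD1
  have h8 : (1 + (3/2) * (σ * τ)) * a ^ 2 ≤
      (1 + (3/2) * (σ * τ)) * (Real.exp (-(σ * τ)) * b ^ 2 + (2 * τ / σ) * c ^ 2) := by
    nlinarith
  exact le_of_mul_le_mul_left h8 hD

/-- Discrete energy estimate for the implicit Euler scheme with a coercive
bilinear form, for step sizes 0 < τ ≤ 1/(2σ). -/
theorem stmt_7
    {E : Type*} [NormedAddCommGroup E] [InnerProductSpace ℝ E] [FiniteDimensional ℝ E]
    (σ : ℝ) (hσ : 0 < σ) (B : E →ₗ[ℝ] E →ₗ[ℝ] ℝ) (hB : ∀ x : E, σ * ‖x‖ ^ 2 ≤ B x x)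
    (τ : ℝ) (hτ0 : 0 < τ) (hτ : τ ≤ 1 / (2 * σ))
    (φ : ℕ → E) (q : ℕ → E)
    (hscheme : ∀ n : ℕ, 1 ≤ n → ∀ ψ : E,
      (1 / τ) * ⟪φ n - φ (n - 1), ψ⟫ + B (φ n) ψ = ⟪q n, ψ⟫) :
    ∀ n : ℕ, ‖φ n‖ ^ 2 ≤ Real.exp (-σ * (n * τ)) * ‖φ 0‖ ^ 2 +
      (2 / σ) * ∑ k ∈ Finset.Icc 1 n, τ * Real.exp (-σ * (n * τ - k * τ)) * ‖q k‖ ^ 2 := by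
  intro n
  induction n with
  | zero => simp
  | succ n ih =>
    have hstep := step_aux7 σ hσ B hB τ hτ0 hτ φ q hscheme (n+1) (by omega)
    simp only [Nat.add_sub_cancel] at hstep
    have hexp : (0:ℝ) < Real.exp (-(σ * τ)) := Real.exp_pos _
    have hsum : Real.exp (-(σ * τ)) *
        ∑ k ∈ Finset.Icc 1 n, τ * Real.exp (-σ * (n * τ - k * τ)) * ‖q k‖ ^ 2 =
        ∑ k ∈ Finset.Icc 1 n, τ * Real.exp (-σ * (((n:ℝ)+1) * τ - k * τ)) * ‖q k‖ ^ 2 := by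
      rw [Finset.mul_sum]
      apply Finset.sum_congr rfl
      intro k _
      rw [show Real.exp (-(σ * τ)) * (τ * Real.exp (-σ * (n * τ - k * τ)) * ‖q k‖ ^ 2)
          = τ * (Real.exp (-(σ * τ)) * Real.exp (-σ * (n * τ - k * τ))) * ‖q k‖ ^ 2 by ring,
        ← Real.exp_add]
      ring_nf
    have hIcc : ∑ k ∈ Finset.Icc 1 (n+1), τ * Real.exp (-σ * ((↑(n+1):ℝ) * τ - k * τ)) * ‖q k‖ ^ 2
        = (∑ k ∈ Finset.Icc 1 n, τ * Real.exp (-σ * ((↑(n+1):ℝ) * τ - k * τ)) * ‖q k‖ ^ 2)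
          + τ * Real.exp (-σ * ((↑(n+1):ℝ) * τ - (↑(n+1):ℝ) * τ)) * ‖q (n+1)‖ ^ 2 := by
      rw [Finset.sum_Icc_succ_top (by omega : 1 ≤ n + 1)]
    have hE1 : Real.exp (-(σ * τ)) * Real.exp (-σ * ((n:ℝ) * τ)) =
        Real.exp (-σ * (((n:ℝ)+1) * τ)) := by
      rw [← Real.exp_add]; ring_nf
    have hlast : Real.exp (-σ * (((n:ℝ) + 1) * τ - ((n:ℝ) + 1) * τ)) = 1 := by
      rw [sub_self, mul_zero, Real.exp_zero]
    have ihs := mul_le_mul_of_nonneg_left ih hexp.le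
    push_cast at hIcc ⊢
    rw [hIcc, hlast, ← hE1, ← hsum]
    push_cast at hstep
    set e := Real.exp (-(σ * τ)) with he
    set S := ∑ k ∈ Finset.Icc 1 n, τ * Real.exp (-σ * ((n:ℝ) * τ - (k:ℝ) * τ)) * ‖q k‖ ^ 2 with hS
    have hfrac : 2 * τ / σ = 2 / σ * (τ * 1) := by ring
    rw [hfrac] at hstep
    have hdistr : e * (Real.exp (-σ * ((n:ℝ) * τ)) * ‖φ 0‖ ^ 2 + 2 / σ * S)
        = e * Real.exp (-σ * ((n:ℝ) * τ)) * ‖φ 0‖ ^ 2 + 2 / σ * (e * S) := by ring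
    rw [hdistr] at ihs
    have hgoal : e * Real.exp (-σ * ((n:ℝ) * τ)) * ‖φ 0‖ ^ 2 + 2 / σ * (e * S + τ * 1 * ‖q (n+1)‖ ^ 2)
        = (e * Real.exp (-σ * ((n:ℝ) * τ)) * ‖φ 0‖ ^ 2 + 2 / σ * (e * S)) + 2 / σ * (τ * 1) * ‖q (n+1)‖ ^ 2 := by
      ring
    push_cast at hgoal
    rw [hgoal]
    linarith [ihs, hstep]
end

section
/- Let S² = {s ∈ ℝ³ : |s| = 1} with its standard surface measure dσ. Let k : ℝ³ × [−1,1] → ℝ and σ_t : ℝ³ → ℝ be measurable, set σ_s(r) = ∫_{S²} k(r, s·s') dσ(s') (which is independent of s) and σ_a = σ_t − σ_s, and assume there are constants 0 ≤ k̄ and 0 < σ̲_a ≤ σ̄_a with 0 ≤ k(r,μ) ≤ k̄ for all r, μ and σ̲_a ≤ σ_a(r) ≤ σ̄_a for all r. Let T > 0, let K ⊆ ℝ³ be compact, and let q : [0,T] × ℝ³ × S² → ℝ be continuous and vanish whenever r ∉ K. Suppose φ : [0,T] × ℝ³ × S² → ℝ is continuous, vanishes whenever r ∉ K, has continuous partial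 derivatives ∂_t φ and ∇_r φ, and satisfies the radiative transfer equation ∂_t φ(t,r,s) + s·∇_r φ(t,r,s) + σ_t(r) φ(t,r,s) = ∫_{S²} k(r, s·s') φ(t,r,s') dσ(s') + q(t,r,s) for all (t,r,s). Then for all t ∈ [0,T]: ∫_{ℝ³×S²} |φ(t,r,s)|² dr dσ(s) ≤ e^{−σ̲_a t} ∫_{ℝ³×S²} |φ(0,r,s)|² dr dσ(s) + (1/σ̲_a) ∫₀ᵗ e^{−σ̲_a (t−t')} ∫_{ℝ³×S²} |q(t',r,s)|² dr dσ(s) dt'. -/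
open MeasureTheory
set_option maxHeartbeats 1000000
open scoped RealInnerProductSpace

noncomputable abbrev E3 : Type := EuclideanSpace ℝ (Fin 3)
abbrev Sph : Type := Metric.sphere (0 : E3) 1

/-- The standard surface measure on the unit sphere S² ⊂ ℝ³. -/
noncomputable def sphMeasure : Measure Sph := (volume : Measure E3).toSphere

instance : IsFiniteMeasure sphMeasure := by unfold sphMeasure; infer_instance
instance : Nonempty Sph := (NormedSpace.sphere_nonempty.mpr zero_le_one).to_subtype

namespace RTEAux

open Set Function

noncomputable abbrev μΩ : Measure (E3 × Sph) := (volume : Measure E3).prod sphMeasure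

lemma inner_mem_Icc (s s' : Sph) : ⟪(s : E3), (s' : E3)⟫ ∈ Set.Icc (-1:ℝ) 1 := by
  have h := abs_real_inner_le_norm (s : E3) (s' : E3)
  rw [norm_eq_of_mem_sphere s, norm_eq_of_mem_sphere s'] at h
  have := abs_le.1 (by simpa using h)
  exact ⟨this.1, this.2⟩

lemma indK_int {K : Set E3} (hK : IsCompact K) (M : ℝ) :
    Integrable ((K ×ˢ (univ : Set Sph)).indicator fun _ => M) μΩ := by
  have hKm : MeasurableSet (K ×ˢ (univ : Set Sph)) :=
    (hK.isClosed.measurableSet).prod MeasurableSet.univ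
  have hfin : μΩ (K ×ˢ (univ : Set Sph)) < ⊤ := by
    rw [Measure.prod_prod]
    exact ENNReal.mul_lt_top hK.measure_lt_top (measure_lt_top _ _)
  rw [integrable_indicator_iff hKm]
  exact integrableOn_const hfin.ne

/-- Integrability of a bounded measurable function supported (in the space variable) in a
compact set. -/
lemma integrable_of_bound {K : Set E3} (hK : IsCompact K) (f : E3 × Sph → ℝ) (M : ℝ)
    (hmeas : AEStronglyMeasurable f μΩ) (hbd : ∀ p, |f p| ≤ M)
    (hsupp : ∀ p : E3 × Sph, p.1 ∉ K → f p = 0) : Integrable f μΩ := by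
  refine (indK_int hK M).mono' hmeas ?_
  filter_upwards with p
  by_cases hp : p.1 ∈ K
  · have : p ∈ K ×ˢ (univ : Set Sph) := ⟨hp, trivial⟩
    rw [indicator_of_mem this]
    simpa using hbd p
  · have : p ∉ K ×ˢ (univ : Set Sph) := fun h => hp h.1
    rw [indicator_of_notMem this, hsupp p hp]
    simp

lemma slice_cont {X : Type*} [TopologicalSpace X] {T : ℝ} {f : ℝ × E3 × Sph → X}
    (hf : ContinuousOn f (Icc 0 T ×ˢ univ)) {t : ℝ} (ht : t ∈ Icc 0 T) :
    Continuous fun p : E3 × Sph => f (t, p.1, p.2) := by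
  have : Continuous fun p : E3 × Sph => ((t, p.1, p.2) : ℝ × E3 × Sph) := by fun_prop
  exact hf.comp_continuous this fun p => ⟨ht, trivial⟩

lemma time_cont {X : Type*} [TopologicalSpace X] {T : ℝ} {f : ℝ × E3 × Sph → X}
    (hf : ContinuousOn f (Icc 0 T ×ˢ univ)) (r : E3) (s : Sph) :
    ContinuousOn (fun t : ℝ => f (t, r, s)) (Icc 0 T) := by
  have h : ContinuousOn (fun t : ℝ => ((t, r, s) : ℝ × E3 × Sph)) (Icc 0 T) := by fun_prop
  exact hf.comp h fun t ht => ⟨ht, trivial⟩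

/-- uniform bound on `[0,T] × K` for a continuous function vanishing off `K`. -/
lemma glob_bound {X : Type*} [NormedAddCommGroup X] {T : ℝ} {K : Set E3} (hK : IsCompact K)
    {f : ℝ × E3 × Sph → X}
    (hf : ContinuousOn f (Icc 0 T ×ˢ univ))
    (hsupp : ∀ t ∈ Icc 0 T, ∀ (r : E3) (s : Sph), r ∉ K → f (t, r, s) = 0) :
    ∃ M : ℝ, 0 ≤ M ∧ ∀ t ∈ Icc 0 T, ∀ (r : E3) (s : Sph), ‖f (t, r, s)‖ ≤ M := by
  have hS : IsCompact ((Icc 0 T : Set ℝ) ×ˢ (K ×ˢ (univ : Set Sph))) :=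
    isCompact_Icc.prod (hK.prod isCompact_univ)
  obtain ⟨C, hC⟩ := hS.exists_bound_of_continuousOn (hf.mono (by
    intro p hp; exact ⟨hp.1, trivial⟩))
  refine ⟨max C 0, le_max_right _ _, ?_⟩
  intro t ht r s
  by_cases hr : r ∈ K
  · exact (hC (t, r, s) ⟨ht, hr, trivial⟩).trans (le_max_left _ _)
  · rw [hsupp t ht r s hr]; simp

lemma grad_zero_off {K : Set E3} (hK : IsCompact K) {f : E3 → ℝ} {G : E3 → E3}
    (hsupp : ∀ r ∉ K, f r = 0) (hgrad : ∀ r, HasGradientAt f (G r) r) :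
    ∀ r ∉ K, G r = 0 := by
  intro r hr
  have hopen : Kᶜ ∈ nhds r := hK.isClosed.isOpen_compl.mem_nhds hr
  have hzero : f =ᶠ[nhds r] fun _ => (0 : ℝ) :=
    Filter.eventually_of_mem hopen fun x hx => hsupp x hx
  have h0 : HasFDerivAt f (0 : E3 →L[ℝ] ℝ) r :=
    (hasFDerivAt_const (0 : ℝ) r).congr_of_eventuallyEq hzero
  have h0' : HasGradientAt f (0 : E3) r := by
    rw [hasGradientAt_iff_hasFDerivAt, map_zero]; exact h0
  exact (hgrad r).unique h0'

lemma transport_zero {K : Set E3} (hK : IsCompact K) (f : E3 → ℝ) (G : E3 → E3) (v : E3)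
    (hf_cont : Continuous f) (hG_cont : Continuous G)
    (hsupp : ∀ r ∉ K, f r = 0)
    (hgrad : ∀ r, HasGradientAt f (G r) r) :
    ∫ r : E3, f r * ⟪v, G r⟫ = 0 := by
  have hG0 := grad_zero_off hK hsupp hgrad
  have hint : ∀ g : E3 → ℝ, Continuous g → (∀ r ∉ K, g r = 0) →
      Integrable g (volume : Measure E3) := by
    intro g hg hgs
    exact hg.integrable_of_hasCompactSupport
      (HasCompactSupport.intro hK fun x hx => hgs x hx)
  have hcont1 : Continuous fun r => (⟪G r, v⟫ : ℝ) := hG_cont.inner continuous_const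
  have h1 : Integrable (fun r => f r * ⟪G r, v⟫) (volume : Measure E3) :=
    hint _ (hf_cont.mul hcont1) (fun r hr => by rw [hsupp r hr, zero_mul])
  have h2 : Integrable (fun r => (⟪G r, v⟫ : ℝ) * f r) (volume : Measure E3) :=
    hint _ (hcont1.mul hf_cont) (fun r hr => by rw [hsupp r hr, mul_zero])
  have h3 : Integrable (fun r => f r * f r) (volume : Measure E3) :=
    hint _ (hf_cont.mul hf_cont) (fun r hr => by rw [hsupp r hr, zero_mul])
  have key := integral_bilinear_hasFDerivAt_right_eq_neg_left_of_integrable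
      (μ := (volume : Measure E3))
      (f := f) (g := f)
      (f' := fun r => (InnerProductSpace.toDual ℝ E3) (G r))
      (g' := fun r => (InnerProductSpace.toDual ℝ E3) (G r))
      (v := v) (B := ContinuousLinearMap.mul ℝ ℝ)
      (by simpa only [ContinuousLinearMap.mul_apply', InnerProductSpace.toDual_apply_apply] using h2)
      (by simpa only [ContinuousLinearMap.mul_apply', InnerProductSpace.toDual_apply_apply] using h1)
      (by simpa only [ContinuousLinearMap.mul_apply'] using h3)
      (fun r _ => (hgrad r).hasFDerivAt) (fun r _ => (hgrad r).hasFDerivAt)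
  simp only [ContinuousLinearMap.mul_apply', InnerProductSpace.toDual_apply_apply] at key
  have hz : ∫ r : E3, f r * ⟪G r, v⟫ = 0 := by
    have hcomm : ∫ r : E3, ⟪G r, v⟫ * f r = ∫ r : E3, f r * ⟪G r, v⟫ := by
      congr 1; ext r; ring
    rw [hcomm] at key; linarith
  calc ∫ r : E3, f r * ⟪v, G r⟫ = ∫ r : E3, f r * ⟪G r, v⟫ := by
        congr 1; ext r; rw [real_inner_comm]
    _ = 0 := hz

lemma intP {α : Type*} [MeasurableSpace α] {P : Measure α} [IsFiniteMeasure P]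
    (f : α → ℝ) (C : ℝ) (hmeas : AEStronglyMeasurable f P) (hbd : ∀ p, |f p| ≤ C) :
    Integrable f P :=
  (integrable_const C).mono' hmeas (Filter.Eventually.of_forall fun p => by
    simpa [Real.norm_eq_abs] using hbd p)

lemma scatter (κ : Sph → Sph → ℝ) (u : Sph → ℝ) (σ : ℝ) (kb : ℝ)
    (hκ_meas : Measurable (uncurry κ))
    (hκ0 : ∀ s s', 0 ≤ κ s s') (hκb : ∀ s s', κ s s' ≤ kb)
    (hσ₁ : ∀ s : Sph, (∫ s', κ s s' ∂sphMeasure) = σ)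
    (hσ₂ : ∀ s' : Sph, (∫ s, κ s s' ∂sphMeasure) = σ)
    (hu : Continuous u) :
    ∫ s, u s * ∫ s', κ s s' * u s' ∂sphMeasure ∂sphMeasure ≤
      σ * ∫ s, (u s)^2 ∂sphMeasure := by
  set ν := sphMeasure
  obtain ⟨Mu, hMu⟩ : ∃ M : ℝ, ∀ s : Sph, |u s| ≤ M := by
    obtain ⟨C, hC⟩ := isCompact_univ.exists_bound_of_continuousOn hu.continuousOn
    exact ⟨C, fun s => by simpa [Real.norm_eq_abs] using hC s trivial⟩
  have huMu : ∀ s : Sph, (u s)^2 ≤ Mu^2 := fun s => by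
    have h1 : (u s)^2 = |u s|^2 := (sq_abs _).symm
    rw [h1]; exact pow_le_pow_left₀ (abs_nonneg _) (hMu s) 2
  have hu_meas : Measurable u := hu.measurable
  have hκm : Measurable fun p : Sph × Sph => κ p.1 p.2 := hκ_meas
  have m1 : AEStronglyMeasurable (fun p : Sph × Sph => κ p.1 p.2 * u p.1 * u p.2) (ν.prod ν) :=
    ((hκm.mul (hu_meas.comp measurable_fst)).mul
      (hu_meas.comp measurable_snd)).aestronglyMeasurable
  have m2 : AEStronglyMeasurable (fun p : Sph × Sph => (1/2) * κ p.1 p.2 * (u p.1)^2)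
      (ν.prod ν) :=
    ((measurable_const.mul hκm).mul
      ((hu_meas.comp measurable_fst).pow_const 2)).aestronglyMeasurable
  have m3 : AEStronglyMeasurable (fun p : Sph × Sph => (1/2) * κ p.1 p.2 * (u p.2)^2)
      (ν.prod ν) :=
    ((measurable_const.mul hκm).mul
      ((hu_meas.comp measurable_snd).pow_const 2)).aestronglyMeasurable
  have hMu0 : 0 ≤ Mu := (abs_nonneg _).trans (hMu (Classical.arbitrary Sph))
  have i1 : Integrable (fun p : Sph × Sph => κ p.1 p.2 * u p.1 * u p.2) (ν.prod ν) := by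
    refine intP _ (kb * Mu * Mu) m1 fun p => ?_
    have h0 := hκ0 p.1 p.2; have hb := hκb p.1 p.2
    have hkb0 : 0 ≤ kb := h0.trans hb
    rw [abs_mul, abs_mul, abs_of_nonneg h0]
    exact mul_le_mul (mul_le_mul hb (hMu p.1) (abs_nonneg _) hkb0) (hMu p.2) (abs_nonneg _)
      (mul_nonneg hkb0 hMu0)
  have i2 : Integrable (fun p : Sph × Sph => (1/2) * κ p.1 p.2 * (u p.1)^2) (ν.prod ν) := by
    refine intP _ ((1/2) * kb * Mu^2) m2 fun p => ?_
    have h0 := hκ0 p.1 p.2; have hb := hκb p.1 p.2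
    have hkb0 : 0 ≤ kb := h0.trans hb
    rw [abs_mul, abs_mul, abs_of_nonneg h0, abs_of_nonneg (sq_nonneg (u p.1)),
      (by norm_num : |(1:ℝ)/2| = 1/2)]
    nlinarith [mul_le_mul hb (huMu p.1) (sq_nonneg (u p.1)) hkb0]
  have i3 : Integrable (fun p : Sph × Sph => (1/2) * κ p.1 p.2 * (u p.2)^2) (ν.prod ν) := by
    refine intP _ ((1/2) * kb * Mu^2) m3 fun p => ?_
    have h0 := hκ0 p.1 p.2; have hb := hκb p.1 p.2
    have hkb0 : 0 ≤ kb := h0.trans hb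
    rw [abs_mul, abs_mul, abs_of_nonneg h0, abs_of_nonneg (sq_nonneg (u p.2)),
      (by norm_num : |(1:ℝ)/2| = 1/2)]
    nlinarith [mul_le_mul hb (huMu p.2) (sq_nonneg (u p.2)) hkb0]
  have e1 : ∫ s, u s * ∫ s', κ s s' * u s' ∂ν ∂ν =
      ∫ p : Sph × Sph, κ p.1 p.2 * u p.1 * u p.2 ∂(ν.prod ν) := by
    rw [integral_prod _ i1]
    congr 1; ext s
    rw [← integral_const_mul]
    congr 1; ext s'; ring
  have hpt : ∀ p : Sph × Sph, κ p.1 p.2 * u p.1 * u p.2 ≤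
      (1/2) * κ p.1 p.2 * (u p.1)^2 + (1/2) * κ p.1 p.2 * (u p.2)^2 := by
    intro p; nlinarith [hκ0 p.1 p.2, sq_nonneg (u p.1 - u p.2)]
  have e2 : ∫ p : Sph × Sph, (1/2) * κ p.1 p.2 * (u p.1)^2 ∂(ν.prod ν) =
      (σ/2) * ∫ s, (u s)^2 ∂ν := by
    rw [integral_prod _ i2]
    have h : ∀ s : Sph, (∫ s', (1/2) * κ s s' * (u s)^2 ∂ν) = (σ/2) * (u s)^2 := by
      intro s
      have h2 : (fun s' => (1/2) * κ s s' * (u s)^2) = fun s' => ((1/2) * (u s)^2) * κ s s' := by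
        ext s'; ring
      rw [h2, integral_const_mul, hσ₁ s]; ring
    rw [funext h, integral_const_mul]
  have e3 : ∫ p : Sph × Sph, (1/2) * κ p.1 p.2 * (u p.2)^2 ∂(ν.prod ν) =
      (σ/2) * ∫ s, (u s)^2 ∂ν := by
    rw [integral_prod_symm _ i3]
    have h : ∀ s' : Sph, (∫ s, (1/2) * κ s s' * (u s')^2 ∂ν) = (σ/2) * (u s')^2 := by
      intro s'
      have h2 : (fun s => (1/2) * κ s s' * (u s')^2) = fun s => ((1/2) * (u s')^2) * κ s s' := by
        ext s; ring
      rw [h2, integral_const_mul, hσ₂ s']; ring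
    rw [funext h, integral_const_mul]
  calc ∫ s, u s * ∫ s', κ s s' * u s' ∂ν ∂ν
      = ∫ p : Sph × Sph, κ p.1 p.2 * u p.1 * u p.2 ∂(ν.prod ν) := e1
    _ ≤ ∫ p : Sph × Sph, ((1/2) * κ p.1 p.2 * (u p.1)^2 + (1/2) * κ p.1 p.2 * (u p.2)^2)
          ∂(ν.prod ν) := integral_mono i1 (i2.add i3) hpt
    _ = (σ/2) * ∫ s, (u s)^2 ∂ν + (σ/2) * ∫ s, (u s)^2 ∂ν := by
        rw [integral_add i2 i3, e2, e3]
    _ = σ * ∫ s, (u s)^2 ∂ν := by ring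

end RTEAux
/-- Energy estimate for the time-dependent mono-energetic radiative transfer
equation ∂ₜφ + s·∇ᵣφ + σₜφ = ∫ k(r,s·s')φ(·,s')dσ(s') + q, with absorption
coefficient σₐ = σₜ - σₛ bounded below by σ̲ₐ > 0 and compactly supported data. -/
theorem stmt_8
    (k : E3 → ℝ → ℝ) (σt : E3 → ℝ)
    (hk_meas : Measurable (Function.uncurry k)) (hσt_meas : Measurable σt)
    (σs σa : E3 → ℝ)
    (hσs : ∀ (r : E3) (s : Sph), σs r = ∫ s' : Sph, k r ⟪(s : E3), (s' : E3)⟫ ∂sphMeasure)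
    (hσa : ∀ r : E3, σa r = σt r - σs r)
    (kbar σalo σahi : ℝ) (hkbar : 0 ≤ kbar)
    (hk : ∀ r : E3, ∀ μ ∈ Set.Icc (-1 : ℝ) 1, 0 ≤ k r μ ∧ k r μ ≤ kbar)
    (hσa0 : 0 < σalo) (hσaa : σalo ≤ σahi) (hσab : ∀ r : E3, σalo ≤ σa r ∧ σa r ≤ σahi)
    (T : ℝ) (hT : 0 < T) (K : Set E3) (hK : IsCompact K)
    (q : ℝ → E3 → Sph → ℝ)
    (hq_cont : ContinuousOn (fun p : ℝ × E3 × Sph => q p.1 p.2.1 p.2.2)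
      (Set.Icc 0 T ×ˢ Set.univ))
    (hq_supp : ∀ (t : ℝ) (r : E3) (s : Sph), r ∉ K → q t r s = 0)
    (φ φt : ℝ → E3 → Sph → ℝ) (φr : ℝ → E3 → Sph → E3)
    (hφ_cont : ContinuousOn (fun p : ℝ × E3 × Sph => φ p.1 p.2.1 p.2.2)
      (Set.Icc 0 T ×ˢ Set.univ))
    (hφt_cont : ContinuousOn (fun p : ℝ × E3 × Sph => φt p.1 p.2.1 p.2.2)
      (Set.Icc 0 T ×ˢ Set.univ))
    (hφr_cont : ContinuousOn (fun p : ℝ × E3 × Sph => φr p.1 p.2.1 p.2.2)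
      (Set.Icc 0 T ×ˢ Set.univ))
    (hφ_supp : ∀ (t : ℝ) (r : E3) (s : Sph), r ∉ K → φ t r s = 0)
    (hφt : ∀ (r : E3) (s : Sph), ∀ t ∈ Set.Icc 0 T,
      HasDerivWithinAt (fun t' => φ t' r s) (φt t r s) (Set.Icc 0 T) t)
    (hφr : ∀ t ∈ Set.Icc 0 T, ∀ (r : E3) (s : Sph),
      HasGradientAt (fun r' => φ t r' s) (φr t r s) r)
    (heq : ∀ t ∈ Set.Icc 0 T, ∀ (r : E3) (s : Sph),
      φt t r s + ⟪(s : E3), φr t r s⟫ + σt r * φ t r s =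
        (∫ s' : Sph, k r ⟪(s : E3), (s' : E3)⟫ * φ t r s' ∂sphMeasure) + q t r s) :
    ∀ t ∈ Set.Icc 0 T,
      (∫ p : E3 × Sph, (φ t p.1 p.2) ^ 2 ∂((volume : Measure E3).prod sphMeasure)) ≤
        Real.exp (-σalo * t) *
            (∫ p : E3 × Sph, (φ 0 p.1 p.2) ^ 2 ∂((volume : Measure E3).prod sphMeasure)) +
          (1 / σalo) * ∫ t' in (0 : ℝ)..t, Real.exp (-σalo * (t - t')) *
            ∫ p : E3 × Sph, (q t' p.1 p.2) ^ 2 ∂((volume : Measure E3).prod sphMeasure) := by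
  classical
  open Set RTEAux in
  set μP : Measure (E3 × Sph) := (volume : Measure E3).prod sphMeasure with hμP
  set mS : ℝ := (sphMeasure Set.univ).toReal with hmSdef
  have hmS0 : 0 ≤ mS := ENNReal.toReal_nonneg
  -- kernel pointwise bounds
  have hk0 : ∀ (r : E3) (s s' : Sph), 0 ≤ k r ⟪(s:E3),(s':E3)⟫ :=
    fun r s s' => (hk r _ (RTEAux.inner_mem_Icc s s')).1
  have hk1 : ∀ (r : E3) (s s' : Sph), k r ⟪(s:E3),(s':E3)⟫ ≤ kbar :=
    fun r s s' => (hk r _ (RTEAux.inner_mem_Icc s s')).2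
  have hinner_cont : Continuous fun p : Sph × Sph => (⟪(p.1:E3),(p.2:E3)⟫ : ℝ) :=
    (continuous_subtype_val.comp continuous_fst).inner
      (continuous_subtype_val.comp continuous_snd)
  -- the kernel as a function of (s, s') is measurable, for each fixed r
  have hκ_meas : ∀ r : E3,
      Measurable (Function.uncurry fun s s' : Sph => k r ⟪(s:E3),(s':E3)⟫) := by
    intro r
    exact hk_meas.comp (measurable_const.prodMk hinner_cont.measurable)
  obtain ⟨s₀⟩ : Nonempty Sph := inferInstance
  have hkernel_int : ∀ (r : E3) (s : Sph),
      Integrable (fun s' : Sph => k r ⟪(s:E3),(s':E3)⟫) sphMeasure := by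
    intro r s
    refine RTEAux.intP _ kbar ?_ ?_
    · exact (hk_meas.comp (measurable_const.prodMk
        ((continuous_const.inner continuous_subtype_val).measurable))).aestronglyMeasurable
    · intro s'; rw [abs_of_nonneg (hk0 r s s')]; exact hk1 r s s'
  have hσs_nn : ∀ r, 0 ≤ σs r := fun r => by
    rw [hσs r s₀]; exact integral_nonneg fun s' => hk0 r s₀ s'
  have hσs_ub : ∀ r, σs r ≤ kbar * mS := by
    intro r
    rw [hσs r s₀]
    calc ∫ s', k r ⟪(s₀:E3),(s':E3)⟫ ∂sphMeasure
        ≤ ∫ _s' : Sph, kbar ∂sphMeasure :=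
          integral_mono (hkernel_int r s₀) (integrable_const _) fun s' => hk1 r s₀ s'
      _ = kbar * mS := by rw [integral_const, smul_eq_mul, mul_comm]; rfl
  have hσs_meas : Measurable σs := by
    have hfun : σs = fun r => ∫ s' : Sph, k r ⟪(s₀:E3),(s':E3)⟫ ∂sphMeasure :=
      funext fun r => hσs r s₀
    rw [hfun]
    have hm : Measurable (Function.uncurry fun (r : E3) (s' : Sph) => k r ⟪(s₀:E3),(s':E3)⟫) := by
      refine hk_meas.comp (measurable_fst.prodMk ?_)
      exact ((continuous_const.inner
        (continuous_subtype_val.comp continuous_snd)).measurable :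
          Measurable fun x : E3 × Sph => (⟪(s₀:E3),((x.2 : Sph) :E3)⟫ : ℝ))
    exact hm.stronglyMeasurable.integral_prod_right.measurable
  have hσa_meas : Measurable σa := by
    have : σa = fun r => σt r - σs r := funext hσa
    rw [this]; exact hσt_meas.sub hσs_meas
  -- bound for σt
  set Cσ : ℝ := σahi + kbar * mS with hCσdef
  have hσt_bd : ∀ r, |σt r| ≤ Cσ := by
    intro r
    have h1 := (hσab r).1; have h2 := (hσab r).2
    have h3 := hσs_nn r; have h4 := hσs_ub r
    have h5 := hσa r
    rw [abs_le]; constructor <;> nlinarith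
  have hσa_bd : ∀ r, |σa r| ≤ σahi := by
    intro r
    have h1 := (hσab r).1; have h2 := (hσab r).2
    rw [abs_le]; constructor <;> nlinarith
  -- global sup bounds
  obtain ⟨Mφ, hMφ0, hMφ⟩ :=
    RTEAux.glob_bound hK hφ_cont fun t' _ r s hr => hφ_supp t' r s hr
  have hφt_supp : ∀ t' ∈ Icc 0 T, ∀ (r : E3) (s : Sph), r ∉ K → φt t' r s = 0 := by
    intro t' ht' r s hr
    have h1 := hφt r s t' ht'
    have hz : (fun t'' => φ t'' r s) = fun _ => (0:ℝ) :=
      funext fun t'' => hφ_supp t'' r s hr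
    rw [hz] at h1
    have h2 : HasDerivWithinAt (fun _ : ℝ => (0:ℝ)) 0 (Icc 0 T) t' :=
      hasDerivWithinAt_const _ _ _
    exact (uniqueDiffOn_Icc hT t' ht').eq_deriv _ h1 h2
  obtain ⟨Mφt, hMφt0, hMφt⟩ := RTEAux.glob_bound hK hφt_cont hφt_supp
  have hφr_supp : ∀ t' ∈ Icc 0 T, ∀ (r : E3) (s : Sph), r ∉ K → φr t' r s = 0 := by
    intro t' ht' r s hr
    exact RTEAux.grad_zero_off hK (f := fun r' => φ t' r' s)
      (fun r' hr' => hφ_supp t' r' s hr') (fun r' => hφr t' ht' r' s) r hr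
  obtain ⟨Mφr, hMφr0, hMφr⟩ := RTEAux.glob_bound hK hφr_cont hφr_supp
  obtain ⟨Mq, hMq0, hMq⟩ :=
    RTEAux.glob_bound hK hq_cont fun t' _ r s hr => hq_supp t' r s hr
  -- slice continuity
  have cφ : ∀ τ ∈ Icc 0 T, Continuous fun p : E3 × Sph => φ τ p.1 p.2 :=
    fun τ hτ => RTEAux.slice_cont hφ_cont hτ
  have cφt : ∀ τ ∈ Icc 0 T, Continuous fun p : E3 × Sph => φt τ p.1 p.2 :=
    fun τ hτ => RTEAux.slice_cont hφt_cont hτ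
  have cφr : ∀ τ ∈ Icc 0 T, Continuous fun p : E3 × Sph => φr τ p.1 p.2 :=
    fun τ hτ => RTEAux.slice_cont hφr_cont hτ
  have cq : ∀ τ ∈ Icc 0 T, Continuous fun p : E3 × Sph => q τ p.1 p.2 :=
    fun τ hτ => RTEAux.slice_cont hq_cont hτ
  have sq_le : ∀ {x M : ℝ}, |x| ≤ M → x^2 ≤ M^2 := by
    intro x M h; nlinarith [abs_nonneg x, sq_abs x]
  -- basic integrabilities at fixed time
  have int_sq : ∀ τ ∈ Icc 0 T, Integrable (fun p : E3 × Sph => (φ τ p.1 p.2)^2) μP := by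
    intro τ hτ
    refine RTEAux.integrable_of_bound hK _ (Mφ^2) ((cφ τ hτ).pow 2).aestronglyMeasurable ?_ ?_
    · intro p
      rw [abs_of_nonneg (sq_nonneg _)]
      exact sq_le (by simpa [Real.norm_eq_abs] using hMφ τ hτ p.1 p.2)
    · intro p hp; rw [hφ_supp τ p.1 p.2 hp]; ring
  have int_q2 : ∀ τ ∈ Icc 0 T, Integrable (fun p : E3 × Sph => (q τ p.1 p.2)^2) μP := by
    intro τ hτ
    refine RTEAux.integrable_of_bound hK _ (Mq^2) ((cq τ hτ).pow 2).aestronglyMeasurable ?_ ?_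
    · intro p
      rw [abs_of_nonneg (sq_nonneg _)]
      exact sq_le (by simpa [Real.norm_eq_abs] using hMq τ hτ p.1 p.2)
    · intro p hp; rw [hq_supp τ p.1 p.2 hp]; ring
  have int_2ab : ∀ τ ∈ Icc 0 T,
      Integrable (fun p : E3 × Sph => 2 * φ τ p.1 p.2 * φt τ p.1 p.2) μP := by
    intro τ hτ
    refine RTEAux.integrable_of_bound hK _ (2 * Mφ * Mφt)
      ((continuous_const.mul (cφ τ hτ)).mul (cφt τ hτ)).aestronglyMeasurable ?_ ?_
    · intro p
      have h1 : |φ τ p.1 p.2| ≤ Mφ := by simpa [Real.norm_eq_abs] using hMφ τ hτ p.1 p.2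
      have h2 : |φt τ p.1 p.2| ≤ Mφt := by simpa [Real.norm_eq_abs] using hMφt τ hτ p.1 p.2
      rw [abs_mul, abs_mul, abs_two]
      nlinarith [abs_nonneg (φ τ p.1 p.2), abs_nonneg (φt τ p.1 p.2)]
    · intro p hp; rw [hφ_supp τ p.1 p.2 hp]; ring
  -- THE KEY DIFFERENTIAL INEQUALITY
  have key : ∀ τ ∈ Icc 0 T,
      (∫ p : E3 × Sph, 2 * φ τ p.1 p.2 * φt τ p.1 p.2 ∂μP) ≤
        -σalo * (∫ p : E3 × Sph, (φ τ p.1 p.2)^2 ∂μP) +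
          (1/σalo) * ∫ p : E3 × Sph, (q τ p.1 p.2)^2 ∂μP := by
    intro τ hτ
    set Kph : E3 × Sph → ℝ :=
      fun p => ∫ s' : Sph, k p.1 ⟪(p.2:E3),(s':E3)⟫ * φ τ p.1 s' ∂sphMeasure with hKphdef
    have haMφ : ∀ p : E3 × Sph, |φ τ p.1 p.2| ≤ Mφ := fun p => by
      simpa [Real.norm_eq_abs] using hMφ τ hτ p.1 p.2
    have haMq : ∀ p : E3 × Sph, |q τ p.1 p.2| ≤ Mq := fun p => by
      simpa [Real.norm_eq_abs] using hMq τ hτ p.1 p.2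
    have haMφr : ∀ p : E3 × Sph, ‖φr τ p.1 p.2‖ ≤ Mφr := fun p => hMφr τ hτ p.1 p.2
    -- integrability of all the pieces
    have I1 : Integrable (fun p : E3 × Sph => φ τ p.1 p.2 * ⟪(p.2:E3), φr τ p.1 p.2⟫) μP := by
      refine RTEAux.integrable_of_bound hK _ (Mφ * Mφr)
        ((cφ τ hτ).mul ((continuous_subtype_val.comp continuous_snd).inner
          (cφr τ hτ))).aestronglyMeasurable ?_ ?_
      · intro p
        rw [abs_mul]
        have h1 : |(⟪(p.2:E3), φr τ p.1 p.2⟫ : ℝ)| ≤ Mφr := by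
          have h2 := abs_real_inner_le_norm ((p.2:Sph) : E3) (φr τ p.1 p.2)
          rw [norm_eq_of_mem_sphere p.2, one_mul] at h2
          exact h2.trans (haMφr p)
        exact mul_le_mul (haMφ p) h1 (abs_nonneg _) hMφ0
      · intro p hp; rw [hφ_supp τ p.1 p.2 hp, zero_mul]
    have KphSM : AEStronglyMeasurable Kph μP := by
      have hmeasK : Measurable fun x : (E3 × Sph) × Sph =>
          k x.1.1 ⟪(x.1.2:E3),(x.2:E3)⟫ * φ τ x.1.1 x.2 := by
        refine Measurable.mul ?_ ?_
        · refine hk_meas.comp ((measurable_fst.comp measurable_fst).prodMk ?_)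
          exact hinner_cont.measurable.comp
            ((measurable_snd.comp measurable_fst).prodMk measurable_snd)
        · exact (cφ τ hτ).measurable.comp
            ((measurable_fst.comp measurable_fst).prodMk measurable_snd)
      exact (hmeasK.stronglyMeasurable.integral_prod_right').aestronglyMeasurable
    have Kph_bd : ∀ p : E3 × Sph, |Kph p| ≤ kbar * Mφ * mS := by
      intro p
      rw [← Real.norm_eq_abs]
      have h := norm_integral_le_of_norm_le_const (μ := sphMeasure)
        (f := fun s' : Sph => k p.1 ⟪(p.2:E3),(s':E3)⟫ * φ τ p.1 s') (C := kbar * Mφ) ?_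
      · calc ‖Kph p‖ ≤ (kbar * Mφ) * mS := h
          _ = kbar * Mφ * mS := by ring
      · filter_upwards with s'
        rw [Real.norm_eq_abs, abs_mul, abs_of_nonneg (hk0 p.1 p.2 s')]
        have h1 : |φ τ p.1 s'| ≤ Mφ := by
          simpa [Real.norm_eq_abs] using hMφ τ hτ p.1 s'
        exact mul_le_mul (hk1 p.1 p.2 s') h1 (abs_nonneg _) hkbar
    have I3 : Integrable (fun p : E3 × Sph => φ τ p.1 p.2 * Kph p) μP := by
      refine RTEAux.integrable_of_bound hK _ (Mφ * (kbar * Mφ * mS))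
        ((cφ τ hτ).aestronglyMeasurable.mul KphSM) ?_ ?_
      · intro p
        rw [abs_mul]
        exact mul_le_mul (haMφ p) (Kph_bd p) (abs_nonneg _) hMφ0
      · intro p hp; rw [hφ_supp τ p.1 p.2 hp, zero_mul]
    have I2 : Integrable (fun p : E3 × Sph => σt p.1 * (φ τ p.1 p.2)^2) μP := by
      refine RTEAux.integrable_of_bound hK _ (Cσ * Mφ^2)
        ((hσt_meas.comp measurable_fst).aestronglyMeasurable.mul
          ((cφ τ hτ).pow 2).aestronglyMeasurable) ?_ ?_
      · intro p
        rw [abs_mul, abs_of_nonneg (sq_nonneg (φ τ p.1 p.2))]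
        have h1 : (φ τ p.1 p.2)^2 ≤ Mφ^2 := sq_le (haMφ p)
        have h2 : (0:ℝ) ≤ Cσ := (abs_nonneg _).trans (hσt_bd p.1)
        exact mul_le_mul (hσt_bd p.1) h1 (sq_nonneg _) h2
      · intro p hp; rw [hφ_supp τ p.1 p.2 hp]; ring
    have I5 : Integrable (fun p : E3 × Sph => σs p.1 * (φ τ p.1 p.2)^2) μP := by
      refine RTEAux.integrable_of_bound hK _ ((kbar * mS) * Mφ^2)
        ((hσs_meas.comp measurable_fst).aestronglyMeasurable.mul
          ((cφ τ hτ).pow 2).aestronglyMeasurable) ?_ ?_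
      · intro p
        rw [abs_mul, abs_of_nonneg (sq_nonneg (φ τ p.1 p.2)), abs_of_nonneg (hσs_nn p.1)]
        exact mul_le_mul (hσs_ub p.1) (sq_le (haMφ p)) (sq_nonneg _)
          (mul_nonneg hkbar hmS0)
      · intro p hp; rw [hφ_supp τ p.1 p.2 hp]; ring
    have I6 : Integrable (fun p : E3 × Sph => σa p.1 * (φ τ p.1 p.2)^2) μP := by
      refine RTEAux.integrable_of_bound hK _ (σahi * Mφ^2)
        ((hσa_meas.comp measurable_fst).aestronglyMeasurable.mul
          ((cφ τ hτ).pow 2).aestronglyMeasurable) ?_ ?_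
      · intro p
        rw [abs_mul, abs_of_nonneg (sq_nonneg (φ τ p.1 p.2))]
        exact mul_le_mul (hσa_bd p.1) (sq_le (haMφ p)) (sq_nonneg _)
          (hσa0.le.trans hσaa)
      · intro p hp; rw [hφ_supp τ p.1 p.2 hp]; ring
    have I4 : Integrable (fun p : E3 × Sph => φ τ p.1 p.2 * q τ p.1 p.2) μP := by
      refine RTEAux.integrable_of_bound hK _ (Mφ * Mq)
        ((cφ τ hτ).mul (cq τ hτ)).aestronglyMeasurable ?_ ?_
      · intro p
        rw [abs_mul]
        exact mul_le_mul (haMφ p) (haMq p) (abs_nonneg _) hMφ0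
      · intro p hp; rw [hφ_supp τ p.1 p.2 hp, zero_mul]
    have Isq := int_sq τ hτ
    have Iq2 := int_q2 τ hτ
    -- the pointwise identity coming from the PDE
    have hpoint : ∀ p : E3 × Sph, 2 * φ τ p.1 p.2 * φt τ p.1 p.2 =
        (-2) * (φ τ p.1 p.2 * ⟪(p.2:E3), φr τ p.1 p.2⟫) +
          (-2) * (σt p.1 * (φ τ p.1 p.2)^2) +
          2 * (φ τ p.1 p.2 * Kph p) + 2 * (φ τ p.1 p.2 * q τ p.1 p.2) := by
      intro p
      have h : φt τ p.1 p.2 + ⟪(p.2:E3), φr τ p.1 p.2⟫ + σt p.1 * φ τ p.1 p.2 =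
          Kph p + q τ p.1 p.2 := heq τ hτ p.1 p.2
      linear_combination (2 * φ τ p.1 p.2) * h
    -- split the integral
    have hsplit : (∫ p : E3 × Sph, 2 * φ τ p.1 p.2 * φt τ p.1 p.2 ∂μP) =
        (-2) * (∫ p : E3 × Sph, φ τ p.1 p.2 * ⟪(p.2:E3), φr τ p.1 p.2⟫ ∂μP) +
          (-2) * (∫ p : E3 × Sph, σt p.1 * (φ τ p.1 p.2)^2 ∂μP) +
          2 * (∫ p : E3 × Sph, φ τ p.1 p.2 * Kph p ∂μP) +
          2 * (∫ p : E3 × Sph, φ τ p.1 p.2 * q τ p.1 p.2 ∂μP) := by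
      have hI12 : Integrable (fun p : E3 × Sph =>
          (-2) * (φ τ p.1 p.2 * ⟪(p.2:E3), φr τ p.1 p.2⟫) +
          (-2) * (σt p.1 * (φ τ p.1 p.2)^2)) μP :=
        (I1.const_mul (-2)).add (I2.const_mul (-2))
      have hI123 : Integrable (fun p : E3 × Sph =>
          (-2) * (φ τ p.1 p.2 * ⟪(p.2:E3), φr τ p.1 p.2⟫) +
          (-2) * (σt p.1 * (φ τ p.1 p.2)^2) + 2 * (φ τ p.1 p.2 * Kph p)) μP :=
        hI12.add (I3.const_mul 2)
      calc (∫ p : E3 × Sph, 2 * φ τ p.1 p.2 * φt τ p.1 p.2 ∂μP)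
          = ∫ p : E3 × Sph,
              ((-2) * (φ τ p.1 p.2 * ⟪(p.2:E3), φr τ p.1 p.2⟫) +
               (-2) * (σt p.1 * (φ τ p.1 p.2)^2) + 2 * (φ τ p.1 p.2 * Kph p)) +
              2 * (φ τ p.1 p.2 * q τ p.1 p.2) ∂μP := by
            refine integral_congr_ae (Filter.Eventually.of_forall fun p => ?_)
            exact hpoint p
        _ = (∫ p : E3 × Sph,
              (-2) * (φ τ p.1 p.2 * ⟪(p.2:E3), φr τ p.1 p.2⟫) +
              (-2) * (σt p.1 * (φ τ p.1 p.2)^2) + 2 * (φ τ p.1 p.2 * Kph p) ∂μP) +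
            ∫ p : E3 × Sph, 2 * (φ τ p.1 p.2 * q τ p.1 p.2) ∂μP :=
            integral_add hI123 (I4.const_mul 2)
        _ = ((∫ p : E3 × Sph,
              (-2) * (φ τ p.1 p.2 * ⟪(p.2:E3), φr τ p.1 p.2⟫) +
              (-2) * (σt p.1 * (φ τ p.1 p.2)^2) ∂μP) +
            ∫ p : E3 × Sph, 2 * (φ τ p.1 p.2 * Kph p) ∂μP) +
            ∫ p : E3 × Sph, 2 * (φ τ p.1 p.2 * q τ p.1 p.2) ∂μP := by
            rw [integral_add hI12 (I3.const_mul 2)]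
        _ = (((∫ p : E3 × Sph, (-2) * (φ τ p.1 p.2 * ⟪(p.2:E3), φr τ p.1 p.2⟫) ∂μP) +
            ∫ p : E3 × Sph, (-2) * (σt p.1 * (φ τ p.1 p.2)^2) ∂μP) +
            ∫ p : E3 × Sph, 2 * (φ τ p.1 p.2 * Kph p) ∂μP) +
            ∫ p : E3 × Sph, 2 * (φ τ p.1 p.2 * q τ p.1 p.2) ∂μP := by
            rw [integral_add (I1.const_mul (-2)) (I2.const_mul (-2))]
        _ = _ := by
            rw [integral_const_mul, integral_const_mul, integral_const_mul, integral_const_mul]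
    -- the transport term integrates to zero
    have hX1 : (∫ p : E3 × Sph, φ τ p.1 p.2 * ⟪(p.2:E3), φr τ p.1 p.2⟫ ∂μP) = 0 := by
      rw [hμP] at I1 ⊢
      calc ∫ p : E3 × Sph, φ τ p.1 p.2 * ⟪(p.2:E3), φr τ p.1 p.2⟫
            ∂((volume : Measure E3).prod sphMeasure)
          = ∫ r : E3, ∫ s : Sph, φ τ r s * ⟪(s:E3), φr τ r s⟫ ∂sphMeasure := integral_prod _ I1
        _ = ∫ s : Sph, ∫ r : E3, φ τ r s * ⟪(s:E3), φr τ r s⟫ ∂(volume : Measure E3)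
              ∂sphMeasure :=
            integral_integral_swap
              (f := fun (r : E3) (s : Sph) => φ τ r s * ⟪(s:E3), φr τ r s⟫) I1
        _ = ∫ _s : Sph, (0:ℝ) ∂sphMeasure := by
            congr 1
            ext s
            refine RTEAux.transport_zero hK (fun r => φ τ r s) (fun r => φr τ r s) (s:E3)
              ?_ ?_ (fun r hr => hφ_supp τ r s hr) (fun r => hφr τ hτ r s)
            · exact (cφ τ hτ).comp (continuous_id.prodMk continuous_const)
            · exact (cφr τ hτ).comp (continuous_id.prodMk continuous_const)
        _ = 0 := integral_zero _ _
    -- the scattering term is dominated by the σs-term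
    have hX3 : (∫ p : E3 × Sph, φ τ p.1 p.2 * Kph p ∂μP) ≤
        ∫ p : E3 × Sph, σs p.1 * (φ τ p.1 p.2)^2 ∂μP := by
      rw [hμP] at I3 I5 ⊢
      have hL : (∫ p : E3 × Sph, φ τ p.1 p.2 * Kph p
          ∂((volume : Measure E3).prod sphMeasure)) =
          ∫ r : E3, ∫ s : Sph, φ τ r s *
            (∫ s' : Sph, k r ⟪(s:E3),(s':E3)⟫ * φ τ r s' ∂sphMeasure) ∂sphMeasure :=
        integral_prod _ I3
      have hR : (∫ p : E3 × Sph, σs p.1 * (φ τ p.1 p.2)^2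
          ∂((volume : Measure E3).prod sphMeasure)) =
          ∫ r : E3, σs r * ∫ s : Sph, (φ τ r s)^2 ∂sphMeasure := by
        rw [integral_prod _ I5]
        congr 1
        ext r
        dsimp only
        rw [integral_const_mul]
      rw [hL, hR]
      refine integral_mono ?_ ?_ ?_
      · exact I3.integral_prod_left
      · refine (I5.integral_prod_left).congr ?_
        filter_upwards with r
        rw [integral_const_mul]
      · intro r
        refine RTEAux.scatter (fun s s' => k r ⟪(s:E3),(s':E3)⟫) (fun s => φ τ r s)
          (σs r) kbar (hκ_meas r) (hk0 r) (hk1 r) (fun s => (hσs r s).symm) ?_ ?_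
        · intro s'
          have hcomm : (fun s : Sph => k r ⟪(s:E3),(s':E3)⟫) =
              fun s : Sph => k r ⟪(s':E3),(s:E3)⟫ := by
            ext s; rw [real_inner_comm]
          rw [hcomm]
          exact (hσs r s').symm
        · exact (cφ τ hτ).comp (continuous_const.prodMk continuous_id)
    -- σs = σt - σa
    have hX5 : (∫ p : E3 × Sph, σs p.1 * (φ τ p.1 p.2)^2 ∂μP) =
        (∫ p : E3 × Sph, σt p.1 * (φ τ p.1 p.2)^2 ∂μP) -
          ∫ p : E3 × Sph, σa p.1 * (φ τ p.1 p.2)^2 ∂μP := by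
      rw [← integral_sub I2 I6]
      congr 1
      ext p
      have := hσa p.1
      nlinarith [this]
    -- absorption lower bound
    have hX6 : σalo * (∫ p : E3 × Sph, (φ τ p.1 p.2)^2 ∂μP) ≤
        ∫ p : E3 × Sph, σa p.1 * (φ τ p.1 p.2)^2 ∂μP := by
      rw [← integral_const_mul]
      refine integral_mono (Isq.const_mul σalo) I6 ?_
      intro p
      exact mul_le_mul_of_nonneg_right (hσab p.1).1 (sq_nonneg _)
    -- source term Young inequality
    have hX4 : 2 * (∫ p : E3 × Sph, φ τ p.1 p.2 * q τ p.1 p.2 ∂μP) ≤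
        σalo * (∫ p : E3 × Sph, (φ τ p.1 p.2)^2 ∂μP) +
          (1/σalo) * ∫ p : E3 × Sph, (q τ p.1 p.2)^2 ∂μP := by
      rw [← integral_const_mul, ← integral_const_mul, ← integral_const_mul,
        ← integral_add (Isq.const_mul σalo) (Iq2.const_mul (1/σalo))]
      refine integral_mono (I4.const_mul 2)
        ((Isq.const_mul σalo).add (Iq2.const_mul (1/σalo))) ?_
      intro p
      dsimp only
      rw [← mul_le_mul_iff_of_pos_left hσa0]
      have hne : σalo ≠ 0 := hσa0.ne'
      have hcf : σalo * (σalo * φ τ p.1 p.2^2 + 1/σalo * q τ p.1 p.2^2)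
          = σalo^2 * φ τ p.1 p.2^2 + q τ p.1 p.2^2 := by
        field_simp
      rw [hcf]
      nlinarith [sq_nonneg (σalo * φ τ p.1 p.2 - q τ p.1 p.2)]
    linarith [hsplit, hX1, hX3, hX5, hX6, hX4]
  -- continuity of the energy and of the source integral
  have hFcont : ContinuousOn (fun τ => ∫ p : E3 × Sph, (φ τ p.1 p.2)^2 ∂μP) (Icc 0 T) := by
    refine continuousOn_of_dominated (bound := (K ×ˢ (univ : Set Sph)).indicator fun _ => Mφ^2)
      (fun τ hτ => ((cφ τ hτ).pow 2).aestronglyMeasurable) ?_ (RTEAux.indK_int hK _) ?_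
    · intro τ hτ
      filter_upwards with p
      by_cases hp : p.1 ∈ K
      · rw [Set.indicator_of_mem (Set.mem_prod.mpr ⟨hp, Set.mem_univ p.2⟩)]
        rw [Real.norm_eq_abs, abs_of_nonneg (sq_nonneg _)]
        exact sq_le (by simpa [Real.norm_eq_abs] using hMφ τ hτ p.1 p.2)
      · rw [Set.indicator_of_notMem (fun h => hp h.1), hφ_supp τ p.1 p.2 hp]
        simp
    · filter_upwards with p
      exact (RTEAux.time_cont hφ_cont p.1 p.2).pow 2
  have hQcont : ContinuousOn (fun τ => ∫ p : E3 × Sph, (q τ p.1 p.2)^2 ∂μP) (Icc 0 T) := by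
    refine continuousOn_of_dominated (bound := (K ×ˢ (univ : Set Sph)).indicator fun _ => Mq^2)
      (fun τ hτ => ((cq τ hτ).pow 2).aestronglyMeasurable) ?_ (RTEAux.indK_int hK _) ?_
    · intro τ hτ
      filter_upwards with p
      by_cases hp : p.1 ∈ K
      · rw [Set.indicator_of_mem (Set.mem_prod.mpr ⟨hp, Set.mem_univ p.2⟩)]
        rw [Real.norm_eq_abs, abs_of_nonneg (sq_nonneg _)]
        exact sq_le (by simpa [Real.norm_eq_abs] using hMq τ hτ p.1 p.2)
      · rw [Set.indicator_of_notMem (fun h => hp h.1), hq_supp τ p.1 p.2 hp]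
        simp
    · filter_upwards with p
      exact (RTEAux.time_cont hq_cont p.1 p.2).pow 2
  -- differentiability of the energy in the interior
  have hFderiv : ∀ t₀ ∈ Ioo 0 T,
      HasDerivAt (fun τ => ∫ p : E3 × Sph, (φ τ p.1 p.2)^2 ∂μP)
        (∫ p : E3 × Sph, 2 * φ t₀ p.1 p.2 * φt t₀ p.1 p.2 ∂μP) t₀ := by
    intro t₀ ht₀
    set ε : ℝ := min t₀ (T - t₀) with hεdef
    have hε0 : 0 < ε := lt_min ht₀.1 (sub_pos.2 ht₀.2)
    have hball : Metric.ball t₀ ε ⊆ Ioo 0 T := by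
      intro x hx
      rw [Real.ball_eq_Ioo] at hx
      have h1 : ε ≤ t₀ := min_le_left _ _
      have h2 : ε ≤ T - t₀ := min_le_right _ _
      exact ⟨by linarith [hx.1], by linarith [hx.2]⟩
    have hnhds : Ioo 0 T ∈ nhds t₀ := isOpen_Ioo.mem_nhds ht₀
    refine (hasDerivAt_integral_of_dominated_loc_of_deriv_le (s := Metric.ball t₀ ε)
      (F := fun τ (p : E3 × Sph) => (φ τ p.1 p.2)^2)
      (F' := fun τ (p : E3 × Sph) => 2 * φ τ p.1 p.2 * φt τ p.1 p.2)
      (bound := (K ×ˢ (univ : Set Sph)).indicator fun _ => 2 * Mφ * Mφt)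
      (Metric.ball_mem_nhds t₀ hε0) ?_ (int_sq t₀ (Ioo_subset_Icc_self ht₀)) ?_ ?_ (RTEAux.indK_int hK _) ?_).2
    · filter_upwards [hnhds] with x hx
      exact ((cφ x (Ioo_subset_Icc_self hx)).pow 2).aestronglyMeasurable
    · exact ((continuous_const.mul (cφ t₀ (Ioo_subset_Icc_self ht₀))).mul
        (cφt t₀ (Ioo_subset_Icc_self ht₀))).aestronglyMeasurable
    · filter_upwards with p
      intro x hx
      have hxI : x ∈ Icc 0 T := Ioo_subset_Icc_self (hball hx)
      by_cases hp : p.1 ∈ K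
      · rw [Set.indicator_of_mem (Set.mem_prod.mpr ⟨hp, Set.mem_univ p.2⟩)]
        have h1 : |φ x p.1 p.2| ≤ Mφ := by simpa [Real.norm_eq_abs] using hMφ x hxI p.1 p.2
        have h2 : |φt x p.1 p.2| ≤ Mφt := by simpa [Real.norm_eq_abs] using hMφt x hxI p.1 p.2
        rw [Real.norm_eq_abs, abs_mul, abs_mul, abs_two]
        nlinarith [abs_nonneg (φ x p.1 p.2), abs_nonneg (φt x p.1 p.2)]
      · rw [Set.indicator_of_notMem (fun h => hp h.1), hφ_supp x p.1 p.2 hp]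
        simp
    · filter_upwards with p
      intro x hx
      have hxI : x ∈ Ioo 0 T := hball hx
      have h1 : HasDerivAt (fun τ => φ τ p.1 p.2) (φt x p.1 p.2) x :=
        (hφt p.1 p.2 x (Ioo_subset_Icc_self hxI)).hasDerivAt (Icc_mem_nhds hxI.1 hxI.2)
      have h2 : HasDerivAt (fun τ => (φ τ p.1 p.2)^2)
          ((2:ℕ) * φ x p.1 p.2 ^ (2 - 1) * φt x p.1 p.2) x := h1.fun_pow 2
      refine h2.congr_deriv ?_
      push_cast
      ring
  -- Gronwall argument
  intro t ht
  set F : ℝ → ℝ := fun τ => ∫ p : E3 × Sph, (φ τ p.1 p.2)^2 ∂μP with hFdef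
  set Q : ℝ → ℝ := fun τ => ∫ p : E3 × Sph, (q τ p.1 p.2)^2 ∂μP with hQdef
  set g : ℝ → ℝ := fun τ => Real.exp (σalo * τ) * ((1/σalo) * Q τ) with hgdef
  have hgcont : ContinuousOn g (Icc 0 T) := by
    refine Continuous.continuousOn ?_ |>.mul (continuousOn_const.mul hQcont)
    exact Real.continuous_exp.comp (continuous_const.mul continuous_id)
  set G : ℝ → ℝ := fun τ => Real.exp (σalo * τ) * F τ - ∫ t' in (0:ℝ)..τ, g t' with hGdef
  have hGcont : ContinuousOn G (Icc 0 T) := by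
    refine ContinuousOn.sub ?_ ?_
    · exact ((Real.continuous_exp.comp (continuous_const.mul continuous_id)).continuousOn).mul
        hFcont
    · have h1 : IntegrableOn g (uIcc 0 T) volume := by
        rw [uIcc_of_le hT.le]; exact hgcont.integrableOn_Icc
      have := intervalIntegral.continuousOn_primitive_interval h1
      rwa [uIcc_of_le hT.le] at this
  have hGderiv : ∀ x ∈ Ioo 0 T, HasDerivAt G
      (σalo * Real.exp (σalo * x) * F x +
        Real.exp (σalo * x) * (∫ p : E3 × Sph, 2 * φ x p.1 p.2 * φt x p.1 p.2 ∂μP) - g x) x := by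
    intro x hx
    have h0 : HasDerivAt (fun τ : ℝ => Real.exp (σalo * τ)) (σalo * Real.exp (σalo * x)) x := by
      have := ((hasDerivAt_id x).const_mul σalo).exp
      simpa [mul_comm] using this
    have h1 := hFderiv x hx
    have h2 : HasDerivAt (fun τ => ∫ t' in (0:ℝ)..τ, g t') (g x) x := by
      refine intervalIntegral.integral_hasDerivAt_right ?_ ?_ ?_
      · refine ContinuousOn.intervalIntegrable ?_
        rw [uIcc_of_le hx.1.le]
        exact hgcont.mono (Icc_subset_Icc le_rfl hx.2.le)
      · exact ContinuousOn.stronglyMeasurableAtFilter isOpen_Ioo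
          (hgcont.mono Ioo_subset_Icc_self) x hx
      · exact hgcont.continuousAt (Icc_mem_nhds hx.1 hx.2)
    exact (h0.mul h1).sub h2
  have hGanti : AntitoneOn G (Icc 0 T) := by
    refine antitoneOn_of_deriv_nonpos (convex_Icc 0 T) hGcont ?_ ?_
    · intro x hx
      rw [interior_Icc] at hx
      exact (hGderiv x hx).differentiableAt.differentiableWithinAt
    · intro x hx
      rw [interior_Icc] at hx
      rw [(hGderiv x hx).deriv]
      have hkey := key x (Ioo_subset_Icc_self hx)
      have he := Real.exp_pos (σalo * x)
      have hmul := mul_le_mul_of_nonneg_left hkey he.le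
      simp only [hgdef, hFdef, hQdef]
      nlinarith [hmul]
  have hG0 : G 0 = F 0 := by
    simp [hGdef]
  have hGt : G t ≤ G 0 := hGanti (left_mem_Icc.2 hT.le) ht ht.1
  have h5 : Real.exp (σalo * t) * F t ≤ F 0 + ∫ t' in (0:ℝ)..t, g t' := by
    have := hGt
    rw [hG0] at this
    simp only [hGdef] at this
    linarith
  have hprod : Real.exp (-σalo * t) * Real.exp (σalo * t) = 1 := by
    rw [← Real.exp_add]; ring_nf; exact Real.exp_zero
  have hmain : F t ≤ Real.exp (-σalo * t) * F 0 +
      Real.exp (-σalo * t) * ∫ t' in (0:ℝ)..t, g t' := by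
    calc F t = (Real.exp (-σalo * t) * Real.exp (σalo * t)) * F t := by rw [hprod, one_mul]
      _ = Real.exp (-σalo * t) * (Real.exp (σalo * t) * F t) := by ring
      _ ≤ Real.exp (-σalo * t) * (F 0 + ∫ t' in (0:ℝ)..t, g t') :=
          mul_le_mul_of_nonneg_left h5 (Real.exp_pos _).le
      _ = _ := by ring
  have htrans : Real.exp (-σalo * t) * (∫ t' in (0:ℝ)..t, g t') =
      (1/σalo) * ∫ t' in (0:ℝ)..t, Real.exp (-σalo * (t - t')) * Q t' := by
    rw [← intervalIntegral.integral_const_mul]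
    rw [← intervalIntegral.integral_const_mul]
    refine intervalIntegral.integral_congr ?_
    intro x _
    simp only [hgdef]
    rw [show -σalo * (t - x) = -σalo * t + σalo * x by ring, Real.exp_add]
    ring
  calc F t ≤ Real.exp (-σalo * t) * F 0 + Real.exp (-σalo * t) * ∫ t' in (0:ℝ)..t, g t' := hmain
    _ = Real.exp (-σalo * t) * F 0 +
        (1/σalo) * ∫ t' in (0:ℝ)..t, Real.exp (-σalo * (t - t')) * Q t' := by rw [htrans]
end

section
/- Let S² = {s ∈ ℝ³ : |s| = 1} with its standard surface measure dσ. Let k : ℝ³ × [−1,1] → ℝ and σ_t : ℝ³ → ℝ be measurable, set σ_s(r) = ∫_{S²} k(r, s·s') dσ(s') and σ_a = σ_t − σ_s, and assume 0 ≤ k(r,μ) ≤ k̄ and 0 < σ̲_a ≤ σ_a(r) ≤ σ̄_a for all r, μ. Let K ⊆ ℝ³ be compact and q̂ : ℝ³ × S² → ℝ continuous, vanishing for r ∉ K. Let φ̂ : ℝ³ × S² → ℝ be continuous with continuous ∇_r φ̂, vanishing for r ∉ K, and satisfying the stationary equation s·∇_r φ̂(r,s) + σ_t(r) φ̂(r,s)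 = ∫_{S²} k(r, s·s') φ̂(r,s') dσ(s') + q̂(r,s) for all (r,s). Let φ : [0,T] × ℝ³ × S² → ℝ be continuous with continuous ∂_t φ and ∇_r φ, vanishing for r ∉ K, and satisfying ∂_t φ + s·∇_r φ + σ_t φ = ∫_{S²} k(r, s·s') φ(t,r,s') dσ(s') + q̂(r,s) for all (t,r,s). Then for all t ∈ [0,T]: ∫_{ℝ³×S²} |φ(t,r,s) − φ̂(r,s)|² dr dσ(s) ≤ e^{−σ̲_a t} ∫_{ℝ³×S²} |φ(0,r,s) − φ̂(r,s)|² dr dσ(s). -/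
open MeasureTheory
open scoped RealInnerProductSpace

set_option maxHeartbeats 2000000
set_option synthInstance.maxHeartbeats 400000


namespace RTEaux

lemma inner_mem_Icc (s s' : Sph) : ⟪(s : E3), (s' : E3)⟫ ∈ Set.Icc (-1 : ℝ) 1 := by
  rw [Set.mem_Icc, ← abs_le]
  have := abs_real_inner_le_norm (s : E3) (s' : E3)
  simpa using this

/-- Continuous functions on `E3 × Sph` vanishing off `K × univ` are integrable. -/
lemma integrable_supp {K : Set E3} (hK : IsCompact K) {f : E3 × Sph → ℝ}
    (hf : Continuous f) (h0 : ∀ r s, r ∉ K → f (r, s) = 0) :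
    Integrable f ((volume : Measure E3).prod sphMeasure) := by
  apply hf.integrable_of_hasCompactSupport
  apply HasCompactSupport.intro (hK.prod isCompact_univ)
  rintro ⟨r, s⟩ hrs
  exact h0 r s fun hr => hrs ⟨hr, trivial⟩

/-- Bounded measurable functions on the sphere are integrable. -/
lemma integrable_sph {f : Sph → ℝ} (hm : AEStronglyMeasurable f sphMeasure) {C : ℝ}
    (hb : ∀ x, ‖f x‖ ≤ C) : Integrable f sphMeasure :=
  (integrable_const C).mono' hm (ae_of_all _ hb)

lemma integrable_sph2 {f : Sph × Sph → ℝ}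
    (hm : AEStronglyMeasurable f (sphMeasure.prod sphMeasure)) {C : ℝ}
    (hb : ∀ x, ‖f x‖ ≤ C) : Integrable f (sphMeasure.prod sphMeasure) :=
  (integrable_const C).mono' hm (ae_of_all _ hb)

/-- Integration by parts: `∫ f * (directional derivative of f) = 0` for compactly
supported `C¹` functions on `E3`. -/
lemma integral_mul_lineDeriv_eq_zero {f f' : E3 → ℝ} {v : E3}
    (h1 : Integrable (fun x => f' x * f x)) (h2 : Integrable (fun x => f x * f' x))
    (h3 : Integrable (fun x => f x * f x))
    (hd : ∀ x, HasLineDerivAt ℝ f (f' x) x v) :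
    ∫ x, f x * f' x = 0 := by
  have := integral_bilinear_hasLineDerivAt_right_eq_neg_left_of_integrable
    (B := ContinuousLinearMap.mul ℝ ℝ) (μ := volume) h1 h2 h3 (fun x _ => hd x) (fun x _ => hd x)
  simp only [ContinuousLinearMap.mul_apply'] at this
  have h4 : ∫ x, f' x * f x = ∫ x, f x * f' x := by congr 1; ext x; ring
  linarith [this, h4]


/-- Continuous functions on `E3` vanishing off a compact `K` are integrable. -/
lemma integrable_suppE3 {K : Set E3} (hK : IsCompact K) {f : E3 → ℝ}
    (hf : Continuous f) (h0 : ∀ r, r ∉ K → f r = 0) :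
    Integrable f (volume : Measure E3) := by
  apply hf.integrable_of_hasCompactSupport
  apply HasCompactSupport.intro hK
  exact fun r hr => h0 r hr

end RTEaux

namespace RTEaux

theorem decay_aux
    (k : E3 → ℝ → ℝ) (σt σs : E3 → ℝ)
    (hk_meas : Measurable (Function.uncurry k)) (hσt_meas : Measurable σt)
    (hσs : ∀ (r : E3) (s : Sph), σs r = ∫ s' : Sph, k r ⟪(s : E3), (s' : E3)⟫ ∂sphMeasure)
    (kbar σalo σahi : ℝ) (hkbar : 0 ≤ kbar)
    (hk : ∀ r : E3, ∀ μ ∈ Set.Icc (-1 : ℝ) 1, 0 ≤ k r μ ∧ k r μ ≤ kbar)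
    (hσa0 : 0 < σalo)
    (hσab : ∀ r : E3, σalo ≤ σt r - σs r ∧ σt r - σs r ≤ σahi)
    (T : ℝ) (hT : 0 ≤ T) (K : Set E3) (hK : IsCompact K)
    (ψ ψt : ℝ → E3 → Sph → ℝ) (ψr : ℝ → E3 → Sph → E3)
    (hψ_cont : ContinuousOn (fun p : ℝ × E3 × Sph => ψ p.1 p.2.1 p.2.2)
      (Set.Icc 0 T ×ˢ Set.univ))
    (hψt_cont : ContinuousOn (fun p : ℝ × E3 × Sph => ψt p.1 p.2.1 p.2.2)
      (Set.Icc 0 T ×ˢ Set.univ))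
    (hψr_cont : ContinuousOn (fun p : ℝ × E3 × Sph => ψr p.1 p.2.1 p.2.2)
      (Set.Icc 0 T ×ˢ Set.univ))
    (hψ_supp : ∀ (t : ℝ) (r : E3) (s : Sph), r ∉ K → ψ t r s = 0)
    (hψt : ∀ (r : E3) (s : Sph), ∀ t ∈ Set.Icc 0 T,
      HasDerivWithinAt (fun t' => ψ t' r s) (ψt t r s) (Set.Icc 0 T) t)
    (hψr : ∀ t ∈ Set.Icc 0 T, ∀ (r : E3) (s : Sph),
      HasGradientAt (fun r' => ψ t r' s) (ψr t r s) r)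
    (heq : ∀ t ∈ Set.Icc 0 T, ∀ (r : E3) (s : Sph),
      ψt t r s + ⟪(s : E3), ψr t r s⟫ + σt r * ψ t r s =
        ∫ s' : Sph, k r ⟪(s : E3), (s' : E3)⟫ * ψ t r s' ∂sphMeasure) :
    ∀ t ∈ Set.Icc 0 T,
      (∫ p : E3 × Sph, (ψ t p.1 p.2) ^ 2 ∂((volume : Measure E3).prod sphMeasure)) ≤
        Real.exp (-σalo * t) *
          ∫ p : E3 × Sph, (ψ 0 p.1 p.2) ^ 2 ∂((volume : Measure E3).prod sphMeasure) := by
  set μP : Measure (E3 × Sph) := (volume : Measure E3).prod sphMeasure with hμP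
  set M : ℝ := (sphMeasure Set.univ).toReal with hMdef
  have hM : 0 ≤ M := ENNReal.toReal_nonneg
  -- kernel bounds
  have hk0 : ∀ (r : E3) (s s' : Sph), 0 ≤ k r ⟪(s : E3), (s' : E3)⟫ ∧
      k r ⟪(s : E3), (s' : E3)⟫ ≤ kbar := fun r s s' => hk r _ (inner_mem_Icc s s')
  -- uniform bound on ψ
  obtain ⟨Cψ, hCψ0, hCψ⟩ : ∃ C, 0 ≤ C ∧ ∀ t ∈ Set.Icc 0 T, ∀ (r : E3) (s : Sph),
      |ψ t r s| ≤ C := by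
    obtain ⟨C, hC⟩ := ((isCompact_Icc.prod (hK.prod isCompact_univ)).exists_bound_of_continuousOn
      (hψ_cont.mono (fun p hp => ⟨hp.1, trivial⟩)))
    refine ⟨max C 0, le_max_right _ _, fun t ht r s => ?_⟩
    by_cases hr : r ∈ K
    · exact le_trans (hC (t, r, s) ⟨ht, hr, trivial⟩) (le_max_left _ _)
    · simpa [hψ_supp t r s hr] using le_max_right C 0
  -- uniform bound on ψt (only needed on K)
  obtain ⟨Cψt, hCψt0, hCψt⟩ : ∃ C, 0 ≤ C ∧ ∀ t ∈ Set.Icc 0 T, ∀ r ∈ K, ∀ (s : Sph),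
      |ψt t r s| ≤ C := by
    obtain ⟨C, hC⟩ := ((isCompact_Icc.prod (hK.prod isCompact_univ)).exists_bound_of_continuousOn
      (hψt_cont.mono (fun p hp => ⟨hp.1, trivial⟩)))
    exact ⟨max C 0, le_max_right _ _, fun t ht r hr s =>
      le_trans (hC (t, r, s) ⟨ht, hr, trivial⟩) (le_max_left _ _)⟩
  -- continuity of slices
  have hψc : ∀ t ∈ Set.Icc 0 T, Continuous (fun p : E3 × Sph => ψ t p.1 p.2) := by
    intro t ht
    exact hψ_cont.comp_continuous (continuous_const.prodMk continuous_id)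
      (fun p => ⟨ht, trivial⟩)
  have hψtc : ∀ t ∈ Set.Icc 0 T, Continuous (fun p : E3 × Sph => ψt t p.1 p.2) := by
    intro t ht
    exact hψt_cont.comp_continuous (continuous_const.prodMk continuous_id)
      (fun p => ⟨ht, trivial⟩)
  have hψrc : ∀ t ∈ Set.Icc 0 T, Continuous (fun p : E3 × Sph => ψr t p.1 p.2) := by
    intro t ht
    exact hψr_cont.comp_continuous (continuous_const.prodMk continuous_id)
      (fun p => ⟨ht, trivial⟩)
  -- basic integrabilities
  have Iψ2 : ∀ t ∈ Set.Icc 0 T, Integrable (fun p : E3 × Sph => ψ t p.1 p.2 ^ 2) μP := by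
    intro t ht
    exact integrable_supp hK ((hψc t ht).pow 2)
      (fun r s hr => by simp [hψ_supp t r s hr])
  -- kernel measurability on (E3 × Sph) × Sph
  have hker_meas : Measurable (fun q : (E3 × Sph) × Sph =>
      k q.1.1 ⟪(q.1.2 : E3), (q.2 : E3)⟫) := by
    have h2 : Continuous (fun q : (E3 × Sph) × Sph => ⟪(q.1.2 : E3), (q.2 : E3)⟫) :=
      (continuous_subtype_val.comp (continuous_snd.comp continuous_fst)).inner
        (continuous_subtype_val.comp continuous_snd)
    exact hk_meas.comp ((measurable_fst.comp measurable_fst).prodMk h2.measurable)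
  have hker_meas2 : ∀ r : E3, Measurable (fun q : Sph × Sph =>
      k r ⟪(q.1 : E3), (q.2 : E3)⟫) := by
    intro r
    have h2 : Continuous (fun q : Sph × Sph => ⟪(q.1 : E3), (q.2 : E3)⟫) :=
      (continuous_subtype_val.comp continuous_fst).inner
        (continuous_subtype_val.comp continuous_snd)
    exact hk_meas.comp (measurable_const.prodMk h2.measurable)
  have hker_meas1 : ∀ (r : E3) (s : Sph), Measurable (fun s' : Sph =>
      k r ⟪(s : E3), (s' : E3)⟫) := by
    intro r s
    have h2 : Continuous (fun s' : Sph => ⟪(s : E3), (s' : E3)⟫) :=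
      continuous_const.inner continuous_subtype_val
    exact hk_meas.comp (measurable_const.prodMk h2.measurable)
  -- σs bounds
  have hσs_bdd : ∀ r : E3, 0 ≤ σs r ∧ σs r ≤ kbar * M := by
    intro r
    obtain ⟨s⟩ : Nonempty Sph := ⟨⟨EuclideanSpace.single 0 1, by simp⟩⟩
    rw [hσs r s]
    constructor
    · exact integral_nonneg (fun s' => (hk0 r s s').1)
    · calc (∫ s' : Sph, k r ⟪(s : E3), (s' : E3)⟫ ∂sphMeasure)
          ≤ ∫ _s' : Sph, kbar ∂sphMeasure := by
            apply integral_mono _ (integrable_const kbar) (fun s' => (hk0 r s s').2)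
            exact integrable_sph (hker_meas1 r s).aestronglyMeasurable
              (C := kbar) (fun s' => by
                rw [Real.norm_eq_abs, abs_of_nonneg (hk0 r s s').1]; exact (hk0 r s s').2)
        _ = kbar * M := by rw [integral_const, smul_eq_mul, mul_comm]; rfl
  have hσt_bdd : ∀ r : E3, 0 ≤ σt r ∧ σt r ≤ σahi + kbar * M := by
    intro r
    obtain ⟨h1, h2⟩ := hσab r
    obtain ⟨h3, h4⟩ := hσs_bdd r
    constructor <;> nlinarith [hσa0]
  set Cσ : ℝ := σahi + kbar * M with hCσdef
  have hCσ0 : 0 ≤ Cσ := le_trans (hσt_bdd 0).1 (hσt_bdd 0).2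
  -- the key differential inequality: d/dt ∫ψ² = ∫2ψψt ≤ -σalo ∫ψ²
  have key : ∀ t ∈ Set.Icc 0 T,
      (∫ p : E3 × Sph, 2 * ψ t p.1 p.2 * ψt t p.1 p.2 ∂μP) ≤
        -σalo * ∫ p : E3 × Sph, ψ t p.1 p.2 ^ 2 ∂μP := by
    intro t ht
    set S : E3 × Sph → ℝ :=
      fun p => ∫ s' : Sph, k p.1 ⟪(p.2 : E3), (s' : E3)⟫ * ψ t p.1 s' ∂sphMeasure with hSdef
    have hSp : ∀ p : E3 × Sph,
        S p = ∫ s' : Sph, k p.1 ⟪(p.2 : E3), (s' : E3)⟫ * ψ t p.1 s' ∂sphMeasure :=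
      fun p => rfl
    -- measurability of S
    have hq_meas : Measurable (fun q : (E3 × Sph) × Sph =>
        k q.1.1 ⟪(q.1.2 : E3), (q.2 : E3)⟫ * ψ t q.1.1 q.2) :=
      hker_meas.mul ((hψc t ht).comp
        ((continuous_fst.comp continuous_fst).prodMk continuous_snd)).measurable
    have hS_sm : StronglyMeasurable S :=
      hq_meas.stronglyMeasurable.integral_prod_right'
    -- bound on S
    have hS_bdd : ∀ p : E3 × Sph, |S p| ≤ kbar * Cψ * M := by
      intro p
      rw [hSp]
      calc |∫ s' : Sph, k p.1 ⟪(p.2 : E3), (s' : E3)⟫ * ψ t p.1 s' ∂sphMeasure|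
          ≤ (kbar * Cψ) * M := by
            rw [hMdef, ← Real.norm_eq_abs]
            refine norm_integral_le_of_norm_le_const (ae_of_all _ fun s' => ?_)
            rw [Real.norm_eq_abs, abs_mul, abs_of_nonneg (hk0 p.1 p.2 s').1]
            exact mul_le_mul (hk0 p.1 p.2 s').2 (hCψ t ht p.1 s') (abs_nonneg _) hkbar
        _ = kbar * Cψ * M := by ring
    -- integrabilities on the product space
    have IψS : Integrable (fun p : E3 × Sph => ψ t p.1 p.2 * S p) μP := by
      have habs : Integrable (fun p : E3 × Sph => |ψ t p.1 p.2|) μP :=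
        integrable_supp hK (hψc t ht).abs (fun r s hr => by simp [hψ_supp t r s hr])
      refine (habs.const_mul (kbar * Cψ * M)).mono'
        ((hψc t ht).aestronglyMeasurable.mul hS_sm.aestronglyMeasurable)
        (ae_of_all _ fun p => ?_)
      rw [Real.norm_eq_abs, abs_mul, mul_comm (kbar * Cψ * M)]
      exact mul_le_mul_of_nonneg_left (hS_bdd p) (abs_nonneg _)
    have IσtΨ : Integrable (fun p : E3 × Sph => σt p.1 * ψ t p.1 p.2 ^ 2) μP := by
      refine ((Iψ2 t ht).const_mul Cσ).mono'
        ((hσt_meas.comp measurable_fst).aestronglyMeasurable.mul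
          ((hψc t ht).pow 2).aestronglyMeasurable)
        (ae_of_all _ fun p => ?_)
      rw [Real.norm_eq_abs, abs_mul, abs_of_nonneg (hσt_bdd p.1).1,
        abs_of_nonneg (sq_nonneg _)]
      exact mul_le_mul_of_nonneg_right (hσt_bdd p.1).2 (sq_nonneg _)
    have IG1 : Integrable
        (fun p : E3 × Sph => -2 * ψ t p.1 p.2 * ⟪(p.2 : E3), ψr t p.1 p.2⟫) μP := by
      refine integrable_supp hK ?_ (fun r s hr => by simp [hψ_supp t r s hr])
      exact (continuous_const.mul (hψc t ht)).mul
        ((continuous_subtype_val.comp continuous_snd).inner (hψrc t ht))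
    have IG2 : Integrable (fun p : E3 × Sph =>
        2 * (ψ t p.1 p.2 * S p) - 2 * (σt p.1 * ψ t p.1 p.2 ^ 2)) μP :=
      (IψS.const_mul 2).sub (IσtΨ.const_mul 2)
    -- pointwise split of the integrand using the equation
    have hsplit : ∀ p : E3 × Sph, 2 * ψ t p.1 p.2 * ψt t p.1 p.2 =
        (-2 * ψ t p.1 p.2 * ⟪(p.2 : E3), ψr t p.1 p.2⟫) +
        (2 * (ψ t p.1 p.2 * S p) - 2 * (σt p.1 * ψ t p.1 p.2 ^ 2)) := by
      intro p
      have h := heq t ht p.1 p.2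
      rw [← hSp p] at h
      have hψteq : ψt t p.1 p.2 =
          S p - ⟪(p.2 : E3), ψr t p.1 p.2⟫ - σt p.1 * ψ t p.1 p.2 := by linarith
      rw [hψteq]; ring
    have hint_split : (∫ p : E3 × Sph, 2 * ψ t p.1 p.2 * ψt t p.1 p.2 ∂μP) =
        (∫ p : E3 × Sph, -2 * ψ t p.1 p.2 * ⟪(p.2 : E3), ψr t p.1 p.2⟫ ∂μP) +
        ∫ p : E3 × Sph,
          2 * (ψ t p.1 p.2 * S p) - 2 * (σt p.1 * ψ t p.1 p.2 ^ 2) ∂μP := by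
      rw [← integral_add IG1 IG2]
      exact integral_congr_ae (ae_of_all _ fun p => hsplit p)
    -- the transport term integrates to zero
    have hG10 : (∫ p : E3 × Sph,
        -2 * ψ t p.1 p.2 * ⟪(p.2 : E3), ψr t p.1 p.2⟫ ∂μP) = 0 := by
      rw [hμP] at IG1 ⊢
      rw [integral_prod_symm _ IG1]
      have inner0 : ∀ s : Sph,
          (∫ r : E3, -2 * ψ t r s * ⟪(s : E3), ψr t r s⟫) = 0 := by
        intro s
        have hf : Continuous fun r : E3 => ψ t r s :=
          (hψc t ht).comp (continuous_id.prodMk continuous_const)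
        have hdc : Continuous fun r : E3 => ⟪(s : E3), ψr t r s⟫ :=
          continuous_const.inner ((hψrc t ht).comp (continuous_id.prodMk continuous_const))
        have i1 : Integrable (fun r : E3 => ⟪(s : E3), ψr t r s⟫ * ψ t r s) := by
          refine integrable_suppE3 hK (hdc.mul hf) (fun r hr => by simp [hψ_supp t r s hr])
        have i2 : Integrable (fun r : E3 => ψ t r s * ⟪(s : E3), ψr t r s⟫) := by
          refine integrable_suppE3 hK (hf.mul hdc) (fun r hr => by simp [hψ_supp t r s hr])
        have i3 : Integrable (fun r : E3 => ψ t r s * ψ t r s) := by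
          refine integrable_suppE3 hK (hf.mul hf) (fun r hr => by simp [hψ_supp t r s hr])
        have hline : ∀ r : E3,
            HasLineDerivAt ℝ (fun r' => ψ t r' s) (⟪(s : E3), ψr t r s⟫) r (s : E3) := by
          intro r
          have := ((hψr t ht r s).hasFDerivAt.hasLineDerivAt (s : E3))
          rw [real_inner_comm]
          simpa using this
        have h0 := integral_mul_lineDeriv_eq_zero i1 i2 i3 hline
        calc (∫ r : E3, -2 * ψ t r s * ⟪(s : E3), ψr t r s⟫)
            = ∫ r : E3, -2 * (ψ t r s * ⟪(s : E3), ψr t r s⟫) := by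
              congr 1; funext r; ring
          _ = -2 * ∫ r : E3, ψ t r s * ⟪(s : E3), ψr t r s⟫ := integral_const_mul _ _
          _ = 0 := by rw [h0, mul_zero]
      calc (∫ s : Sph, ∫ r : E3, -2 * ψ t r s * ⟪(s : E3), ψr t r s⟫ ∂volume ∂sphMeasure)
          = ∫ s : Sph, (0 : ℝ) ∂sphMeasure :=
            integral_congr_ae (ae_of_all _ fun s => inner0 s)
        _ = 0 := integral_zero _ _
    -- pointwise-in-r estimate of the scattering term (Cauchy–Schwarz / symmetry)
    have claim : ∀ r : E3, 0 ≤ ∫ s : Sph,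
        ((2 * σt r - σalo) * ψ t r s ^ 2 - 2 * (ψ t r s * S (r, s))) ∂sphMeasure := by
      intro r
      have hFc : Continuous fun s : Sph => ψ t r s :=
        (hψc t ht).comp (continuous_const.prodMk continuous_id)
      have hFb : ∀ s : Sph, |ψ t r s| ≤ Cψ := fun s => hCψ t ht r s
      have iF2 : Integrable (fun s : Sph => ψ t r s ^ 2) sphMeasure := by
        refine integrable_sph (hFc.pow 2).aestronglyMeasurable (C := Cψ ^ 2) (fun s => ?_)
        rw [Real.norm_eq_abs, abs_of_nonneg (sq_nonneg _), ← sq_abs]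
        exact pow_le_pow_left₀ (abs_nonneg _) (hFb s) 2
      have hSr_sm : StronglyMeasurable fun s : Sph => S (r, s) :=
        hS_sm.comp_measurable (measurable_const.prodMk measurable_id)
      have iFS : Integrable (fun s : Sph => ψ t r s * S (r, s)) sphMeasure := by
        refine integrable_sph (hFc.aestronglyMeasurable.mul hSr_sm.aestronglyMeasurable)
          (C := Cψ * (kbar * Cψ * M)) (fun s => ?_)
        rw [Real.norm_eq_abs, abs_mul]
        exact mul_le_mul (hFb s) (hS_bdd (r, s)) (abs_nonneg _) hCψ0
      have IW : Integrable (fun q : Sph × Sph =>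
          k r ⟪(q.1 : E3), (q.2 : E3)⟫ * ψ t r q.2 * ψ t r q.1)
          (sphMeasure.prod sphMeasure) := by
        refine integrable_sph2 (((hker_meas2 r).mul
          (hFc.comp continuous_snd).measurable).mul
          (hFc.comp continuous_fst).measurable).aestronglyMeasurable
          (C := kbar * Cψ * Cψ) (fun q => ?_)
        rw [Real.norm_eq_abs, abs_mul, abs_mul, abs_of_nonneg (hk0 r q.1 q.2).1]
        exact mul_le_mul (mul_le_mul (hk0 r q.1 q.2).2 (hFb q.2) (abs_nonneg _) hkbar)
          (hFb q.1) (abs_nonneg _) (by positivity)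
      have IV1 : Integrable (fun q : Sph × Sph =>
          k r ⟪(q.1 : E3), (q.2 : E3)⟫ * ψ t r q.1 ^ 2) (sphMeasure.prod sphMeasure) := by
        refine integrable_sph2 ((hker_meas2 r).mul
          ((hFc.comp continuous_fst).pow 2).measurable).aestronglyMeasurable
          (C := kbar * Cψ ^ 2) (fun q => ?_)
        rw [Real.norm_eq_abs, abs_mul, abs_of_nonneg (hk0 r q.1 q.2).1,
          abs_of_nonneg (sq_nonneg _), ← sq_abs]
        exact mul_le_mul (hk0 r q.1 q.2).2
          (pow_le_pow_left₀ (abs_nonneg _) (hFb q.1) 2) (by positivity) hkbar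
      have IV2 : Integrable (fun q : Sph × Sph =>
          k r ⟪(q.1 : E3), (q.2 : E3)⟫ * ψ t r q.2 ^ 2) (sphMeasure.prod sphMeasure) := by
        refine integrable_sph2 ((hker_meas2 r).mul
          ((hFc.comp continuous_snd).pow 2).measurable).aestronglyMeasurable
          (C := kbar * Cψ ^ 2) (fun q => ?_)
        rw [Real.norm_eq_abs, abs_mul, abs_of_nonneg (hk0 r q.1 q.2).1,
          abs_of_nonneg (sq_nonneg _), ← sq_abs]
        exact mul_le_mul (hk0 r q.1 q.2).2
          (pow_le_pow_left₀ (abs_nonneg _) (hFb q.2) 2) (by positivity) hkbar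
      have hFSW : (∫ s : Sph, ψ t r s * S (r, s) ∂sphMeasure) =
          ∫ q : Sph × Sph, k r ⟪(q.1 : E3), (q.2 : E3)⟫ * ψ t r q.2 * ψ t r q.1
            ∂(sphMeasure.prod sphMeasure) := by
        rw [integral_prod _ IW]
        congr 1; funext s
        rw [mul_comm (ψ t r s), hSp (r, s), ← integral_mul_const]
      have hV1 : (∫ q : Sph × Sph, k r ⟪(q.1 : E3), (q.2 : E3)⟫ * ψ t r q.1 ^ 2
          ∂(sphMeasure.prod sphMeasure)) = σs r * ∫ s : Sph, ψ t r s ^ 2 ∂sphMeasure := by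
        rw [integral_prod _ IV1]
        calc (∫ s : Sph, ∫ s' : Sph,
              k r ⟪(s : E3), (s' : E3)⟫ * ψ t r s ^ 2 ∂sphMeasure ∂sphMeasure)
            = ∫ s : Sph, σs r * ψ t r s ^ 2 ∂sphMeasure := by
              congr 1; funext s
              rw [integral_mul_const, ← hσs r s]
          _ = σs r * ∫ s : Sph, ψ t r s ^ 2 ∂sphMeasure := integral_const_mul _ _
      have hV2 : (∫ q : Sph × Sph, k r ⟪(q.1 : E3), (q.2 : E3)⟫ * ψ t r q.2 ^ 2
          ∂(sphMeasure.prod sphMeasure)) = σs r * ∫ s : Sph, ψ t r s ^ 2 ∂sphMeasure := by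
        rw [integral_prod_symm _ IV2]
        calc (∫ s' : Sph, ∫ s : Sph,
              k r ⟪(s : E3), (s' : E3)⟫ * ψ t r s' ^ 2 ∂sphMeasure ∂sphMeasure)
            = ∫ s' : Sph, σs r * ψ t r s' ^ 2 ∂sphMeasure := by
              congr 1; funext s'
              rw [integral_mul_const]
              congr 1
              calc (∫ s : Sph, k r ⟪(s : E3), (s' : E3)⟫ ∂sphMeasure)
                  = ∫ s : Sph, k r ⟪(s' : E3), (s : E3)⟫ ∂sphMeasure := by
                    congr 1; funext s; rw [real_inner_comm]
                _ = σs r := (hσs r s').symm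
          _ = σs r * ∫ s : Sph, ψ t r s ^ 2 ∂sphMeasure := integral_const_mul _ _
      have htwo : 2 * (∫ s : Sph, ψ t r s * S (r, s) ∂sphMeasure) ≤
          2 * (σs r * ∫ s : Sph, ψ t r s ^ 2 ∂sphMeasure) := by
        rw [hFSW, ← integral_const_mul]
        calc (∫ q : Sph × Sph,
              2 * (k r ⟪(q.1 : E3), (q.2 : E3)⟫ * ψ t r q.2 * ψ t r q.1)
                ∂(sphMeasure.prod sphMeasure))
            ≤ ∫ q : Sph × Sph,
              (k r ⟪(q.1 : E3), (q.2 : E3)⟫ * ψ t r q.1 ^ 2 +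
               k r ⟪(q.1 : E3), (q.2 : E3)⟫ * ψ t r q.2 ^ 2)
                ∂(sphMeasure.prod sphMeasure) := by
              refine integral_mono (IW.const_mul 2) (IV1.add IV2) (fun q => ?_)
              have h2ab := two_mul_le_add_sq (ψ t r q.2) (ψ t r q.1)
              nlinarith [(hk0 r q.1 q.2).1, h2ab]
          _ = σs r * (∫ s : Sph, ψ t r s ^ 2 ∂sphMeasure) +
              σs r * ∫ s : Sph, ψ t r s ^ 2 ∂sphMeasure := by
              rw [integral_add IV1 IV2, hV1, hV2]
          _ = 2 * (σs r * ∫ s : Sph, ψ t r s ^ 2 ∂sphMeasure) := by ring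
      have hsplitr : (∫ s : Sph,
          ((2 * σt r - σalo) * ψ t r s ^ 2 - 2 * (ψ t r s * S (r, s))) ∂sphMeasure) =
          (2 * σt r - σalo) * (∫ s : Sph, ψ t r s ^ 2 ∂sphMeasure) -
          2 * ∫ s : Sph, ψ t r s * S (r, s) ∂sphMeasure := by
        rw [integral_sub (iF2.const_mul _) (iFS.const_mul 2), integral_const_mul,
          integral_const_mul]
      rw [hsplitr]
      have hF2 : 0 ≤ ∫ s : Sph, ψ t r s ^ 2 ∂sphMeasure :=
        integral_nonneg fun s => sq_nonneg _
      have hσr := (hσab r).1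
      nlinarith [htwo, hF2, mul_le_mul_of_nonneg_right hσr hF2, mul_nonneg hσa0.le hF2]
    -- assemble the inequality
    have IH : Integrable (fun p : E3 × Sph =>
        (2 * σt p.1 - σalo) * ψ t p.1 p.2 ^ 2 - 2 * (ψ t p.1 p.2 * S p)) μP := by
      refine (((IσtΨ.const_mul 2).sub ((Iψ2 t ht).const_mul σalo)).sub
        (IψS.const_mul 2)).congr (ae_of_all _ fun p => ?_)
      simp only [Pi.sub_apply]
      ring
    have hH : 0 ≤ ∫ p : E3 × Sph,
        ((2 * σt p.1 - σalo) * ψ t p.1 p.2 ^ 2 - 2 * (ψ t p.1 p.2 * S p)) ∂μP := by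
      rw [hμP] at IH ⊢
      rw [integral_prod _ IH]
      exact integral_nonneg fun r => claim r
    have hHsplit : (∫ p : E3 × Sph,
        ((2 * σt p.1 - σalo) * ψ t p.1 p.2 ^ 2 - 2 * (ψ t p.1 p.2 * S p)) ∂μP) =
        (-σalo * ∫ p : E3 × Sph, ψ t p.1 p.2 ^ 2 ∂μP) -
        ∫ p : E3 × Sph,
          (2 * (ψ t p.1 p.2 * S p) - 2 * (σt p.1 * ψ t p.1 p.2 ^ 2)) ∂μP := by
      calc (∫ p : E3 × Sph,
            ((2 * σt p.1 - σalo) * ψ t p.1 p.2 ^ 2 - 2 * (ψ t p.1 p.2 * S p)) ∂μP)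
          = ∫ p : E3 × Sph, ((-σalo * ψ t p.1 p.2 ^ 2) -
              (2 * (ψ t p.1 p.2 * S p) - 2 * (σt p.1 * ψ t p.1 p.2 ^ 2))) ∂μP :=
            integral_congr_ae (ae_of_all _ fun p => by ring)
        _ = (∫ p : E3 × Sph, -σalo * ψ t p.1 p.2 ^ 2 ∂μP) -
            ∫ p : E3 × Sph,
              (2 * (ψ t p.1 p.2 * S p) - 2 * (σt p.1 * ψ t p.1 p.2 ^ 2)) ∂μP :=
            integral_sub ((Iψ2 t ht).const_mul (-σalo)) IG2
        _ = (-σalo * ∫ p : E3 × Sph, ψ t p.1 p.2 ^ 2 ∂μP) -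
            ∫ p : E3 × Sph,
              (2 * (ψ t p.1 p.2 * S p) - 2 * (σt p.1 * ψ t p.1 p.2 ^ 2)) ∂μP := by
            rw [integral_const_mul]
    linarith [hH, hint_split, hG10, hHsplit]
  -- the energy functional
  set En : ℝ → ℝ := fun x => ∫ p : E3 × Sph, ψ x p.1 p.2 ^ 2 ∂μP with hEdef
  have hKmeas : MeasurableSet (K ×ˢ (Set.univ : Set Sph)) :=
    hK.isClosed.measurableSet.prod MeasurableSet.univ
  have hbound_int : ∀ C : ℝ, Integrable ((K ×ˢ (Set.univ : Set Sph)).indicator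
      (fun _ => C)) μP := by
    intro C
    rw [hμP]
    refine (integrable_indicator_iff hKmeas).2 ?_
    exact integrableOn_const (hK.prod isCompact_univ).measure_lt_top.ne
  -- continuity of the energy
  have hE_cont : ContinuousOn En (Set.Icc 0 T) := by
    rw [hEdef]
    refine continuousOn_of_dominated
      (bound := (K ×ˢ (Set.univ : Set Sph)).indicator (fun _ => Cψ ^ 2))
      (fun x hx => ((hψc x hx).pow 2).aestronglyMeasurable) ?_ (hbound_int _) ?_
    · intro x hx
      refine ae_of_all _ fun p => ?_
      by_cases hp : p.1 ∈ K
      · rw [Set.indicator_of_mem (Set.mk_mem_prod hp (Set.mem_univ _)), Real.norm_eq_abs,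
          abs_of_nonneg (sq_nonneg _), ← sq_abs]
        exact pow_le_pow_left₀ (abs_nonneg _) (hCψ x hx p.1 p.2) 2
      · rw [Set.indicator_of_notMem (fun hmem => hp hmem.1)]
        simp [hψ_supp x p.1 p.2 hp]
    · refine ae_of_all _ fun p => ?_
      have hc : ContinuousOn (fun x => ψ x p.1 p.2) (Set.Icc 0 T) :=
        hψ_cont.comp ((continuous_id.prodMk continuous_const).continuousOn)
          (fun x hx => ⟨hx, trivial⟩)
      exact hc.pow 2
  -- derivative of the energy in the interior
  have hE_deriv : ∀ x ∈ Set.Ioo 0 T, HasDerivAt En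
      (∫ p : E3 × Sph, 2 * ψ x p.1 p.2 * ψt x p.1 p.2 ∂μP) x := by
    intro x hx
    have hx' : x ∈ Set.Icc 0 T := Set.mem_Icc_of_Ioo hx
    have hε0 : 0 < min x (T - x) := lt_min hx.1 (by linarith [hx.2])
    have hball : Metric.ball x (min x (T - x)) ⊆ Set.Ioo 0 T := by
      intro y hy
      rw [Metric.mem_ball, Real.dist_eq, abs_lt] at hy
      have h1 : min x (T - x) ≤ x := min_le_left _ _
      have h2 : min x (T - x) ≤ T - x := min_le_right _ _
      exact ⟨by linarith [hy.1], by linarith [hy.2]⟩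
    have hderiv := hasDerivAt_integral_of_dominated_loc_of_deriv_le (μ := μP)
      (F := fun y (p : E3 × Sph) => ψ y p.1 p.2 ^ 2)
      (F' := fun y (p : E3 × Sph) => 2 * ψ y p.1 p.2 * ψt y p.1 p.2)
      (x₀ := x) (s := Metric.ball x (min x (T - x)))
      (bound := (K ×ˢ (Set.univ : Set Sph)).indicator (fun _ => 2 * Cψ * Cψt))
      (Metric.ball_mem_nhds x hε0)
      (Filter.eventually_of_mem (Metric.ball_mem_nhds x hε0) (fun y hy =>
        ((hψc y (Set.mem_Icc_of_Ioo (hball hy))).pow 2).aestronglyMeasurable))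
      (Iψ2 x hx')
      (((continuous_const.mul (hψc x hx')).mul (hψtc x hx')).aestronglyMeasurable)
      (ae_of_all _ fun p y hy => ?_)
      (hbound_int _)
      (ae_of_all _ fun p y hy => ?_)
    · exact hderiv.2
    · -- bound on the derivative
      have hyI : y ∈ Set.Icc 0 T := Set.mem_Icc_of_Ioo (hball hy)
      by_cases hp : p.1 ∈ K
      · rw [Set.indicator_of_mem (Set.mk_mem_prod hp (Set.mem_univ _)), Real.norm_eq_abs, abs_mul, abs_mul]
        have := hCψ y hyI p.1 p.2
        have := hCψt y hyI p.1 hp p.2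
        have h2 : |(2 : ℝ)| = 2 := by norm_num
        rw [h2]
        calc 2 * |ψ y p.1 p.2| * |ψt y p.1 p.2| ≤ 2 * Cψ * |ψt y p.1 p.2| := by
              have := hCψ y hyI p.1 p.2
              nlinarith [abs_nonneg (ψt y p.1 p.2)]
          _ ≤ 2 * Cψ * Cψt := by
              have := hCψt y hyI p.1 hp p.2
              nlinarith [hCψ0]
      · rw [Set.indicator_of_notMem (fun hmem => hp hmem.1)]
        simp [hψ_supp y p.1 p.2 hp]
    · -- differentiability in time
      have hyO : y ∈ Set.Ioo 0 T := hball hy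
      have hder : HasDerivAt (fun y' => ψ y' p.1 p.2) (ψt y p.1 p.2) y :=
        (hψt p.1 p.2 y (Set.mem_Icc_of_Ioo hyO)).hasDerivAt
          (Icc_mem_nhds hyO.1 hyO.2)
      have : HasDerivAt (fun y' => ψ y' p.1 p.2 ^ 2) _ y := hder.pow 2
      simpa [mul_comm, mul_assoc, mul_left_comm] using this
  -- Grönwall / monotonicity argument
  intro t ht
  show En t ≤ Real.exp (-σalo * t) * En 0
  have hg_deriv : ∀ x ∈ Set.Ioo 0 T, HasDerivAt (fun y => Real.exp (σalo * y) * En y)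
      (Real.exp (σalo * x) * σalo * En x +
        Real.exp (σalo * x) * ∫ p : E3 × Sph, 2 * ψ x p.1 p.2 * ψt x p.1 p.2 ∂μP) x := by
    intro x hx
    have h1 : HasDerivAt (fun y : ℝ => Real.exp (σalo * y)) (Real.exp (σalo * x) * σalo) x := by
      simpa using ((hasDerivAt_id x).const_mul σalo).exp
    exact h1.mul (hE_deriv x hx)
  have hg_anti : AntitoneOn (fun y => Real.exp (σalo * y) * En y) (Set.Icc 0 T) := by
    apply antitoneOn_of_deriv_nonpos (convex_Icc 0 T)
    · exact (Real.continuous_exp.comp (continuous_const.mul continuous_id)).continuousOn.mul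
        hE_cont
    · rw [interior_Icc]
      exact fun x hx => (hg_deriv x hx).differentiableAt.differentiableWithinAt
    · rw [interior_Icc]
      intro x hx
      rw [(hg_deriv x hx).deriv]
      have hkey := key x (Set.mem_Icc_of_Ioo hx)
      nlinarith [mul_le_mul_of_nonneg_left hkey (Real.exp_pos (σalo * x)).le]
  have hmono := hg_anti (Set.left_mem_Icc.2 hT) ht ht.1
  simp only [mul_zero, Real.exp_zero, one_mul] at hmono
  rw [neg_mul, Real.exp_neg, le_inv_mul_iff₀ (Real.exp_pos (σalo * t))]
  exact hmono




end RTEaux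

namespace RTEaux

lemma bdd_sph {f : Sph → ℝ} (hf : Continuous f) : ∃ C, 0 ≤ C ∧ ∀ x, |f x| ≤ C := by
  obtain ⟨C, hC⟩ := isCompact_univ.exists_bound_of_continuousOn hf.continuousOn
  exact ⟨max C 0, le_max_right _ _, fun x => (hC x trivial).trans (le_max_left _ _)⟩

lemma ker_meas1 {k : E3 → ℝ → ℝ} (hk_meas : Measurable (Function.uncurry k))
    (r : E3) (s : Sph) : Measurable fun s' : Sph => k r ⟪(s : E3), (s' : E3)⟫ := by
  have h2 : Continuous (fun s' : Sph => ⟪(s : E3), (s' : E3)⟫) :=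
    continuous_const.inner continuous_subtype_val
  exact hk_meas.comp (measurable_const.prodMk h2.measurable)

end RTEaux


/-- Exponential stability (decay to equilibrium) for the time-dependent radiative
transfer equation with time-independent source q̂: the L²-distance of the solution φ
to the steady state φ̂ decays exponentially with rate σ̲ₐ. -/
theorem stmt_9
    (k : E3 → ℝ → ℝ) (σt : E3 → ℝ)
    (hk_meas : Measurable (Function.uncurry k)) (hσt_meas : Measurable σt)
    (σs σa : E3 → ℝ)
    (hσs : ∀ (r : E3) (s : Sph), σs r = ∫ s' : Sph, k r ⟪(s : E3), (s' : E3)⟫ ∂sphMeasure)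
    (hσa : ∀ r : E3, σa r = σt r - σs r)
    (kbar σalo σahi : ℝ) (hkbar : 0 ≤ kbar)
    (hk : ∀ r : E3, ∀ μ ∈ Set.Icc (-1 : ℝ) 1, 0 ≤ k r μ ∧ k r μ ≤ kbar)
    (hσa0 : 0 < σalo) (hσaa : σalo ≤ σahi) (hσab : ∀ r : E3, σalo ≤ σa r ∧ σa r ≤ σahi)
    (T : ℝ) (K : Set E3) (hK : IsCompact K)
    (qhat : E3 → Sph → ℝ)
    (hq_cont : Continuous (fun p : E3 × Sph => qhat p.1 p.2))
    (hq_supp : ∀ (r : E3) (s : Sph), r ∉ K → qhat r s = 0)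
    (φhat : E3 → Sph → ℝ) (φhatr : E3 → Sph → E3)
    (hφhat_cont : Continuous (fun p : E3 × Sph => φhat p.1 p.2))
    (hφhatr_cont : Continuous (fun p : E3 × Sph => φhatr p.1 p.2))
    (hφhat_supp : ∀ (r : E3) (s : Sph), r ∉ K → φhat r s = 0)
    (hφhatr : ∀ (r : E3) (s : Sph), HasGradientAt (fun r' => φhat r' s) (φhatr r s) r)
    (heqhat : ∀ (r : E3) (s : Sph),
      ⟪(s : E3), φhatr r s⟫ + σt r * φhat r s =
        (∫ s' : Sph, k r ⟪(s : E3), (s' : E3)⟫ * φhat r s' ∂sphMeasure) + qhat r s)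
    (φ φt : ℝ → E3 → Sph → ℝ) (φr : ℝ → E3 → Sph → E3)
    (hφ_cont : ContinuousOn (fun p : ℝ × E3 × Sph => φ p.1 p.2.1 p.2.2)
      (Set.Icc 0 T ×ˢ Set.univ))
    (hφt_cont : ContinuousOn (fun p : ℝ × E3 × Sph => φt p.1 p.2.1 p.2.2)
      (Set.Icc 0 T ×ˢ Set.univ))
    (hφr_cont : ContinuousOn (fun p : ℝ × E3 × Sph => φr p.1 p.2.1 p.2.2)
      (Set.Icc 0 T ×ˢ Set.univ))
    (hφ_supp : ∀ (t : ℝ) (r : E3) (s : Sph), r ∉ K → φ t r s = 0)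
    (hφt : ∀ (r : E3) (s : Sph), ∀ t ∈ Set.Icc 0 T,
      HasDerivWithinAt (fun t' => φ t' r s) (φt t r s) (Set.Icc 0 T) t)
    (hφr : ∀ t ∈ Set.Icc 0 T, ∀ (r : E3) (s : Sph),
      HasGradientAt (fun r' => φ t r' s) (φr t r s) r)
    (heq : ∀ t ∈ Set.Icc 0 T, ∀ (r : E3) (s : Sph),
      φt t r s + ⟪(s : E3), φr t r s⟫ + σt r * φ t r s =
        (∫ s' : Sph, k r ⟪(s : E3), (s' : E3)⟫ * φ t r s' ∂sphMeasure) + qhat r s) :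
    ∀ t ∈ Set.Icc 0 T,
      (∫ p : E3 × Sph, (φ t p.1 p.2 - φhat p.1 p.2) ^ 2
          ∂((volume : Measure E3).prod sphMeasure)) ≤
        Real.exp (-σalo * t) *
          ∫ p : E3 × Sph, (φ 0 p.1 p.2 - φhat p.1 p.2) ^ 2
            ∂((volume : Measure E3).prod sphMeasure) := by
  intro t ht
  have hT : (0 : ℝ) ≤ T := ht.1.trans ht.2
  refine RTEaux.decay_aux k σt σs hk_meas hσt_meas hσs kbar σalo σahi hkbar hk hσa0
    (fun r => hσa r ▸ hσab r) T hT K hK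
    (fun t r s => φ t r s - φhat r s) φt (fun t r s => φr t r s - φhatr r s)
    ?_ hφt_cont ?_ ?_ ?_ ?_ ?_ t ht
  · exact hφ_cont.sub (hφhat_cont.comp continuous_snd).continuousOn
  · exact hφr_cont.sub (hφhatr_cont.comp continuous_snd).continuousOn
  · intro t' r s hr
    show φ t' r s - φhat r s = 0
    rw [hφ_supp t' r s hr, hφhat_supp r s hr, sub_zero]
  · exact fun r s t' ht' => (hφt r s t' ht').sub_const _
  · intro t' ht' r s
    have : HasFDerivAt (fun r' => φ t' r' s - φhat r' s) _ r :=
      (hφr t' ht' r s).hasFDerivAt.sub (hφhatr r s).hasFDerivAt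
    rw [← map_sub] at this
    simpa using this.hasGradientAt
  · intro t' ht' r s
    have h1 := heq t' ht' r s
    have h2 := heqhat r s
    -- integrability of the two kernel integrands over the sphere
    have hφc : Continuous fun s' : Sph => φ t' r s' :=
      (hφ_cont.comp_continuous ((continuous_const.prodMk
        (continuous_const.prodMk continuous_id))) (fun s' => ⟨ht', trivial⟩))
    have hφhatc : Continuous fun s' : Sph => φhat r s' :=
      hφhat_cont.comp (continuous_const.prodMk continuous_id)
    obtain ⟨C1, hC10, hC1⟩ := RTEaux.bdd_sph hφc
    obtain ⟨C2, hC20, hC2⟩ := RTEaux.bdd_sph hφhatc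
    have hk0 : ∀ s' : Sph, 0 ≤ k r ⟪(s : E3), (s' : E3)⟫ ∧
        k r ⟪(s : E3), (s' : E3)⟫ ≤ kbar := fun s' => hk r _ (RTEaux.inner_mem_Icc s s')
    have i1 : Integrable (fun s' : Sph => k r ⟪(s : E3), (s' : E3)⟫ * φ t' r s')
        sphMeasure := by
      refine RTEaux.integrable_sph
        ((RTEaux.ker_meas1 hk_meas r s).mul hφc.measurable).aestronglyMeasurable
        (C := kbar * C1) (fun s' => ?_)
      rw [Real.norm_eq_abs, abs_mul, abs_of_nonneg (hk0 s').1]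
      exact mul_le_mul (hk0 s').2 (hC1 s') (abs_nonneg _) hkbar
    have i2 : Integrable (fun s' : Sph => k r ⟪(s : E3), (s' : E3)⟫ * φhat r s')
        sphMeasure := by
      refine RTEaux.integrable_sph
        ((RTEaux.ker_meas1 hk_meas r s).mul hφhatc.measurable).aestronglyMeasurable
        (C := kbar * C2) (fun s' => ?_)
      rw [Real.norm_eq_abs, abs_mul, abs_of_nonneg (hk0 s').1]
      exact mul_le_mul (hk0 s').2 (hC2 s') (abs_nonneg _) hkbar
    have hIR : (∫ s' : Sph, k r ⟪(s : E3), (s' : E3)⟫ * (φ t' r s' - φhat r s')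
        ∂sphMeasure) =
        (∫ s' : Sph, k r ⟪(s : E3), (s' : E3)⟫ * φ t' r s' ∂sphMeasure) -
        ∫ s' : Sph, k r ⟪(s : E3), (s' : E3)⟫ * φhat r s' ∂sphMeasure := by
      rw [← integral_sub i1 i2]
      congr 1; funext s'; ring
    have hin : ⟪(s : E3), φr t' r s - φhatr r s⟫ =
        ⟪(s : E3), φr t' r s⟫ - ⟪(s : E3), φhatr r s⟫ := inner_sub_right _ _ _
    show φt t' r s + ⟪(s : E3), φr t' r s - φhatr r s⟫ +
        σt r * (φ t' r s - φhat r s) =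
        ∫ s' : Sph, k r ⟪(s : E3), (s' : E3)⟫ * (φ t' r s' - φhat r s') ∂sphMeasure
    rw [hin, hIR]
    linarith [h1, h2]
end
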